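/- arXiv:2605.08745 — 10 statements merged into one kernel-verified Lean document; each statement's English description precedes it below -/
import Mathlib

section
/- For every integer n ≥ 2 and every prime m, every parity-oblivious classical strategy for the (n,m) parity-oblivious random exclusion code satisfies P_POREC ≤ 1 − (n−1)/(m·n). -/
open Finset

lemma count_sol (n m : ℕ) (hm : Nat.Prime m) [NeZero m] (z : Fin n → ZMod m)
    (hz : z ≠ 0) :
    ((univ.filter fun r : Fin n → ZMod m => ∑ i, r i * z i = 0).card) * m = m ^ n := by
  haveI : Fact m.Prime := ⟨hm⟩
  obtain ⟨j, hj⟩ := Function.ne_iff.mp hz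
  simp only [Pi.zero_apply] at hj
  have hfib : ∀ k : ZMod m,
      (univ.filter fun r : Fin n → ZMod m => ∑ i, r i * z i = k).card
        = (univ.filter fun r : Fin n → ZMod m => ∑ i, r i * z i = 0).card := by
    intro k
    set r₀ : Fin n → ZMod m := Pi.single j ((z j)⁻¹ * k) with hr₀
    have hr₀sum : ∑ i, r₀ i * z i = k := by
      rw [Finset.sum_eq_single j]
      · simp only [hr₀, Pi.single_eq_same]
        rw [mul_right_comm, inv_mul_cancel₀ hj, one_mul]
      · intro b _ hb; simp [hr₀, Pi.single_eq_of_ne hb]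
      · simp
    apply Finset.card_bij (fun r _ => r - r₀)
    · intro r hr
      simp only [mem_filter, mem_univ, true_and] at hr ⊢
      simp [sub_mul, Finset.sum_sub_distrib, hr, hr₀sum]
    · intro a ha b hb h; exact sub_left_injective h
    · intro s hs
      refine ⟨s + r₀, ?_, by simp⟩
      simp only [mem_filter, mem_univ, true_and] at hs ⊢
      simp [add_mul, Finset.sum_add_distrib, hs, hr₀sum]
  have hpart : ∑ k : ZMod m, (univ.filter fun r : Fin n → ZMod m => ∑ i, r i * z i = k).card
      = (univ : Finset (Fin n → ZMod m)).card :=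
    (Finset.card_eq_sum_card_fiberwise (fun r _ => mem_univ _)).symm
  rw [Finset.sum_congr rfl (fun k _ => hfib k)] at hpart
  simp only [Finset.sum_const, smul_eq_mul, card_univ] at hpart
  rw [mul_comm] at hpart
  simp only [Fintype.card_fun, ZMod.card, Fintype.card_fin] at hpart
  exact hpart

lemma porec_key (n m : ℕ) (_hn : 2 ≤ n) (hm : Nat.Prime m) [NeZero m]
    (q : (Fin n → ZMod m) → ℝ) (hq : ∀ x, 0 ≤ q x)
    (hPO : ∀ r : Fin n → ZMod m, 2 ≤ (univ.filter fun i => r i ≠ 0).card →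
      ∀ k k' : ZMod m,
        ∑ x ∈ univ.filter (fun x : Fin n → ZMod m => ∑ i, r i * x i = k), q x =
        ∑ x ∈ univ.filter (fun x : Fin n → ZMod m => ∑ i, r i * x i = k'), q x)
    (x : Fin n → ZMod m) :
    ((n : ℝ) - 1) * (∑ x', q x')
      ≤ (m : ℝ) * ∑ y : Fin n,
          ∑ x' ∈ univ.filter (fun x' : Fin n → ZMod m => x' y = x y), q x' := by
  haveI : Fact m.Prime := ⟨hm⟩
  have hm2 : 2 ≤ m := hm.two_le
  set w : ℝ := ∑ x', q x' with hw
  have hw0 : 0 ≤ w := Finset.sum_nonneg fun _ _ => hq _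
  set T : (Fin n → ZMod m) → ℝ := fun r =>
    ∑ x' ∈ univ.filter (fun x' => ∑ i, r i * x' i = ∑ i, r i * x i), q x' with hT
  -- masks with ≥ 2 nonzero coordinates
  have hbig : ∀ r : Fin n → ZMod m, 2 ≤ (univ.filter fun i => r i ≠ 0).card →
      (m : ℝ) * T r = w := by
    intro r hr
    have hfibsum : ∑ k : ZMod m,
        (∑ x' ∈ univ.filter (fun x' : Fin n → ZMod m => ∑ i, r i * x' i = k), q x') = w :=
      Finset.sum_fiberwise_of_maps_to (fun x' _ => mem_univ _) q
    have heach : ∀ k : ZMod m,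
        (∑ x' ∈ univ.filter (fun x' : Fin n → ZMod m => ∑ i, r i * x' i = k), q x') = T r :=
      fun k => hPO r hr k (∑ i, r i * x i)
    rw [Finset.sum_congr rfl (fun k _ => heach k)] at hfibsum
    rw [Finset.sum_const, card_univ, ZMod.card, nsmul_eq_mul] at hfibsum
    exact hfibsum
  -- masks that are single coordinates
  have hsingle : ∀ (y : Fin n) (a : ZMod m), a ≠ 0 →
      T (Pi.single y a) = ∑ x' ∈ univ.filter (fun x' : Fin n → ZMod m => x' y = x y), q x' := by
    intro y a ha
    apply Finset.sum_congr _ (fun _ _ => rfl)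
    apply Finset.filter_congr
    intro x' _
    have hs : ∀ v : Fin n → ZMod m, ∑ i, (Pi.single y a : Fin n → ZMod m) i * v i = a * v y := by
      intro v
      rw [Finset.sum_eq_single y]
      · simp
      · intro b _ hb
        rw [Pi.single_eq_of_ne (M := fun _ : Fin n => ZMod m) hb, zero_mul]
      · simp
    simp only [hs]
    exact mul_right_inj' ha
  have hzero : T 0 = w := by
    simp only [hT]
    rw [Finset.filter_true_of_mem (by simp)]
  -- the swap computation
  have hswap : (m : ℝ) * ∑ r : Fin n → ZMod m, T r
      = (m : ℝ) ^ n * w + (m : ℝ) ^ n * ((m : ℝ) - 1) * q x := by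
    have h1 : ∀ r : Fin n → ZMod m, T r = ∑ x' : Fin n → ZMod m,
        (if ∑ i, r i * x' i = ∑ i, r i * x i then q x' else 0) := by
      intro r; rw [hT]; exact (Finset.sum_filter _ _)
    rw [Finset.sum_congr rfl (fun r _ => h1 r), Finset.sum_comm]
    have h2 : ∀ x' : Fin n → ZMod m,
        ∑ r : Fin n → ZMod m, (if ∑ i, r i * x' i = ∑ i, r i * x i then q x' else 0)
        = ((univ.filter fun r : Fin n → ZMod m => ∑ i, r i * x' i = ∑ i, r i * x i).card : ℝ)
            * q x' := by
      intro x'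
      rw [← Finset.sum_filter, Finset.sum_const, nsmul_eq_mul]
    rw [Finset.sum_congr rfl (fun x' _ => h2 x')]
    rw [← Finset.sum_erase_add _ _ (mem_univ x)]
    have hx : ((univ.filter fun r : Fin n → ZMod m => ∑ i, r i * x i = ∑ i, r i * x i).card : ℝ)
        = (m : ℝ) ^ n := by
      rw [Finset.filter_true_of_mem (fun _ _ => rfl)]
      rw [card_univ]
      simp [ZMod.card]
    have hxe : ∀ x' : Fin n → ZMod m, x' ≠ x →
        (m : ℝ) * ((univ.filter fun r : Fin n → ZMod m =>
            ∑ i, r i * x' i = ∑ i, r i * x i).card : ℝ) = (m : ℝ) ^ n := by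
      intro x' hx'
      have hzne : x' - x ≠ 0 := sub_ne_zero.mpr hx'
      have := count_sol n m hm (x' - x) hzne
      have hfe : (univ.filter fun r : Fin n → ZMod m => ∑ i, r i * (x' - x) i = 0)
          = (univ.filter fun r : Fin n → ZMod m => ∑ i, r i * x' i = ∑ i, r i * x i) := by
        apply Finset.filter_congr
        intro r _
        simp [Pi.sub_apply, mul_sub, Finset.sum_sub_distrib, sub_eq_zero]
      rw [hfe] at this
      rw [mul_comm]
      exact_mod_cast this
    rw [mul_add, Finset.mul_sum]
    have h3 : ∀ x' ∈ univ.erase x,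
        (m : ℝ) * (((univ.filter fun r : Fin n → ZMod m =>
            ∑ i, r i * x' i = ∑ i, r i * x i).card : ℝ) * q x') = (m : ℝ) ^ n * q x' := by
      intro x' hx'
      rw [← mul_assoc, hxe x' (Finset.ne_of_mem_erase hx')]
    rw [Finset.sum_congr rfl h3, hx, ← Finset.mul_sum]
    have herase : ∑ x' ∈ univ.erase x, q x' = w - q x := by
      have := Finset.sum_erase_add univ q (mem_univ x)
      linarith [this]
    rw [herase]
    ring
  -- the partition of mask space
  set singles : Finset (Fin n → ZMod m) :=
    ((univ : Finset (Fin n × ZMod m)).filter fun p => p.2 ≠ 0).image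
      fun p => Pi.single p.1 p.2 with hsingles
  have hinjOn : Set.InjOn (fun p : Fin n × ZMod m => (Pi.single p.1 p.2 : Fin n → ZMod m))
      ((univ : Finset (Fin n × ZMod m)).filter fun p => p.2 ≠ 0) := by
    intro p hp p' hp' h
    simp only [coe_filter, Set.mem_setOf_eq, mem_univ, true_and] at hp hp'
    have h' : (Pi.single p.1 p.2 : Fin n → ZMod m) = Pi.single p'.1 p'.2 := h
    by_cases hy : p'.1 = p.1
    · have h2 := congrFun h' p.1
      rw [Pi.single_eq_same, hy, Pi.single_eq_same] at h2
      exact Prod.ext hy.symm h2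
    · have h1 := congrFun h' p.1
      rw [Pi.single_eq_same, Pi.single_eq_of_ne (Ne.symm hy)] at h1
      exact absurd h1 hp
  have h0notin : (0 : Fin n → ZMod m) ∉ singles := by
    simp only [hsingles, mem_image, mem_filter, mem_univ, true_and]
    rintro ⟨p, hp, h⟩
    have := congrFun h p.1
    simp only [Pi.single_eq_same, Pi.zero_apply] at this
    exact hp this
  set small : Finset (Fin n → ZMod m) := insert 0 singles with hsmall
  have hcard_small : small.card = n * (m - 1) + 1 := by
    rw [hsmall, Finset.card_insert_of_notMem h0notin, hsingles,
      Finset.card_image_of_injOn hinjOn]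
    have hprod : ((univ : Finset (Fin n × ZMod m)).filter fun p => p.2 ≠ 0)
        = univ ×ˢ ((univ : Finset (ZMod m)).erase 0) := by
      ext p
      simp [Finset.mem_erase, and_comm]
    rw [hprod, Finset.card_product, Finset.card_erase_of_mem (mem_univ 0), card_univ,
      card_univ, ZMod.card, Fintype.card_fin]
  have hsmall_mem : ∀ r : Fin n → ZMod m, r ∉ small →
      2 ≤ (univ.filter fun i => r i ≠ 0).card := by
    intro r hr
    by_contra hlt
    push_neg at hlt
    interval_cases h : (univ.filter fun i => r i ≠ 0).card
    · apply hr
      have : r = 0 := by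
        funext i
        simp only [Pi.zero_apply]
        by_contra hi
        have : i ∈ univ.filter fun i => r i ≠ 0 := by simp [hi]
        rw [Finset.card_eq_zero] at h
        simp [h] at this
      rw [hsmall]
      simp [this]
    · obtain ⟨y, hy⟩ := Finset.card_eq_one.mp h
      apply hr
      have hry : r y ≠ 0 := by
        have : y ∈ univ.filter fun i => r i ≠ 0 := by rw [hy]; exact mem_singleton_self y
        simpa using this
      have hreq : r = Pi.single y (r y) := by
        funext i
        by_cases hi : i = y
        · rw [hi, Pi.single_eq_same]
        · rw [Pi.single_eq_of_ne hi]
          by_contra hri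
          have : i ∈ univ.filter fun i => r i ≠ 0 := by simp [hri]
          rw [hy, mem_singleton] at this
          exact hi this
      rw [hsmall, hsingles]
      refine Finset.mem_insert_of_mem ?_
      rw [Finset.mem_image]
      exact ⟨(y, r y), by simp [hry], hreq.symm⟩
  -- partition the sum
  have hsplit : ∑ r ∈ (univ \ small), T r + ∑ r ∈ small, T r = ∑ r : Fin n → ZMod m, T r :=
    Finset.sum_sdiff (Finset.subset_univ small)
  have hsum_small : ∑ r ∈ small, T r
      = w + ((m : ℝ) - 1) * ∑ y : Fin n,
          ∑ x' ∈ univ.filter (fun x' : Fin n → ZMod m => x' y = x y), q x' := by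
    rw [hsmall, Finset.sum_insert h0notin, hzero, hsingles,
      Finset.sum_image hinjOn]
    have hprod : ((univ : Finset (Fin n × ZMod m)).filter fun p => p.2 ≠ 0)
        = univ ×ˢ ((univ : Finset (ZMod m)).erase 0) := by
      ext p
      simp [Finset.mem_erase, and_comm]
    rw [hprod, Finset.sum_product]
    congr 1
    rw [Finset.mul_sum]
    apply Finset.sum_congr rfl
    intro y _
    rw [Finset.sum_congr rfl (fun a ha => hsingle y a (Finset.ne_of_mem_erase ha))]
    rw [Finset.sum_const, Finset.card_erase_of_mem (mem_univ 0), card_univ, ZMod.card,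
      nsmul_eq_mul]
    congr 1
    have : (1 : ℕ) ≤ m := hm.one_le
    push_cast [this]
    ring
  have hsum_big : (m : ℝ) * ∑ r ∈ (univ \ small), T r = ((univ \ small).card : ℝ) * w := by
    rw [Finset.mul_sum]
    rw [Finset.sum_congr rfl (fun r hr => hbig r (hsmall_mem r (Finset.mem_sdiff.mp hr).2))]
    rw [Finset.sum_const, nsmul_eq_mul]
  have hcards : small.card + (univ \ small).card = m ^ n := by
    rw [add_comm, Finset.card_sdiff_add_card_eq_card (Finset.subset_univ small), card_univ]
    simp [ZMod.card]
  -- put everything together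
  set A : ℝ := ∑ y : Fin n,
      ∑ x' ∈ univ.filter (fun x' : Fin n → ZMod m => x' y = x y), q x' with hA
  set B : ℝ := ((univ \ small).card : ℝ) with hB
  have heq : (m : ℝ) * (w + ((m : ℝ) - 1) * A) + B * w
      = (m : ℝ) ^ n * w + (m : ℝ) ^ n * ((m : ℝ) - 1) * q x := by
    rw [← hsum_small, ← hsum_big, ← mul_add, add_comm (∑ r ∈ small, T r), hsplit, hswap]
  have hcardsR : ((n : ℝ) * ((m : ℝ) - 1) + 1) + B = (m : ℝ) ^ n := by
    have h2 := hcards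
    rw [hcard_small] at h2
    have h1 : (1 : ℕ) ≤ m := hm.one_le
    have h3 : ((n * (m - 1) + 1 + (univ \ small).card : ℕ) : ℝ) = ((m : ℝ)) ^ n := by
      rw [h2]; push_cast; ring
    rw [hB]
    push_cast [h1] at h3
    linarith [h3]
  have hqx : 0 ≤ q x := hq x
  have hmR : (2 : ℝ) ≤ (m : ℝ) := by exact_mod_cast hm2
  have hpow : (0 : ℝ) ≤ (m : ℝ) ^ n := by positivity
  have hkey : ((m : ℝ) - 1) * (((n : ℝ) - 1) * w) ≤ ((m : ℝ) - 1) * ((m : ℝ) * A) := by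
    nlinarith [mul_nonneg (mul_nonneg hpow (by linarith : (0:ℝ) ≤ (m:ℝ) - 1)) hqx]
  have hm1 : (0 : ℝ) < (m : ℝ) - 1 := by linarith
  exact le_of_mul_le_mul_left hkey hm1


/-- **Classical bound for the (n,m) POREC.** For every integer `n ≥ 2` and every prime `m`,
every parity-oblivious classical strategy (encoding `p`, decoding `ξ`) for the `(n,m)`
parity-oblivious random exclusion code has success probability at most `1 - (n-1)/(m·n)`. -/
theorem porec_classical_bound
    (n : ℕ) (hn : 2 ≤ n) (m : ℕ) (hm : Nat.Prime m) [NeZero m]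
    (𝕄 : Type) [Fintype 𝕄]
    (p : 𝕄 → (Fin n → ZMod m) → ℝ)
    (ξ : ZMod m → 𝕄 → Fin n → ℝ)
    (hp_nonneg : ∀ M x, 0 ≤ p M x)
    (hp_sum : ∀ x, ∑ M, p M x = 1)
    (hξ_nonneg : ∀ b M y, 0 ≤ ξ b M y)
    (hξ_sum : ∀ M y, ∑ b, ξ b M y = 1)
    (hPO : ∀ r : Fin n → ZMod m,
      2 ≤ (Finset.univ.filter fun i => r i ≠ 0).card →
      ∀ M, ∀ k k' : ZMod m,
        ∑ x ∈ Finset.univ.filter (fun x : Fin n → ZMod m => ∑ i, r i * x i = k), p M x =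
        ∑ x ∈ Finset.univ.filter (fun x : Fin n → ZMod m => ∑ i, r i * x i = k'), p M x) :
    (1 / (n * m ^ n) : ℝ) *
        ∑ x : Fin n → ZMod m, ∑ y : Fin n, ∑ M,
          p M x * ∑ b ∈ Finset.univ.filter (fun b => b ≠ x y), ξ b M y
      ≤ 1 - ((n : ℝ) - 1) / (m * n) := by
  haveI : Fact m.Prime := ⟨hm⟩
  have hm2 : (2 : ℝ) ≤ (m : ℝ) := by exact_mod_cast hm.two_le
  have hn2 : (2 : ℝ) ≤ (n : ℝ) := by exact_mod_cast hn
  have hcardfun : ((univ : Finset (Fin n → ZMod m)).card : ℝ) = (m : ℝ) ^ n := by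
    rw [card_univ]
    simp [ZMod.card]
  set A : 𝕄 → Fin n → ZMod m → ℝ := fun M y c =>
    ∑ x ∈ univ.filter (fun x : Fin n → ZMod m => x y = c), p M x with hA
  set G : ℝ := ∑ M, ∑ y : Fin n, ∑ x : Fin n → ZMod m, p M x * ξ (x y) M y with hG
  -- rewrite the exclusion sum
  have hexcl : ∀ (M : 𝕄) (y : Fin n) (x : Fin n → ZMod m),
      ∑ b ∈ univ.filter (fun b => b ≠ x y), ξ b M y = 1 - ξ (x y) M y := by
    intro M y x
    have he : univ.filter (fun b : ZMod m => b ≠ x y) = univ.erase (x y) := by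
      ext b; simp [Finset.mem_erase, and_comm]
    rw [he]
    have h1 := Finset.sum_erase_add univ (fun b => ξ b M y) (mem_univ (x y))
    rw [hξ_sum M y] at h1
    linarith
  -- total = n m^n - G
  have hTotal : ∑ x : Fin n → ZMod m, ∑ y : Fin n, ∑ M,
      p M x * ∑ b ∈ univ.filter (fun b => b ≠ x y), ξ b M y
      = (n : ℝ) * (m : ℝ) ^ n - G := by
    have h1 : ∀ (x : Fin n → ZMod m) (y : Fin n),
        ∑ M, p M x * ∑ b ∈ univ.filter (fun b => b ≠ x y), ξ b M y
        = 1 - ∑ M, p M x * ξ (x y) M y := by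
      intro x y
      rw [Finset.sum_congr rfl (fun M _ => by rw [hexcl M y x])]
      have : ∀ M : 𝕄, p M x * (1 - ξ (x y) M y) = p M x - p M x * ξ (x y) M y := by
        intro M; ring
      rw [Finset.sum_congr rfl (fun M _ => this M), Finset.sum_sub_distrib, hp_sum x]
    rw [Finset.sum_congr rfl (fun x _ => Finset.sum_congr rfl (fun y _ => h1 x y))]
    have hswapG : ∑ x : Fin n → ZMod m, ∑ y : Fin n, ∑ M, p M x * ξ (x y) M y = G := by
      rw [hG]
      calc ∑ x : Fin n → ZMod m, ∑ y : Fin n, ∑ M, p M x * ξ (x y) M y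
          = ∑ y : Fin n, ∑ x : Fin n → ZMod m, ∑ M, p M x * ξ (x y) M y :=
            Finset.sum_comm
        _ = ∑ y : Fin n, ∑ M, ∑ x : Fin n → ZMod m, p M x * ξ (x y) M y :=
            Finset.sum_congr rfl fun y _ => Finset.sum_comm
        _ = ∑ M, ∑ y : Fin n, ∑ x : Fin n → ZMod m, p M x * ξ (x y) M y :=
            Finset.sum_comm
    have h2 : ∀ x : Fin n → ZMod m, ∑ y : Fin n, (1 - ∑ M, p M x * ξ (x y) M y)
        = (n : ℝ) - ∑ y : Fin n, ∑ M, p M x * ξ (x y) M y := by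
      intro x
      rw [Finset.sum_sub_distrib, Finset.sum_const, card_univ, Fintype.card_fin,
        nsmul_eq_mul, mul_one]
    rw [Finset.sum_congr rfl (fun x _ => h2 x), Finset.sum_sub_distrib, hswapG,
      Finset.sum_const, nsmul_eq_mul, hcardfun]
    ring
  -- express G fiberwise
  have hfib : ∀ (M : 𝕄) (y : Fin n), ∑ x : Fin n → ZMod m, p M x * ξ (x y) M y
      = ∑ c : ZMod m, A M y c * ξ c M y := by
    intro M y
    rw [← Finset.sum_fiberwise_of_maps_to (fun x (_ : x ∈ univ) => mem_univ (x y))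
      (fun x => p M x * ξ (x y) M y)]
    apply Finset.sum_congr rfl
    intro c _
    rw [hA]
    simp only
    rw [Finset.sum_mul]
    apply Finset.sum_congr rfl
    intro x hx
    rw [(Finset.mem_filter.mp hx).2]
  -- choose pointwise minimizers
  have hminex : ∀ (M : 𝕄) (y : Fin n), ∃ c : ZMod m, ∀ c', A M y c ≤ A M y c' := by
    intro M y
    obtain ⟨c, _, hc⟩ := Finset.exists_min_image univ (A M y) ⟨0, mem_univ 0⟩
    exact ⟨c, fun c' => hc c' (mem_univ c')⟩
  choose xstar hstar using hminex
  have h4 : ∀ (M : 𝕄) (y : Fin n), A M y (xstar M y) ≤ ∑ c : ZMod m, A M y c * ξ c M y := by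
    intro M y
    calc A M y (xstar M y) = ∑ c : ZMod m, A M y (xstar M y) * ξ c M y := by
          rw [← Finset.mul_sum, hξ_sum, mul_one]
      _ ≤ ∑ c : ZMod m, A M y c * ξ c M y :=
          Finset.sum_le_sum fun c _ =>
            mul_le_mul_of_nonneg_right (hstar M y c) (hξ_nonneg c M y)
  -- the key per-message bound
  have h5 : ∀ M : 𝕄, ((n : ℝ) - 1) * (∑ x : Fin n → ZMod m, p M x)
      ≤ (m : ℝ) * ∑ y : Fin n, A M y (xstar M y) := by
    intro M
    have hk := porec_key n m hn hm (p M) (hp_nonneg M)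
      (fun r hr k k' => hPO r hr M k k') (fun y => xstar M y)
    simpa [hA] using hk
  -- total weight
  have hsum_w : ∑ M, ∑ x : Fin n → ZMod m, p M x = (m : ℝ) ^ n := by
    rw [Finset.sum_comm, Finset.sum_congr rfl (fun x (_ : x ∈ univ) => hp_sum x),
      Finset.sum_const, nsmul_eq_mul, mul_one, hcardfun]
  -- lower bound on G
  have hGlb : ((n : ℝ) - 1) * (m : ℝ) ^ n ≤ (m : ℝ) * G := by
    calc ((n : ℝ) - 1) * (m : ℝ) ^ n = ∑ M, ((n : ℝ) - 1) * ∑ x : Fin n → ZMod m, p M x := by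
          rw [← Finset.mul_sum, hsum_w]
      _ ≤ ∑ M, (m : ℝ) * ∑ y : Fin n, A M y (xstar M y) :=
          Finset.sum_le_sum fun M _ => h5 M
      _ ≤ ∑ M, (m : ℝ) * ∑ y : Fin n, ∑ c : ZMod m, A M y c * ξ c M y := by
          apply Finset.sum_le_sum
          intro M _
          apply mul_le_mul_of_nonneg_left _ (by linarith : (0:ℝ) ≤ (m:ℝ))
          exact Finset.sum_le_sum fun y _ => h4 M y
      _ = (m : ℝ) * G := by
          rw [← Finset.mul_sum, hG]
          congr 1
          apply Finset.sum_congr rfl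
          intro M _
          exact Finset.sum_congr rfl fun y _ => (hfib M y).symm
  -- final arithmetic
  rw [hTotal]
  have hD : (0 : ℝ) < (n : ℝ) * (m : ℝ) ^ n := by positivity
  have hmn : (0 : ℝ) < (m : ℝ) * (n : ℝ) := by positivity
  have hfs : (1 / ((n : ℝ) * (m : ℝ) ^ n)) * ((n : ℝ) * (m : ℝ) ^ n - G)
      = 1 - G / ((n : ℝ) * (m : ℝ) ^ n) := by
    field_simp
  rw [hfs]
  have h6 : ((n : ℝ) - 1) / ((m : ℝ) * n) ≤ G / ((n : ℝ) * (m : ℝ) ^ n) := by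
    rw [div_le_div_iff₀ hmn hD]
    nlinarith [mul_le_mul_of_nonneg_left hGlb (by linarith : (0:ℝ) ≤ (n:ℝ))]
  linarith
end

section
/- For every integer n ≥ 2 and every prime m, there exists a parity-oblivious classical strategy for the (n,m) parity-oblivious random exclusion code achieving P_POREC = 1 − (n−1)/(m·n); explicitly, the strategy with message set 𝕄 = ZMod m that deterministically sends M = x_1, and decodes by outputting b = M + 1 when y = 1 and b = 0 when y ≠ 1, is parity-oblivious and attains this value. -/
open Finset

lemma sum_update_aux {n m : ℕ} [NeZero m] (r x : Fin n → ZMod m) (j : Fin n) (d : ZMod m) :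
    ∑ i, r i * Function.update x j (x j + d) i = (∑ i, r i * x i) + r j * d := by
  have h : ∀ i, r i * Function.update x j (x j + d) i
      = r i * x i + (if i = j then r j * d else 0) := by
    intro i
    rcases eq_or_ne i j with rfl | h
    · simp [Function.update_self]; ring
    · simp [Function.update_of_ne h, h]
  simp [h, Finset.sum_add_distrib]




lemma sum_eval_aux {n m : ℕ} [NeZero m] (y : Fin n) (g : ZMod m → ℝ) :
    ∑ x : Fin n → ZMod m, g (x y) = (m:ℝ)^(n-1) * ∑ a, g a := by
  rw [← (Equiv.piSplitAt y fun _ => ZMod m).symm.sum_comp]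
  rw [Fintype.sum_prod_type]
  simp only [Equiv.piSplitAt_symm_apply, dif_pos rfl]
  have hcard : Fintype.card ({j : Fin n // j ≠ y} → ZMod m) = m ^ (n-1) := by
    simp [Fintype.card_fun, ZMod.card, Fintype.card_subtype_compl]
  simp [Finset.sum_const, hcard, mul_comm, ← Finset.sum_mul]


lemma porec_part1 (n m : ℕ) (hm : Nat.Prime m) [NeZero m] (i0 : Fin n) (r : Fin n → ZMod m)
    (hr : 2 ≤ (Finset.univ.filter fun i => r i ≠ 0).card) (M k k' : ZMod m) :
    ∑ x ∈ Finset.univ.filter (fun x : Fin n → ZMod m => ∑ i, r i * x i = k),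
        (if M = x i0 then (1 : ℝ) else 0) =
    ∑ x ∈ Finset.univ.filter (fun x : Fin n → ZMod m => ∑ i, r i * x i = k'),
        (if M = x i0 then (1 : ℝ) else 0) := by
  haveI := Fact.mk hm
  obtain ⟨a, ha, b, hb, hab⟩ := Finset.one_lt_card.mp (lt_of_lt_of_le one_lt_two hr)
  simp only [Finset.mem_filter, Finset.mem_univ, true_and] at ha hb
  obtain ⟨j, hj, hj0⟩ : ∃ j, r j ≠ 0 ∧ j ≠ i0 := by
    rcases eq_or_ne a i0 with rfl | h
    · exact ⟨b, hb, Ne.symm hab⟩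
    · exact ⟨a, ha, h⟩
  set c := (k' - k) * (r j)⁻¹ with hc
  have hrc : r j * c = k' - k := by
    rw [hc]; field_simp
  refine Finset.sum_nbij' (fun x => Function.update x j (x j + c))
    (fun x => Function.update x j (x j + (-c))) ?_ ?_ ?_ ?_ ?_
  · intro x hx
    simp only [Finset.mem_filter, Finset.mem_univ, true_and] at hx ⊢
    rw [sum_update_aux, hx, hrc]; ring
  · intro x hx
    simp only [Finset.mem_filter, Finset.mem_univ, true_and] at hx ⊢
    rw [sum_update_aux, hx, mul_neg, hrc]; ring
  · intro x _
    funext i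
    rcases eq_or_ne i j with rfl | h
    · simp
    · simp [Function.update_of_ne h]
  · intro x _
    funext i
    rcases eq_or_ne i j with rfl | h
    · simp
    · simp [Function.update_of_ne h]
  · intro x _
    simp [Function.update_of_ne (Ne.symm hj0)]

lemma porec_part2 (n : ℕ) (hn : 2 ≤ n) (m : ℕ) (hm : Nat.Prime m) [NeZero m] (i0 : Fin n) :
    (1 / (n * m ^ n) : ℝ) *
        ∑ x : Fin n → ZMod m, ∑ y : Fin n, ∑ M : ZMod m,
          (if M = x i0 then (1 : ℝ) else 0) *
            ∑ b ∈ Finset.univ.filter (fun b => b ≠ x y),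
              (if y = i0 then (if b = M + 1 then (1 : ℝ) else 0)
               else (if b = 0 then (1 : ℝ) else 0))
      = 1 - ((n : ℝ) - 1) / (m * n) := by
  haveI := Fact.mk hm
  have hM : ∀ (x : Fin n → ZMod m) (y : Fin n),
      (∑ M : ZMod m, (if M = x i0 then (1:ℝ) else 0) *
        ∑ b ∈ Finset.univ.filter (fun b => b ≠ x y),
          (if y = i0 then (if b = M + 1 then (1 : ℝ) else 0)
           else (if b = 0 then (1 : ℝ) else 0)))
      = ∑ b ∈ Finset.univ.filter (fun b => b ≠ x y),
          (if y = i0 then (if b = x i0 + 1 then (1 : ℝ) else 0)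
           else (if b = 0 then (1 : ℝ) else 0)) := by
    intro x y
    rw [Finset.sum_eq_single (x i0)]
    · simp
    · intro M _ hMne; simp [hMne]
    · simp
  have hy0 : ∀ x : Fin n → ZMod m,
      (∑ b ∈ Finset.univ.filter (fun b => b ≠ x i0),
        (if b = x i0 + 1 then (1 : ℝ) else 0)) = 1 := by
    intro x
    rw [Finset.sum_eq_single (x i0 + 1)]
    · simp
    · intro b _ hbne; simp [hbne]
    · simp
  have hyne : ∀ (x : Fin n → ZMod m) (y : Fin n),
      (∑ b ∈ Finset.univ.filter (fun b => b ≠ x y),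
        (if b = (0:ZMod m) then (1 : ℝ) else 0)) = if x y = 0 then 0 else 1 := by
    intro x y
    rcases eq_or_ne (x y) 0 with h | h
    · rw [Finset.sum_eq_zero]
      · simp [h]
      · intro b hb
        simp only [Finset.mem_filter, Finset.mem_univ, true_and, h] at hb
        simp [hb]
    · rw [Finset.sum_eq_single (0 : ZMod m)]
      · simp [Ne.symm h, h]
      · intro b _ hbne; simp [hbne]
      · simp [Ne.symm h]
  simp only [hM]
  have hsplit : ∀ x : Fin n → ZMod m,
      (∑ y : Fin n, ∑ b ∈ Finset.univ.filter (fun b => b ≠ x y),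
          (if y = i0 then (if b = x i0 + 1 then (1 : ℝ) else 0)
           else (if b = 0 then (1 : ℝ) else 0)))
      = 1 + ∑ y ∈ Finset.univ.erase i0, (if x y = 0 then (0:ℝ) else 1) := by
    intro x
    rw [← Finset.add_sum_erase _ _ (Finset.mem_univ i0)]
    congr 1
    · simp [hy0 x]
    · apply Finset.sum_congr rfl
      intro y hy
      have hyne' : y ≠ i0 := (Finset.mem_erase.mp hy).1
      simp only [if_neg hyne']
      exact hyne x y
  simp only [hsplit]
  rw [Finset.sum_add_distrib, Finset.sum_const, Finset.sum_comm]
  have hcount : ∀ y : Fin n,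
      (∑ x : Fin n → ZMod m, (if x y = 0 then (0:ℝ) else 1))
      = (m:ℝ)^(n-1) * ((m:ℝ) - 1) := by
    intro y
    rw [sum_eval_aux y (fun a => if a = 0 then (0:ℝ) else 1)]
    congr 1
    have hiff : ∀ a : ZMod m, (if a = 0 then (0:ℝ) else 1) = 1 - (if a = 0 then 1 else 0) := by
      intro a; split <;> norm_num
    simp [hiff, Finset.sum_sub_distrib, Finset.sum_ite_eq', Finset.card_univ, ZMod.card]
  simp only [hcount, Finset.sum_const, smul_eq_mul, Finset.card_univ, Finset.card_erase_of_mem (Finset.mem_univ i0)]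
  have hcard1 : Fintype.card (Fin n → ZMod m) = m ^ n := by
    simp [ZMod.card]
  rw [hcard1]
  have hpow : (m:ℝ) ^ n = (m:ℝ)^(n-1) * m := by
    conv_lhs => rw [show n = (n-1)+1 by omega]
    rw [pow_succ]
  simp only [nsmul_eq_mul, Fintype.card_fin, mul_one]
  have hm0 : (0:ℝ) < m := by exact_mod_cast hm.pos
  have hA : (0:ℝ) < (m:ℝ)^(n-1) := pow_pos hm0 _
  have hn0 : (0:ℝ) < n := by positivity
  push_cast [hpow, Nat.cast_sub (by omega : 1 ≤ n)]
  field_simp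
  ring

/-- **Achievability of the classical POREC bound.** For every integer `n ≥ 2` and every prime
`m`, the explicit classical strategy with message set `ZMod m` that deterministically sends
`M = x ⟨0, by omega⟩` (the first digit) and decodes by outputting `b = M + 1` when `y = 0` (the first
index) and `b = 0` otherwise, is parity-oblivious and achieves POREC success probability
exactly `1 - (n-1)/(m·n)`. -/
theorem porec_classical_achievable
    (n : ℕ) (hn : 2 ≤ n) (m : ℕ) (hm : Nat.Prime m) [NeZero m] :
    (∀ r : Fin n → ZMod m,
        2 ≤ (Finset.univ.filter fun i => r i ≠ 0).card →
        ∀ M k k' : ZMod m,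
          ∑ x ∈ Finset.univ.filter (fun x : Fin n → ZMod m => ∑ i, r i * x i = k),
            (if M = x ⟨0, by omega⟩ then (1 : ℝ) else 0) =
          ∑ x ∈ Finset.univ.filter (fun x : Fin n → ZMod m => ∑ i, r i * x i = k'),
            (if M = x ⟨0, by omega⟩ then (1 : ℝ) else 0)) ∧
    (1 / (n * m ^ n) : ℝ) *
        ∑ x : Fin n → ZMod m, ∑ y : Fin n, ∑ M : ZMod m,
          (if M = x ⟨0, by omega⟩ then (1 : ℝ) else 0) *
            ∑ b ∈ Finset.univ.filter (fun b => b ≠ x y),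
              (if y = (⟨0, by omega⟩ : Fin n) then (if b = M + 1 then (1 : ℝ) else 0)
               else (if b = 0 then (1 : ℝ) else 0))
      = 1 - ((n : ℝ) - 1) / (m * n) := by
  constructor
  · intro r hr M k k'
    exact porec_part1 n m hm _ r hr M k k'
  · exact porec_part2 n hn m hm ⟨0, by omega⟩
end

section
/- For every integer n ≥ 2 and every prime m, every ontological model of the (n,m) parity-oblivious exclusion scenario whose preparation measures satisfy the parity-class equality implied by preparation noncontextuality has POREC success probability at most 1 − (n−1)/(m·n). -/
open Finset MeasureTheory

lemma porec_card_fiber (n m : ℕ) (hm : Nat.Prime m) [NeZero m]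
    (d : Fin n → ZMod m) (hd : d ≠ 0) (k : ZMod m) :
    (Finset.univ.filter fun r : Fin n → ZMod m => ∑ i, r i * d i = k).card = m ^ (n - 1) := by
  haveI : Fact m.Prime := ⟨hm⟩
  obtain ⟨i0, hi0⟩ : ∃ i, d i ≠ 0 := by
    by_contra h
    push_neg at h
    exact hd (funext h)
  have hn : 1 ≤ n := by
    by_contra h
    have h0 : n = 0 := by omega
    subst h0
    exact hd (funext fun i => i.elim0)
  have hsame : ∀ k : ZMod m,
      (Finset.univ.filter fun r : Fin n → ZMod m => ∑ i, r i * d i = k).card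
        = (Finset.univ.filter fun r : Fin n → ZMod m => ∑ i, r i * d i = 0).card := by
    intro k
    set w : Fin n → ZMod m := Function.update (0 : Fin n → ZMod m) i0 (k * (d i0)⁻¹) with hw
    have hφw : ∑ i, w i * d i = k := by
      rw [Finset.sum_eq_single i0]
      · rw [hw, Function.update_self]
        field_simp
      · intro i _ hi
        simp [hw, Function.update_of_ne hi]
      · simp
    apply Finset.card_bij' (fun r _ => r - w) (fun r _ => r + w)
    · intro r hr
      simp only [Finset.mem_filter, Finset.mem_univ, true_and] at hr ⊢
      simp [Pi.sub_apply, sub_mul, Finset.sum_sub_distrib, hr, hφw]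
    · intro r hr
      simp only [Finset.mem_filter, Finset.mem_univ, true_and] at hr ⊢
      simp [Pi.add_apply, add_mul, Finset.sum_add_distrib, hr, hφw]
    · intro r _; simp
    · intro r _; simp
  have hpartition : ∑ k : ZMod m, (Finset.univ.filter
      fun r : Fin n → ZMod m => ∑ i, r i * d i = k).card = m ^ n := by
    rw [← Finset.card_eq_sum_card_fiberwise (f := fun r : Fin n → ZMod m => ∑ i, r i * d i)
        (fun x _ => Finset.mem_univ _)]
    simp [Finset.card_univ, ZMod.card]
  have hconst : ∑ k : ZMod m, (Finset.univ.filter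
      fun r : Fin n → ZMod m => ∑ i, r i * d i = k).card
      = m * (Finset.univ.filter fun r : Fin n → ZMod m => ∑ i, r i * d i = 0).card := by
    rw [Finset.sum_congr rfl fun k _ => hsame k, Finset.sum_const, Finset.card_univ,
      ZMod.card, smul_eq_mul]
  have hkey : m * (Finset.univ.filter
      fun r : Fin n → ZMod m => ∑ i, r i * d i = 0).card = m ^ n := by
    rw [← hconst, hpartition]
  have hmn : m * m ^ (n - 1) = m ^ n := by
    rw [← pow_succ', Nat.sub_add_cancel hn]
  rw [hsame k]
  exact Nat.eq_of_mul_eq_mul_left hm.pos (hkey.trans hmn.symm)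

lemma porec_claimB (n m : ℕ) (hn : 2 ≤ n) (hm : Nat.Prime m) [NeZero m]
    (g : (Fin n → ZMod m) → ℝ)
    (hg : ∀ r : Fin n → ZMod m, 2 ≤ (Finset.univ.filter fun i => r i ≠ 0).card →
      ∀ k : ZMod m, (m : ℝ) * ∑ z ∈ Finset.univ.filter
          (fun z : Fin n → ZMod m => ∑ i, r i * z i = k), g z = ∑ z, g z)
    (x : Fin n → ZMod m) :
    (m : ℝ) * ∑ y : Fin n, ∑ z ∈ Finset.univ.filter (fun z : Fin n → ZMod m => z y = x y), g z
      = (m : ℝ) ^ n * g x + ((n : ℝ) - 1) * ∑ z, g z := by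
  haveI : Fact m.Prime := ⟨hm⟩
  have hm2 : 2 ≤ m := hm.two_le
  have hMa : (m : ℝ) ^ n = (m : ℝ) ^ (n - 1) * m := by
    rw [← pow_succ, Nat.sub_add_cancel (by omega)]
  set S : ℝ := ∑ z, g z with hS
  set X : ℝ := ∑ y : Fin n, ∑ z ∈ Finset.univ.filter
      (fun z : Fin n → ZMod m => z y = x y), g z with hX
  set h : (Fin n → ZMod m) → ℝ := fun r => ∑ z ∈ Finset.univ.filter
      (fun z : Fin n → ZMod m => ∑ i, r i * z i = ∑ i, r i * x i), g z with hh
  -- the fiber counting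
  have count : ∀ z : Fin n → ZMod m,
      (((Finset.univ.filter fun r : Fin n → ZMod m =>
          ∑ i, r i * z i = ∑ i, r i * x i).card : ℕ) : ℝ)
        = if z = x then (m : ℝ) ^ n else (m : ℝ) ^ (n - 1) := by
    intro z
    by_cases hz : z = x
    · subst hz
      rw [if_pos rfl, Finset.filter_true_of_mem (fun r _ => rfl), Finset.card_univ,
        Fintype.card_fun, ZMod.card, Fintype.card_fin]
      push_cast
      ring
    · have hzx : z - x ≠ 0 := sub_ne_zero.mpr hz
      have hfeq : (Finset.univ.filter fun r : Fin n → ZMod m =>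
          ∑ i, r i * z i = ∑ i, r i * x i)
          = Finset.univ.filter fun r : Fin n → ZMod m => ∑ i, r i * (z - x) i = 0 := by
        apply Finset.filter_congr
        intro r _
        simp [Pi.sub_apply, mul_sub, Finset.sum_sub_distrib, sub_eq_zero]
      rw [hfeq, porec_card_fiber n m hm (z - x) hzx 0, if_neg hz]
      push_cast
      ring
  -- Way 1 : double counting
  have way1 : ∑ r : Fin n → ZMod m, h r
      = ((m : ℝ) ^ n - (m : ℝ) ^ (n - 1)) * g x + (m : ℝ) ^ (n - 1) * S := by
    calc ∑ r : Fin n → ZMod m, h r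
        = ∑ r : Fin n → ZMod m, ∑ z : Fin n → ZMod m,
            if (∑ i, r i * z i = ∑ i, r i * x i) then g z else 0 := by
          simp only [hh, Finset.sum_filter]
      _ = ∑ z : Fin n → ZMod m, ∑ r : Fin n → ZMod m,
            if (∑ i, r i * z i = ∑ i, r i * x i) then g z else 0 := Finset.sum_comm
      _ = ∑ z : Fin n → ZMod m, (((Finset.univ.filter fun r : Fin n → ZMod m =>
            ∑ i, r i * z i = ∑ i, r i * x i).card : ℕ) : ℝ) * g z := by
          refine Finset.sum_congr rfl fun z _ => ?_
          rw [← Finset.sum_filter, Finset.sum_const, nsmul_eq_mul]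
      _ = ∑ z : Fin n → ZMod m, ((m : ℝ) ^ (n - 1) * g z
            + if z = x then ((m : ℝ) ^ n - (m : ℝ) ^ (n - 1)) * g x else 0) := by
          refine Finset.sum_congr rfl fun z _ => ?_
          rw [count z]
          by_cases hz : z = x
          · subst hz; simp; ring
          · simp [hz]
      _ = ((m : ℝ) ^ n - (m : ℝ) ^ (n - 1)) * g x + (m : ℝ) ^ (n - 1) * S := by
          rw [Finset.sum_add_distrib, Finset.sum_ite_eq' Finset.univ x, ← Finset.mul_sum,
            ← hS]
          simp
          ring
  -- partition of masks by support size
  set A1 : Finset (Fin n → ZMod m) := Finset.univ.filter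
      (fun r : Fin n → ZMod m => (Finset.univ.filter fun i => r i ≠ 0).card = 1) with hA1
  set A2 : Finset (Fin n → ZMod m) := Finset.univ.filter
      (fun r : Fin n → ZMod m => 2 ≤ (Finset.univ.filter fun i => r i ≠ 0).card) with hA2
  have hA0 : (Finset.univ.filter
      (fun r : Fin n → ZMod m => (Finset.univ.filter fun i => r i ≠ 0).card = 0))
      = {(0 : Fin n → ZMod m)} := by
    ext r
    simp [Finset.card_eq_zero, Finset.filter_eq_empty_iff, funext_iff, not_not]
  have key : ∀ F : (Fin n → ZMod m) → ℝ,
      ∑ r : Fin n → ZMod m, F r = F 0 + (∑ r ∈ A1, F r) + (∑ r ∈ A2, F r) := by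
    intro F
    rw [← Finset.sum_filter_add_sum_filter_not Finset.univ
      (fun r : Fin n → ZMod m => (Finset.univ.filter fun i => r i ≠ 0).card = 0) F]
    rw [← Finset.sum_filter_add_sum_filter_not (Finset.univ.filter
      (fun r : Fin n → ZMod m => ¬ (Finset.univ.filter fun i => r i ≠ 0).card = 0))
      (fun r : Fin n → ZMod m => (Finset.univ.filter fun i => r i ≠ 0).card = 1) F]
    rw [hA0, Finset.sum_singleton, Finset.filter_filter, Finset.filter_filter]
    rw [add_assoc]
    congr 2
    · apply Finset.sum_congr _ fun _ _ => rfl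
      rw [hA1]
      apply Finset.filter_congr
      intro r _
      constructor
      · exact fun hc => hc.2
      · intro hc; exact ⟨by omega, hc⟩
    · apply Finset.sum_congr _ fun _ _ => rfl
      rw [hA2]
      apply Finset.filter_congr
      intro r _
      constructor
      · intro hc; omega
      · intro hc; omega
  -- parametrize A1 by (coordinate, nonzero value)
  have hsupp_update : ∀ (y : Fin n) (aa : ZMod m), aa ≠ 0 →
      (Finset.univ.filter fun i => Function.update (0 : Fin n → ZMod m) y aa i ≠ 0) = {y} := by
    intro y aa ha
    ext i
    by_cases hi : i = y
    · subst hi; simp [Function.update_self, ha]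
    · simp [Function.update_of_ne hi, hi]
  set Y : (Fin n → ZMod m) → Fin n := fun r =>
    if hr : (Finset.univ.filter fun i => r i ≠ 0).Nonempty
    then (Finset.univ.filter fun i => r i ≠ 0).min' hr else ⟨0, by omega⟩ with hY
  have hYval : ∀ (r : Fin n → ZMod m) (y : Fin n),
      (Finset.univ.filter fun i => r i ≠ 0) = {y} → Y r = y := by
    intro r y hr
    rw [hY]
    simp only
    rw [dif_pos (by rw [hr]; exact Finset.singleton_nonempty y)]
    apply le_antisymm
    · exact Finset.min'_le _ y (by rw [hr]; exact Finset.mem_singleton_self y)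
    · apply Finset.le_min'
      intro z hz
      rw [hr, Finset.mem_singleton] at hz
      exact le_of_eq hz.symm
  have hA1mem : ∀ r ∈ A1, (Finset.univ.filter fun i => r i ≠ 0) = {Y r} := by
    intro r hr
    rw [hA1, Finset.mem_filter] at hr
    obtain ⟨y, hy⟩ := Finset.card_eq_one.mp hr.2
    rw [hy, hYval r y hy]
  have hA1trans : ∀ F : (Fin n → ZMod m) → ℝ, ∑ r ∈ A1, F r
      = ∑ y : Fin n, ∑ aa ∈ Finset.univ.filter (fun aa : ZMod m => aa ≠ 0),
          F (Function.update (0 : Fin n → ZMod m) y aa) := by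
    intro F
    have hleft : ∀ r ∈ A1, Function.update (0 : Fin n → ZMod m) (Y r) (r (Y r)) = r := by
      intro r hr
      have hsupp := hA1mem r hr
      funext i
      by_cases hi : i = Y r
      · subst hi; rw [Function.update_self]
      · rw [Function.update_of_ne hi]
        by_contra hne
        have : i ∈ (Finset.univ.filter fun j => r j ≠ 0) := by
          rw [Finset.mem_filter]
          exact ⟨Finset.mem_univ _, fun hc => hne (by rw [hc]; rfl)⟩
        rw [hsupp, Finset.mem_singleton] at this
        exact hi this
    rw [← Finset.sum_product (s := (Finset.univ : Finset (Fin n)))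
      (t := Finset.univ.filter (fun aa : ZMod m => aa ≠ 0))
      (f := fun p : Fin n × ZMod m => F (Function.update (0 : Fin n → ZMod m) p.1 p.2))]
    apply Finset.sum_nbij' (i := fun r => ((Y r, r (Y r)) : Fin n × ZMod m))
      (j := fun p => Function.update (0 : Fin n → ZMod m) p.1 p.2)
    · intro r hr
      have hsupp := hA1mem r hr
      have : Y r ∈ (Finset.univ.filter fun i => r i ≠ 0) := by
        rw [hsupp]; exact Finset.mem_singleton_self _
      rw [Finset.mem_filter] at this
      rw [Finset.mem_product, Finset.mem_filter]
      exact ⟨Finset.mem_univ _, Finset.mem_univ _, this.2⟩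
    · intro p hp
      rw [Finset.mem_product, Finset.mem_filter] at hp
      rw [hA1, Finset.mem_filter]
      refine ⟨Finset.mem_univ _, ?_⟩
      rw [hsupp_update p.1 p.2 hp.2.2, Finset.card_singleton]
    · intro r hr
      exact hleft r hr
    · intro p hp
      rw [Finset.mem_product, Finset.mem_filter] at hp
      have hYp : Y (Function.update (0 : Fin n → ZMod m) p.1 p.2) = p.1 :=
        hYval _ _ (hsupp_update p.1 p.2 hp.2.2)
      rw [Prod.ext_iff]
      refine ⟨hYp, ?_⟩
      rw [hYp, Function.update_self]
    · intro r hr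
      exact (congrArg F (hleft r hr)).symm
  -- value of h on single-support masks
  have hval : ∀ (y : Fin n) (aa : ZMod m), aa ≠ 0 →
      h (Function.update (0 : Fin n → ZMod m) y aa)
        = ∑ z ∈ Finset.univ.filter (fun z : Fin n → ZMod m => z y = x y), g z := by
    intro y aa ha
    have hs : ∀ z : Fin n → ZMod m,
        ∑ i, Function.update (0 : Fin n → ZMod m) y aa i * z i = aa * z y := by
      intro z
      rw [Finset.sum_eq_single y]
      · rw [Function.update_self]
      · intro i _ hi; simp [Function.update_of_ne hi]
      · simp
    simp only [hh]
    apply Finset.sum_congr _ fun _ _ => rfl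
    apply Finset.filter_congr
    intro z _
    rw [hs z, hs x]
    exact mul_right_inj' ha
  have h0 : h 0 = S := by
    simp only [hh]
    rw [Finset.filter_true_of_mem fun z _ => by simp]
  have hcard_ne : (((Finset.univ.filter fun aa : ZMod m => aa ≠ 0).card : ℕ) : ℝ)
      = (m : ℝ) - 1 := by
    rw [Finset.filter_ne', Finset.card_erase_of_mem (Finset.mem_univ _), Finset.card_univ,
      ZMod.card, Nat.cast_sub (by omega)]
    norm_num
  have way2 : ∑ r : Fin n → ZMod m, (m : ℝ) * h r
      = (m : ℝ) * S + ((m : ℝ) - 1) * ((m : ℝ) * X) + ((A2.card : ℕ) : ℝ) * S := by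
    rw [key (fun r => (m : ℝ) * h r)]
    congr 1
    congr 1
    · rw [h0]
    · rw [hA1trans (fun r => (m : ℝ) * h r)]
      have hyy : ∀ y : Fin n, ∑ aa ∈ Finset.univ.filter (fun aa : ZMod m => aa ≠ 0),
          (m : ℝ) * h (Function.update (0 : Fin n → ZMod m) y aa)
          = ((m : ℝ) - 1) * ((m : ℝ) * ∑ z ∈ Finset.univ.filter
              (fun z : Fin n → ZMod m => z y = x y), g z) := by
        intro y
        rw [Finset.sum_congr rfl fun aa haa => by
          rw [hval y aa (Finset.mem_filter.mp haa).2]]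
        rw [Finset.sum_const, nsmul_eq_mul, hcard_ne]
      rw [Finset.sum_congr rfl fun y _ => hyy y, ← Finset.mul_sum, ← Finset.mul_sum, ← hX]
    · rw [Finset.sum_congr rfl fun r hr => by
        have h2 : 2 ≤ (Finset.univ.filter fun i => r i ≠ 0).card := by
          rw [hA2, Finset.mem_filter] at hr
          exact hr.2
        show (m : ℝ) * h r = S
        simp only [hh]
        rw [hg r h2 (∑ i, r i * x i)]]
      rw [Finset.sum_const, nsmul_eq_mul]
  have hcards : (m : ℝ) ^ n = 1 + (n : ℝ) * ((m : ℝ) - 1) + ((A2.card : ℕ) : ℝ) := by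
    have h1 := key (fun _ => (1 : ℝ))
    rw [hA1trans (fun _ => (1 : ℝ))] at h1
    simp only [Finset.sum_const, nsmul_eq_mul, mul_one, Finset.card_univ, Fintype.card_fun,
      ZMod.card, Fintype.card_fin, hcard_ne, Fintype.card_fin] at h1
    push_cast at h1
    linarith [h1]
  have hmne : (m : ℝ) - 1 ≠ 0 := by
    have : (2 : ℝ) ≤ (m : ℝ) := by exact_mod_cast hm2
    intro hc
    linarith
  have way1' : ∑ r : Fin n → ZMod m, (m : ℝ) * h r
      = (m : ℝ) * (((m : ℝ) ^ n - (m : ℝ) ^ (n - 1)) * g x + (m : ℝ) ^ (n - 1) * S) := by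
    rw [← Finset.mul_sum, way1]
  have hfin : ((m : ℝ) - 1) * ((m : ℝ) * X)
      = ((m : ℝ) - 1) * ((m : ℝ) ^ n * g x + ((n : ℝ) - 1) * S) := by
    linear_combination way1' - way2 + S * hcards + (g x - S) * hMa
  exact mul_left_cancel₀ hmne hfin

/-- **Preparation-noncontextual bound for the (n,m) POREC.** For every integer `n ≥ 2` and
every prime `m`, every ontological model (ontic space `Λ`, preparation measures `μ x`,
response functions `ξ`) whose preparation measures satisfy the parity-class equality implied
by preparation noncontextuality has POREC success probability at most `1 - (n-1)/(m·n)`. -/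
theorem porec_noncontextual_bound
    (n : ℕ) (hn : 2 ≤ n) (m : ℕ) (hm : Nat.Prime m) [NeZero m]
    (Λ : Type) [MeasurableSpace Λ]
    (μ : (Fin n → ZMod m) → Measure Λ)
    (hμ : ∀ x, IsProbabilityMeasure (μ x))
    (ξ : ZMod m → Fin n → Λ → ℝ)
    (hξ_meas : ∀ b y, Measurable (ξ b y))
    (hξ_nonneg : ∀ b y lam, 0 ≤ ξ b y lam)
    (hξ_le_one : ∀ b y lam, ξ b y lam ≤ 1)
    (hξ_sum : ∀ y lam, ∑ b, ξ b y lam = 1)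
    (hPNC : ∀ r : Fin n → ZMod m,
      2 ≤ (Finset.univ.filter fun i => r i ≠ 0).card →
      ∀ k k' : ZMod m,
        ∑ x ∈ Finset.univ.filter (fun x : Fin n → ZMod m => ∑ i, r i * x i = k), μ x =
        ∑ x ∈ Finset.univ.filter (fun x : Fin n → ZMod m => ∑ i, r i * x i = k'), μ x) :
    (1 / (n * m ^ n) : ℝ) *
        ∑ x : Fin n → ZMod m, ∑ y : Fin n,
          ∑ b ∈ Finset.univ.filter (fun b => b ≠ x y), ∫ lam, ξ b y lam ∂(μ x)
      ≤ 1 - ((n : ℝ) - 1) / (m * n) := by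
  haveI : Fact m.Prime := ⟨hm⟩
  have hm2 : 2 ≤ m := hm.two_le
  set F : (Fin n → ZMod m) → Λ → ℝ := fun x lam => ∏ y, ξ (x y) y lam with hF
  have hFmeas : ∀ x, Measurable (F x) :=
    fun x => Finset.measurable_prod _ fun y _ => hξ_meas _ _
  have hFnn : ∀ x lam, 0 ≤ F x lam :=
    fun x lam => Finset.prod_nonneg fun y _ => hξ_nonneg _ _ _
  have hFle : ∀ x lam, F x lam ≤ 1 :=
    fun x lam => Finset.prod_le_one (fun y _ => hξ_nonneg _ _ _) fun y _ => hξ_le_one _ _ _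
  have hFint : ∀ x z, Integrable (F x) (μ z) := by
    intro x z
    haveI := hμ z
    refine Integrable.mono' (integrable_const 1) (hFmeas x).aestronglyMeasurable ?_
    filter_upwards with lam
    rw [Real.norm_eq_abs, abs_of_nonneg (hFnn x lam)]
    exact hFle x lam
  have hξint : ∀ (b : ZMod m) (y : Fin n) (z : Fin n → ZMod m), Integrable (ξ b y) (μ z) := by
    intro b y z
    haveI := hμ z
    refine Integrable.mono' (integrable_const 1) (hξ_meas b y).aestronglyMeasurable ?_
    filter_upwards with lam
    rw [Real.norm_eq_abs, abs_of_nonneg (hξ_nonneg b y lam)]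
    exact hξ_le_one b y lam
  have hFsum : ∀ lam, ∑ x : Fin n → ZMod m, F x lam = 1 := by
    intro lam
    simp only [hF]
    rw [← Fintype.piFinset_univ,
      ← Finset.prod_univ_sum (fun _ : Fin n => (Finset.univ : Finset (ZMod m)))
        (fun i j => ξ j i lam)]
    simp [hξ_sum]
  set g : (Fin n → ZMod m) → (Fin n → ZMod m) → ℝ := fun x z => ∫ lam, F x lam ∂ μ z with hg
  have hgnn : ∀ x z, 0 ≤ g x z := fun x z => integral_nonneg (hFnn x)
  have hgsum : ∀ z, ∑ x, g x z = 1 := by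
    intro z
    haveI := hμ z
    simp only [hg]
    rw [← integral_finset_sum _ fun x _ => hFint x z]
    simp only [hFsum]
    simp
  have hgPNC : ∀ x : Fin n → ZMod m, ∀ r : Fin n → ZMod m,
      2 ≤ (Finset.univ.filter fun i => r i ≠ 0).card →
      ∀ k : ZMod m, (m : ℝ) * ∑ z ∈ Finset.univ.filter
        (fun z : Fin n → ZMod m => ∑ i, r i * z i = k), g x z = ∑ z, g x z := by
    intro x r hr k
    have hcl : ∀ k' : ZMod m, ∑ z ∈ Finset.univ.filter
        (fun z : Fin n → ZMod m => ∑ i, r i * z i = k'), g x z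
        = ∑ z ∈ Finset.univ.filter
        (fun z : Fin n → ZMod m => ∑ i, r i * z i = k), g x z := by
      intro k'
      simp only [hg]
      rw [← integral_finset_sum_measure fun z _ => hFint x z,
        ← integral_finset_sum_measure fun z _ => hFint x z, hPNC r hr k' k]
    calc (m : ℝ) * ∑ z ∈ Finset.univ.filter
          (fun z : Fin n → ZMod m => ∑ i, r i * z i = k), g x z
        = ∑ k' : ZMod m, ∑ z ∈ Finset.univ.filter
            (fun z : Fin n → ZMod m => ∑ i, r i * z i = k'), g x z := by
          rw [Finset.sum_congr rfl fun k' _ => hcl k', Finset.sum_const, Finset.card_univ,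
            ZMod.card, nsmul_eq_mul]
      _ = ∑ z, g x z :=
          Finset.sum_fiberwise_of_maps_to (fun z _ => Finset.mem_univ _) (g x)
  have hint1 : ∀ (x : Fin n → ZMod m) (y : Fin n),
      ∑ b : ZMod m, ∫ lam, ξ b y lam ∂ μ x = 1 := by
    intro x y
    haveI := hμ x
    rw [← integral_finset_sum _ fun b _ => hξint b y x]
    simp only [hξ_sum]
    simp
  have hgoalsum : ∀ (x : Fin n → ZMod m) (y : Fin n),
      ∑ b ∈ Finset.univ.filter (fun b => b ≠ x y), ∫ lam, ξ b y lam ∂ μ x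
      = 1 - ∫ lam, ξ (x y) y lam ∂ μ x := by
    intro x y
    rw [Finset.filter_ne', Finset.sum_erase_eq_sub (Finset.mem_univ _), hint1 x y]
  set T : ℝ := ∑ x : Fin n → ZMod m, ∑ y : Fin n, ∫ lam, ξ (x y) y lam ∂ μ x with hT
  have hpoint : ∀ (z : Fin n → ZMod m) (y : Fin n) (lam : Λ),
      ξ (z y) y lam = ∑ x ∈ Finset.univ.filter
        (fun x : Fin n → ZMod m => x y = z y), F x lam := by
    intro z y lam
    have hfilter : Finset.univ.filter (fun x : Fin n → ZMod m => x y = z y)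
        = Fintype.piFinset (fun i => if i = y then {z y} else Finset.univ) := by
      ext x
      simp only [Finset.mem_filter, Finset.mem_univ, true_and, Fintype.mem_piFinset]
      constructor
      · intro hx i
        by_cases hi : i = y
        · subst hi; simp [hx]
        · simp [hi]
      · intro hx
        have := hx y
        simpa using this
    rw [hfilter]
    simp only [hF]
    rw [← Finset.prod_univ_sum
      (fun i : Fin n => if i = y then ({z y} : Finset (ZMod m)) else Finset.univ)
      (fun i j => ξ j i lam)]
    symm
    rw [Finset.prod_eq_single y]
    · simp
    · intro i _ hi
      simp [hi, hξ_sum]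
    · simp
  have hTform : T = ∑ x : Fin n → ZMod m, ∑ y : Fin n, ∑ z ∈ Finset.univ.filter
      (fun z : Fin n → ZMod m => z y = x y), g x z := by
    rw [hT]
    have h1 : ∀ (z : Fin n → ZMod m) (y : Fin n), ∫ lam, ξ (z y) y lam ∂ μ z
        = ∑ x ∈ Finset.univ.filter (fun x : Fin n → ZMod m => x y = z y), g x z := by
      intro z y
      haveI := hμ z
      rw [show (fun lam => ξ (z y) y lam) = fun lam => ∑ x ∈ Finset.univ.filter
        (fun x : Fin n → ZMod m => x y = z y), F x lam from funext (hpoint z y)]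
      rw [integral_finset_sum _ fun x _ => hFint x z]
    rw [Finset.sum_congr rfl fun z _ => Finset.sum_congr rfl fun y _ => h1 z y]
    simp only [Finset.sum_filter]
    have flip : ∀ (x z : Fin n → ZMod m) (y : Fin n),
        (if x y = z y then g x z else 0) = if z y = x y then g x z else 0 := by
      intro x z y
      by_cases hxy : x y = z y
      · rw [if_pos hxy, if_pos hxy.symm]
      · rw [if_neg hxy, if_neg fun hc => hxy hc.symm]
    calc ∑ z : Fin n → ZMod m, ∑ y : Fin n, ∑ x : Fin n → ZMod m,
          (if x y = z y then g x z else 0)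
        = ∑ z : Fin n → ZMod m, ∑ x : Fin n → ZMod m, ∑ y : Fin n,
          (if x y = z y then g x z else 0) :=
          Finset.sum_congr rfl fun z _ => Finset.sum_comm
      _ = ∑ x : Fin n → ZMod m, ∑ z : Fin n → ZMod m, ∑ y : Fin n,
          (if x y = z y then g x z else 0) := Finset.sum_comm
      _ = ∑ x : Fin n → ZMod m, ∑ y : Fin n, ∑ z : Fin n → ZMod m,
          (if x y = z y then g x z else 0) :=
          Finset.sum_congr rfl fun x _ => Finset.sum_comm
      _ = ∑ x : Fin n → ZMod m, ∑ y : Fin n, ∑ z : Fin n → ZMod m,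
          (if z y = x y then g x z else 0) := by
          refine Finset.sum_congr rfl fun x _ => Finset.sum_congr rfl fun y _ =>
            Finset.sum_congr rfl fun z _ => flip x z y
  have hm0 : (0 : ℝ) < m := by exact_mod_cast hm.pos
  have hxbound : ∀ x : Fin n → ZMod m, ((n : ℝ) - 1) * ∑ z : Fin n → ZMod m, g x z
      ≤ (m : ℝ) * ∑ y : Fin n, ∑ z ∈ Finset.univ.filter
        (fun z : Fin n → ZMod m => z y = x y), g x z := by
    intro x
    have hcb := porec_claimB n m hn hm (g x) (hgPNC x) x
    have hgx : 0 ≤ g x x := hgnn x x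
    have hmn0 : (0 : ℝ) ≤ (m : ℝ) ^ n := by positivity
    nlinarith [mul_nonneg hmn0 hgx]
  have hswap : ∑ x : Fin n → ZMod m, ∑ z : Fin n → ZMod m, g x z = (m : ℝ) ^ n := by
    rw [Finset.sum_comm, Finset.sum_congr rfl fun z _ => hgsum z, Finset.sum_const,
      Finset.card_univ, Fintype.card_fun, ZMod.card, Fintype.card_fin, nsmul_eq_mul, mul_one]
    push_cast
    ring
  have hTb : ((m : ℝ)) ^ n * ((n : ℝ) - 1) ≤ (m : ℝ) * T := by
    rw [hTform, Finset.mul_sum]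
    calc (m : ℝ) ^ n * ((n : ℝ) - 1)
        = ∑ x : Fin n → ZMod m, ((n : ℝ) - 1) * ∑ z : Fin n → ZMod m, g x z := by
          rw [← Finset.mul_sum, hswap]
          ring
      _ ≤ ∑ x : Fin n → ZMod m, (m : ℝ) * ∑ y : Fin n, ∑ z ∈ Finset.univ.filter
            (fun z : Fin n → ZMod m => z y = x y), g x z :=
          Finset.sum_le_sum fun x _ => hxbound x
  -- final algebra
  rw [Finset.sum_congr rfl fun x _ => Finset.sum_congr rfl fun y _ => hgoalsum x y]
  rw [Finset.sum_congr rfl fun x (_ : x ∈ Finset.univ) => Finset.sum_sub_distrib _ _]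
  rw [Finset.sum_sub_distrib, ← hT]
  have hconst : ∑ _x : Fin n → ZMod m, ∑ _y : Fin n, (1 : ℝ) = (m : ℝ) ^ n * n := by
    rw [Finset.sum_const, Finset.sum_const, Finset.card_univ, Finset.card_univ,
      Fintype.card_fun, ZMod.card, Fintype.card_fin]
    push_cast
    ring
  rw [hconst]
  have hn0 : (0 : ℝ) < (n : ℝ) := by
    have h2n : (2 : ℝ) ≤ (n : ℝ) := by exact_mod_cast hn
    linarith
  have hA : (0 : ℝ) < (m : ℝ) ^ n := by positivity
  have heq : (1 / (↑n * ↑m ^ n) : ℝ) * ((m : ℝ) ^ n * ↑n - T) = 1 - T / (↑n * ↑m ^ n) := by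
    field_simp
  rw [heq]
  have hstep : ((n : ℝ) - 1) / ((m : ℝ) * n) ≤ T / ((n : ℝ) * (m : ℝ) ^ n) := by
    rw [div_le_div_iff₀ (by positivity) (by positivity)]
    nlinarith [mul_le_mul_of_nonneg_right hTb hn0.le]
  linarith
end

section
/- Let m be a prime, n ≥ 2 an integer, 𝕄 a finite set, and p : 𝕄 × (ZMod m)^n → ℝ a parity-oblivious classical encoding, i.e., p(M|x) ≥ 0, Σ_{M∈𝕄} p(M|x) = 1 for every x, and for every mask r and all k,k′ ∈ ZMod m, Σ_{x : r·x = k} p(M|x) = Σ_{x : r·x = k′} p(M|x) for every M. Then there exist p_0 ≥ 0 and K_1,…,K_n ≥ 0 with p_0 + Σ_i K_i = 1, a probability distribution q_0 on 𝕄, and for each i with K_i > 0 conditional distributions q_i(·|l) on 𝕄 for l ∈ ZMod m, such that p(M|x) = p_0 q_0(M) + Σ_{i=1}^{n} K_i q_i(M|x_i) for all M and x. -/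
open Finset


section aux

variable {G H : Type*} [AddCommGroup G] [Fintype G] [DecidableEq G]
  [AddCommGroup H] [Fintype H] [DecidableEq H]

lemma aux_fiber_card_eq (φ : G →+ H) (hφ : Function.Surjective φ) (k k' : H) :
    (univ.filter fun x => φ x = k).card = (univ.filter fun x => φ x = k').card := by
  obtain ⟨d, hd⟩ := hφ (k' - k)
  refine Finset.card_bij (fun x _ => x + d) ?_ ?_ ?_
  · intro a ha
    simp only [mem_filter, mem_univ, true_and] at ha ⊢
    rw [map_add, ha, hd]; abel
  · intro a _ b _ h
    exact add_right_cancel h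
  · intro b hb
    simp only [mem_filter, mem_univ, true_and] at hb
    refine ⟨b - d, ?_, by simp⟩
    simp only [mem_filter, mem_univ, true_and, map_sub, hb, hd]
    abel

lemma aux_fiber_card_mul (φ : G →+ H) (hφ : Function.Surjective φ) (k : H) :
    (univ.filter fun x => φ x = k).card * Fintype.card H = Fintype.card G := by
  have h2 : (univ : Finset G).card = ∑ k' : H, (univ.filter fun x => φ x = k').card :=
    Finset.card_eq_sum_card_fiberwise (fun x _ => mem_univ (φ x))
  rw [Finset.card_univ] at h2
  rw [h2, Finset.sum_congr rfl fun k' _ => aux_fiber_card_eq φ hφ k' k, Finset.sum_const,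
    smul_eq_mul, Finset.card_univ, mul_comm]

end aux

section count

variable (m n : ℕ) [hmp : Fact (Nat.Prime m)] [NeZero m]

omit hmp in
lemma card_pi_zmod : Fintype.card (Fin n → ZMod m) = m ^ n := by
  simp [Fintype.card_fun, ZMod.card]

lemma count_dot (hn : 1 ≤ n) (r : Fin n → ZMod m) (hr : r ≠ 0) (k : ZMod m) :
    (univ.filter fun x : Fin n → ZMod m => ∑ i, r i * x i = k).card = m ^ (n - 1) := by
  obtain ⟨j, hj⟩ : ∃ j, r j ≠ 0 := by
    by_contra h
    push_neg at h
    exact hr (funext fun i => h i)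
  set φ : (Fin n → ZMod m) →+ ZMod m :=
    { toFun := fun x => ∑ i, r i * x i
      map_zero' := by simp
      map_add' := fun x y => by simp [mul_add, Finset.sum_add_distrib] } with hφdef
  have hsurj : Function.Surjective φ := by
    intro c
    refine ⟨Pi.single j ((r j)⁻¹ * c), ?_⟩
    have : ∑ i, r i * (Pi.single j ((r j)⁻¹ * c) : Fin n → ZMod m) i = c := by
      rw [Finset.sum_eq_single j]
      · rw [Pi.single_eq_same, ← mul_assoc, mul_inv_cancel₀ hj, one_mul]
      · intro i _ hij
        rw [Pi.single_eq_of_ne hij, mul_zero]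
      · exact fun h => absurd (mem_univ j) h
    exact this
  have hmul := aux_fiber_card_mul φ hsurj k
  rw [card_pi_zmod, ZMod.card] at hmul
  have heq : (univ.filter fun x : Fin n → ZMod m => φ x = k)
      = (univ.filter fun x : Fin n → ZMod m => ∑ i, r i * x i = k) := rfl
  rw [heq] at hmul
  have hm0 : 0 < m := Nat.pos_of_ne_zero (NeZero.ne m)
  have h3 : m ^ n = m ^ (n - 1) * m := by
    rw [← pow_succ, Nat.sub_add_cancel hn]
  exact Nat.eq_of_mul_eq_mul_right hm0 (by rw [hmul, h3])

lemma count_pair (hn : 2 ≤ n) (i : Fin n) (r : Fin n → ZMod m)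
    (hj : ∃ j, j ≠ i ∧ r j ≠ 0) (k l : ZMod m) :
    (univ.filter fun x : Fin n → ZMod m => (∑ t, r t * x t = k) ∧ x i = l).card
      = m ^ (n - 2) := by
  obtain ⟨j, hji, hj⟩ := hj
  set φ : (Fin n → ZMod m) →+ ZMod m × ZMod m :=
    { toFun := fun x => (∑ t, r t * x t, x i)
      map_zero' := by simp
      map_add' := fun x y => by simp [mul_add, Finset.sum_add_distrib, Prod.ext_iff] }
  have hsurj : Function.Surjective φ := by
    rintro ⟨c, b⟩
    set x₀ : Fin n → ZMod m := Pi.single i b + Pi.single j ((r j)⁻¹ * (c - r i * b)) with hx₀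
    refine ⟨x₀, ?_⟩
    have hxi : x₀ i = b := by
      rw [hx₀]
      simp [Pi.single_eq_same, Pi.single_eq_of_ne (Ne.symm hji)]
    have hsum : ∑ t, r t * x₀ t = c := by
      have : ∀ t, r t * x₀ t = r t * (Pi.single i b : Fin n → ZMod m) t
          + r t * (Pi.single j ((r j)⁻¹ * (c - r i * b)) : Fin n → ZMod m) t := by
        intro t; rw [hx₀]; simp [mul_add]
      rw [Finset.sum_congr rfl fun t _ => this t, Finset.sum_add_distrib,
        Finset.sum_eq_single i (fun t _ hti => by rw [Pi.single_eq_of_ne hti, mul_zero])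
          (fun h => absurd (mem_univ i) h),
        Finset.sum_eq_single j (fun t _ htj => by rw [Pi.single_eq_of_ne htj, mul_zero])
          (fun h => absurd (mem_univ j) h),
        Pi.single_eq_same, Pi.single_eq_same, ← mul_assoc, mul_inv_cancel₀ hj, one_mul]
      ring
    exact Prod.ext hsum hxi
  have hmul := aux_fiber_card_mul φ hsurj (k, l)
  rw [card_pi_zmod] at hmul
  have hcard : Fintype.card (ZMod m × ZMod m) = m ^ 2 := by
    simp [ZMod.card]; ring
  rw [hcard] at hmul
  have heq : (univ.filter fun x : Fin n → ZMod m => φ x = (k, l))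
      = (univ.filter fun x : Fin n → ZMod m => (∑ t, r t * x t = k) ∧ x i = l) := by
    apply Finset.filter_congr
    intro x _
    show φ x = (k, l) ↔ _
    rw [Prod.ext_iff]
    exact Iff.rfl
  rw [heq] at hmul
  have hm0 : 0 < m ^ 2 := pow_pos (Nat.pos_of_ne_zero (NeZero.ne m)) 2
  have h3 : m ^ n = m ^ (n - 2) * m ^ 2 := by
    rw [← pow_add, Nat.sub_add_cancel hn]
  exact Nat.eq_of_mul_eq_mul_right hm0 (by rw [hmul, h3])

lemma count_coord (hn : 1 ≤ n) (i : Fin n) (l : ZMod m) :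
    (univ.filter fun x : Fin n → ZMod m => x i = l).card = m ^ (n - 1) := by
  set φ : (Fin n → ZMod m) →+ ZMod m := Pi.evalAddMonoidHom (fun _ => ZMod m) i
  have hsurj : Function.Surjective φ := by
    intro c
    exact ⟨@Pi.single (Fin n) (fun _ => ZMod m) _ _ i c,
      @Pi.single_eq_same (Fin n) (fun _ => ZMod m) _ _ i c⟩
  have hmul := aux_fiber_card_mul φ hsurj l
  rw [card_pi_zmod, ZMod.card] at hmul
  have heq : (univ.filter fun x : Fin n → ZMod m => φ x = l)
      = (univ.filter fun x : Fin n → ZMod m => x i = l) := rfl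
  rw [heq] at hmul
  have hm0 : 0 < m := Nat.pos_of_ne_zero (NeZero.ne m)
  have h3 : m ^ n = m ^ (n - 1) * m := by
    rw [← pow_succ, Nat.sub_add_cancel hn]
  exact Nat.eq_of_mul_eq_mul_right hm0 (by rw [hmul, h3])

lemma count_coord2 (hn : 2 ≤ n) (i j : Fin n) (hij : j ≠ i) (k l : ZMod m) :
    (univ.filter fun x : Fin n → ZMod m => (x j = k) ∧ x i = l).card = m ^ (n - 2) := by
  have h := count_pair m n hn i (Pi.single j (1 : ZMod m)) ⟨j, hij, by simp⟩ k l
  rw [← h]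
  apply congrArg Finset.card
  apply Finset.filter_congr
  intro x _
  have : ∑ t, (Pi.single j (1 : ZMod m) : Fin n → ZMod m) t * x t = x j := by
    rw [Finset.sum_eq_single j (fun t _ htj => by rw [Pi.single_eq_of_ne htj, zero_mul])
      (fun h => absurd (mem_univ j) h), Pi.single_eq_same, one_mul]
  rw [this]

end count

section van
variable (m n : ℕ) [hmp : Fact (Nat.Prime m)] [NeZero m]

lemma vanish (hn : 2 ≤ n) (g : (Fin n → ZMod m) → ℝ)
    (h : ∀ r : Fin n → ZMod m, r ≠ 0 → ∀ k : ZMod m,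
      ∑ x ∈ univ.filter (fun x => ∑ i, r i * x i = k), g x = 0) :
    ∀ x, g x = 0 := by
  have hm1 : (1 : ℕ) < m := hmp.out.one_lt
  have hn1 : 1 ≤ n := le_trans (by norm_num) hn
  -- total sum is zero
  have htot : ∑ x, g x = 0 := by
    have hne : (Pi.single (⟨0, by omega⟩ : Fin n) (1 : ZMod m) : Fin n → ZMod m) ≠ 0 := by
      intro hc
      have := congrFun hc ⟨0, by omega⟩
      rw [Pi.single_eq_same] at this
      exact one_ne_zero this
    rw [← Finset.sum_fiberwise_of_maps_to
      (fun x _ => mem_univ (∑ i, Pi.single (⟨0, by omega⟩ : Fin n) (1 : ZMod m) i * x i)) g]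
    exact Finset.sum_eq_zero fun k _ => h _ hne k
  -- every masked sum is zero (including r = 0)
  have hS : ∀ r : Fin n → ZMod m, ∀ k : ZMod m,
      ∑ x ∈ univ.filter (fun x => ∑ i, r i * x i = k), g x = 0 := by
    intro r k
    by_cases hr : r = 0
    · subst hr
      by_cases hk : (0 : ZMod m) = k
      · subst hk
        simpa using htot
      · rw [Finset.filter_false_of_mem, Finset.sum_empty]
        intro x _
        simpa using hk
    · exact h r hr k
  -- the quadratic form
  set T : ℝ := ∑ r : Fin n → ZMod m, ∑ k : ZMod m,
      (∑ x ∈ univ.filter (fun x => ∑ i, r i * x i = k), g x) ^ 2 with hT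
  have hT0 : T = 0 := by
    rw [hT]
    exact Finset.sum_eq_zero fun r _ => Finset.sum_eq_zero fun k _ => by rw [hS r k]; ring
  -- expand T
  have hexp : ∀ r : Fin n → ZMod m,
      ∑ k : ZMod m, (∑ x ∈ univ.filter (fun x => ∑ i, r i * x i = k), g x) ^ 2
      = ∑ x : Fin n → ZMod m, ∑ y : Fin n → ZMod m,
          (if ∑ i, r i * x i = ∑ i, r i * y i then g x * g y else 0) := by
    intro r
    have h1 : ∀ k : ZMod m,
        (∑ x ∈ univ.filter (fun x => ∑ i, r i * x i = k), g x) ^ 2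
        = ∑ x : Fin n → ZMod m, ∑ y : Fin n → ZMod m,
            (if (∑ i, r i * x i = k) ∧ (∑ i, r i * y i = k) then g x * g y else 0) := by
      intro k
      rw [sq, Finset.sum_filter, Finset.sum_mul_sum]
      refine Finset.sum_congr rfl fun x _ => Finset.sum_congr rfl fun y _ => ?_
      by_cases hx : ∑ i, r i * x i = k <;> by_cases hy : ∑ i, r i * y i = k <;>
        simp [hx, hy]
    rw [Finset.sum_congr rfl fun k _ => h1 k, Finset.sum_comm]
    refine Finset.sum_congr rfl fun x _ => ?_
    rw [Finset.sum_comm]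
    refine Finset.sum_congr rfl fun y _ => ?_
    by_cases hxy : ∑ i, r i * x i = ∑ i, r i * y i
    · rw [if_pos hxy]
      rw [Finset.sum_eq_single (∑ i, r i * x i)]
      · rw [if_pos ⟨rfl, hxy.symm⟩]
      · intro k _ hk
        rw [if_neg]
        rintro ⟨h1', -⟩
        exact hk h1'.symm
      · intro hk
        exact absurd (mem_univ _) hk
    · rw [if_neg hxy]
      refine Finset.sum_eq_zero fun k _ => ?_
      rw [if_neg]
      rintro ⟨h1', h2'⟩
      exact hxy (h1'.trans h2'.symm)
  -- count masks agreeing on x, y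
  have hcount : ∀ x y : Fin n → ZMod m,
      ((univ.filter fun r : Fin n → ZMod m => ∑ i, r i * x i = ∑ i, r i * y i).card : ℝ)
      = if x = y then (m : ℝ) ^ n else (m : ℝ) ^ (n - 1) := by
    intro x y
    by_cases hxy : x = y
    · subst hxy
      rw [if_pos rfl]
      rw [Finset.filter_true_of_mem (fun r _ => rfl), Finset.card_univ]
      rw [show Fintype.card (Fin n → ZMod m) = m ^ n by simp [Fintype.card_fun, ZMod.card]]
      push_cast; ring
    · rw [if_neg hxy]
      have heq : (univ.filter fun r : Fin n → ZMod m => ∑ i, r i * x i = ∑ i, r i * y i)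
          = (univ.filter fun r : Fin n → ZMod m => ∑ i, (x - y) i * r i = 0) := by
        apply Finset.filter_congr
        intro r _
        constructor
        · intro hr
          have : ∑ i, (r i * x i - r i * y i) = 0 := by
            rw [Finset.sum_sub_distrib, hr, sub_self]
          rw [← this]
          refine Finset.sum_congr rfl fun i _ => ?_
          simp [Pi.sub_apply, mul_comm, mul_sub]
        · intro hr
          have : ∑ i, (r i * x i - r i * y i) = 0 := by
            rw [← hr]
            refine Finset.sum_congr rfl fun i _ => ?_
            simp [Pi.sub_apply, mul_comm, mul_sub]
          rw [Finset.sum_sub_distrib, sub_eq_zero] at this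
          exact this
      rw [heq, count_dot m n hn1 (x - y) (sub_ne_zero.mpr hxy) 0]
      push_cast; ring
  -- combine
  have hT2 : T = (m : ℝ) ^ (n - 1) * (∑ x, g x) ^ 2
      + ((m : ℝ) ^ n - (m : ℝ) ^ (n - 1)) * ∑ x, (g x) ^ 2 := by
    rw [hT, Finset.sum_congr rfl fun r _ => hexp r, Finset.sum_comm]
    have hswap : ∀ x : Fin n → ZMod m,
        ∑ r : Fin n → ZMod m, ∑ y : Fin n → ZMod m,
          (if ∑ i, r i * x i = ∑ i, r i * y i then g x * g y else 0)
        = ∑ y : Fin n → ZMod m, g x * g y *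
            (if x = y then (m : ℝ) ^ n else (m : ℝ) ^ (n - 1)) := by
      intro x
      rw [Finset.sum_comm]
      refine Finset.sum_congr rfl fun y _ => ?_
      rw [← hcount x y, ← Finset.sum_filter, Finset.sum_const, nsmul_eq_mul, mul_comm]
    rw [Finset.sum_congr rfl fun x _ => hswap x]
    set A : ℝ := (m : ℝ) ^ n
    set B : ℝ := (m : ℝ) ^ (n - 1)
    have hsplit : ∀ x y : Fin n → ZMod m,
        g x * g y * (if x = y then A else B)
        = B * (g x * g y) + (if x = y then (A - B) * (g x * g y) else 0) := by
      intro x y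
      by_cases hxy : x = y <;> simp [hxy] <;> ring
    rw [Finset.sum_congr rfl fun x _ =>
      (Finset.sum_congr rfl fun y _ => hsplit x y).trans Finset.sum_add_distrib,
      Finset.sum_add_distrib]
    congr 1
    · have h1 : ∀ x : Fin n → ZMod m,
          ∑ y : Fin n → ZMod m, B * (g x * g y) = B * g x * ∑ y, g y := by
        intro x
        rw [Finset.mul_sum]
        refine Finset.sum_congr rfl fun y _ => by ring
      rw [Finset.sum_congr rfl fun x _ => h1 x]
      rw [← Finset.sum_mul, ← Finset.mul_sum]
      ring
    · have h2 : ∀ x : Fin n → ZMod m,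
          ∑ y : Fin n → ZMod m, (if x = y then (A - B) * (g x * g y) else 0)
          = (A - B) * (g x * g x) := by
        intro x
        rw [Finset.sum_ite_eq univ x fun y => (A - B) * (g x * g y)]
        simp
      rw [Finset.sum_congr rfl fun x _ => h2 x, ← Finset.mul_sum]
      rw [Finset.mul_sum, Finset.mul_sum]
      exact Finset.sum_congr rfl fun x _ => by ring
  rw [hT0] at hT2
  rw [htot] at hT2
  have hpow : (0 : ℝ) < (m : ℝ) ^ n - (m : ℝ) ^ (n - 1) := by
    have : (m : ℝ) ^ (n - 1) < (m : ℝ) ^ n := by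
      apply pow_lt_pow_right₀ (by exact_mod_cast hm1)
      omega
    linarith
  have hsum2 : ∑ x, (g x) ^ 2 = 0 := by
    have := hT2
    nlinarith [hpow]
  intro x
  have h1 : ∀ x ∈ (univ : Finset (Fin n → ZMod m)), (0:ℝ) ≤ (g x)^2 := fun x _ => sq_nonneg _
  have := (Finset.sum_eq_zero_iff_of_nonneg h1).mp hsum2 x (mem_univ x)
  exact pow_eq_zero_iff (by norm_num) |>.mp this
end van



lemma sum_count_mul {α β : Type*} [Fintype β] [DecidableEq β] (s : Finset α)
    (g : α → β) (f : β → ℝ) (c : ℕ)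
    (hc : ∀ b, (s.filter fun x => g x = b).card = c) :
    ∑ x ∈ s, f (g x) = (c : ℝ) * ∑ b, f b := by
  rw [← Finset.sum_fiberwise_of_maps_to (fun x _ => mem_univ (g x)) (fun x => f (g x)),
    Finset.mul_sum]
  refine Finset.sum_congr rfl fun b _ => ?_
  have h1 : ∀ x ∈ s.filter fun x => g x = b, f (g x) = f b := by
    intro x hx
    rw [(Finset.mem_filter.mp hx).2]
  rw [Finset.sum_congr rfl h1, Finset.sum_const, hc b, nsmul_eq_mul]

section key
variable (m n : ℕ) [hmp : Fact (Nat.Prime m)] [NeZero m]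

lemma key_identity (hn : 2 ≤ n) (P : (Fin n → ZMod m) → ℝ)
    (hPO : ∀ r : Fin n → ZMod m, 2 ≤ (univ.filter fun i => r i ≠ 0).card →
      ∀ k k' : ZMod m,
        ∑ x ∈ univ.filter (fun x : Fin n → ZMod m => ∑ i, r i * x i = k), P x =
        ∑ x ∈ univ.filter (fun x : Fin n → ZMod m => ∑ i, r i * x i = k'), P x) :
    ∀ x, P x = (∑ i, (∑ y ∈ univ.filter fun y : Fin n → ZMod m => y i = x i, P y))
        / (m : ℝ) ^ (n - 1) - ((n : ℝ) - 1) * (∑ y, P y) / (m : ℝ) ^ n := by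
  have hn1 : 1 ≤ n := by omega
  obtain ⟨e, he⟩ : ∃ e, n = e + 2 := ⟨n - 2, by omega⟩
  have he1 : n - 1 = e + 1 := by omega
  have he2 : n - 2 = e := by omega
  have hm0 : (m : ℝ) ≠ 0 := Nat.cast_ne_zero.mpr (NeZero.ne m)
  set SF : Fin n → ZMod m → ℝ := fun i l => ∑ y ∈ univ.filter fun y => y i = l, P y with hSF
  set Ptot : ℝ := ∑ y, P y with hPtot
  set G : (Fin n → ZMod m) → ℝ := fun x =>
    P x - (∑ i, SF i (x i)) / (m : ℝ) ^ (n - 1) + ((n : ℝ) - 1) * Ptot / (m : ℝ) ^ n with hG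
  have hSFtot : ∀ i : Fin n, ∑ l : ZMod m, SF i l = Ptot := by
    intro i
    rw [hSF, hPtot]
    exact Finset.sum_fiberwise_of_maps_to (fun x _ => mem_univ (x i)) P
  have hGzero : ∀ x, G x = 0 := by
    apply vanish m n hn
    intro r hr k
    set fib := univ.filter (fun x : Fin n → ZMod m => ∑ i, r i * x i = k) with hfib
    have hfibcard : fib.card = m ^ (n - 1) := count_dot m n hn1 r hr k
    have hdecomp : ∑ x ∈ fib, G x = (∑ x ∈ fib, P x)
        - (∑ i, ∑ x ∈ fib, SF i (x i)) / (m : ℝ) ^ (n - 1)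
        + (m : ℝ) ^ (n - 1) * (((n : ℝ) - 1) * Ptot / (m : ℝ) ^ n) := by
      rw [hG]
      rw [Finset.sum_add_distrib, Finset.sum_sub_distrib, Finset.sum_const, hfibcard,
        nsmul_eq_mul, ← Finset.sum_div, Finset.sum_comm]
      push_cast
      ring
    by_cases hc : 2 ≤ (univ.filter fun i => r i ≠ 0).card
    · -- genuine mask case
      have hP : (m : ℝ) * ∑ x ∈ fib, P x = Ptot := by
        have h1 : Ptot = ∑ k' : ZMod m,
            ∑ x ∈ univ.filter (fun x : Fin n → ZMod m => ∑ i, r i * x i = k'), P x := by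
          rw [hPtot,
            Finset.sum_fiberwise_of_maps_to (fun x _ => mem_univ (∑ i, r i * x i)) P]
        rw [h1, Finset.sum_congr rfl fun k' _ => hPO r hc k' k, Finset.sum_const,
          nsmul_eq_mul, Finset.card_univ, ZMod.card]
      have hF : ∀ i : Fin n, ∑ x ∈ fib, SF i (x i) = (m : ℝ) ^ e * Ptot := by
        intro i
        obtain ⟨a, ha, b, hb, hab⟩ := Finset.one_lt_card.mp hc
        simp only [mem_filter, mem_univ, true_and] at ha hb
        have hj : ∃ j, j ≠ i ∧ r j ≠ 0 := by
          by_cases hai : a = i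
          · exact ⟨b, fun hbi => hab (hbi ▸ hai ▸ rfl), hb⟩
          · exact ⟨a, hai, ha⟩
        rw [sum_count_mul fib (fun x => x i) (SF i) (m ^ e) ?_, hSFtot i]
        · push_cast; ring
        · intro l
          rw [hfib, Finset.filter_filter]
          have := count_pair m n hn i r hj k l
          rw [he2] at this
          simpa using this
      rw [hdecomp, Finset.sum_congr rfl fun i _ => hF i, Finset.sum_const, nsmul_eq_mul,
        Finset.card_univ, Fintype.card_fin]
      have hPfib : ∑ x ∈ fib, P x = Ptot / m := by
        field_simp at hP ⊢
        linarith [hP]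
      rw [hPfib, he1, he]
      push_cast
      field_simp
      ring
    · -- single-coordinate mask
      have hc1 : (univ.filter fun i => r i ≠ 0).card = 1 := by
        rcases Nat.lt_or_ge (univ.filter fun i => r i ≠ 0).card 1 with h0 | h1
        · exfalso
          rw [Nat.lt_one_iff, Finset.card_eq_zero, Finset.filter_eq_empty_iff] at h0
          apply hr
          funext i
          have := h0 (mem_univ i)
          push_neg at this
          exact this
        · omega
      obtain ⟨j, hj⟩ := Finset.card_eq_one.mp hc1
      have hrj : r j ≠ 0 := by
        have : j ∈ univ.filter fun i => r i ≠ 0 := hj ▸ Finset.mem_singleton_self j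
        exact (Finset.mem_filter.mp this).2
      have hri : ∀ i, i ≠ j → r i = 0 := by
        intro i hij
        by_contra hri
        have : i ∈ univ.filter fun i => r i ≠ 0 := Finset.mem_filter.mpr ⟨mem_univ i, hri⟩
        rw [hj, Finset.mem_singleton] at this
        exact hij this
      set c0 : ZMod m := (r j)⁻¹ * k with hc0
      have hfib2 : fib = univ.filter fun x : Fin n → ZMod m => x j = c0 := by
        rw [hfib]
        apply Finset.filter_congr
        intro x _
        have hsum : ∑ i, r i * x i = r j * x j :=
          Finset.sum_eq_single j (fun i _ hij => by rw [hri i hij, zero_mul])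
            (fun h => absurd (mem_univ j) h)
        rw [hsum, hc0]
        constructor
        · intro h'
          rw [← h', ← mul_assoc, inv_mul_cancel₀ hrj, one_mul]
        · intro h'
          rw [h', ← mul_assoc, mul_inv_cancel₀ hrj, one_mul]
      have hP : ∑ x ∈ fib, P x = SF j c0 := by rw [hfib2, hSF]
      have hFj : ∑ x ∈ fib, SF j (x j) = (m : ℝ) ^ (n - 1) * SF j c0 := by
        rw [hfib2]
        have h1 : ∀ x ∈ univ.filter fun x : Fin n → ZMod m => x j = c0,
            SF j (x j) = SF j c0 := by
          intro x hx
          rw [(Finset.mem_filter.mp hx).2]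
        rw [Finset.sum_congr rfl h1, Finset.sum_const, count_coord m n hn1 j c0,
          nsmul_eq_mul]
        push_cast; ring
      have hFi : ∀ i, i ≠ j → ∑ x ∈ fib, SF i (x i) = (m : ℝ) ^ e * Ptot := by
        intro i hij
        rw [hfib2]
        rw [sum_count_mul (univ.filter fun x : Fin n → ZMod m => x j = c0)
          (fun x => x i) (SF i) (m ^ e) ?_, hSFtot i]
        · push_cast; ring
        · intro l
          rw [Finset.filter_filter]
          have := count_coord2 m n hn i j (fun h => hij h.symm) c0 l
          rw [he2] at this
          simpa using this
      have hsplit : ∑ i, ∑ x ∈ fib, SF i (x i)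
          = (m : ℝ) ^ (n - 1) * SF j c0 + ((n : ℝ) - 1) * ((m : ℝ) ^ e * Ptot) := by
        rw [← Finset.sum_erase_add _ _ (mem_univ j), hFj]
        have h1 : ∀ i ∈ univ.erase j, ∑ x ∈ fib, SF i (x i) = (m : ℝ) ^ e * Ptot := by
          intro i hi
          exact hFi i (Finset.mem_erase.mp hi).1
        rw [Finset.sum_congr rfl h1, Finset.sum_const, Finset.card_erase_of_mem (mem_univ j),
          Finset.card_univ, Fintype.card_fin, nsmul_eq_mul]
        have : ((n - 1 : ℕ) : ℝ) = (n : ℝ) - 1 := by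
          rw [Nat.cast_sub hn1]; norm_num
        rw [this]; ring
      rw [hdecomp, hP, hsplit, he1, he]
      push_cast
      field_simp
      ring
  intro x
  have h2 := hGzero x
  rw [hG] at h2
  simp only at h2
  rw [hSF, hPtot] at h2
  linarith [h2]
end key


/-- **Convex single-digit decomposition of parity-oblivious classical encodings.** Let `m` be
prime, `n ≥ 2`, `𝕄` a finite message set, and `p` a parity-oblivious classical encoding.
Then `p` is a convex mixture of an input-independent channel `q₀` and single-digit channels
`qᵢ(·|xᵢ)`. -/
theorem parity_oblivious_encoding_decomposition
    (m : ℕ) (hm : Nat.Prime m) [NeZero m] (n : ℕ) (hn : 2 ≤ n)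
    (𝕄 : Type) [Fintype 𝕄]
    (p : 𝕄 → (Fin n → ZMod m) → ℝ)
    (hp_nonneg : ∀ M x, 0 ≤ p M x)
    (hp_sum : ∀ x, ∑ M, p M x = 1)
    (hPO : ∀ r : Fin n → ZMod m,
      2 ≤ (Finset.univ.filter fun i => r i ≠ 0).card →
      ∀ M, ∀ k k' : ZMod m,
        ∑ x ∈ Finset.univ.filter (fun x : Fin n → ZMod m => ∑ i, r i * x i = k), p M x =
        ∑ x ∈ Finset.univ.filter (fun x : Fin n → ZMod m => ∑ i, r i * x i = k'), p M x) :
    ∃ (p₀ : ℝ) (K : Fin n → ℝ) (q₀ : 𝕄 → ℝ) (q : Fin n → ZMod m → 𝕄 → ℝ),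
      0 ≤ p₀ ∧ (∀ i, 0 ≤ K i) ∧ p₀ + ∑ i, K i = 1 ∧
      (∀ M, 0 ≤ q₀ M) ∧ (∑ M, q₀ M = 1) ∧
      (∀ i, 0 < K i → ∀ l : ZMod m, (∀ M, 0 ≤ q i l M) ∧ ∑ M, q i l M = 1) ∧
      (∀ M x, p M x = p₀ * q₀ M + ∑ i, K i * q i (x i) M) := by
  haveI : Fact (Nat.Prime m) := ⟨hm⟩
  have hn1 : 1 ≤ n := by omega
  have hm0 : (0 : ℝ) < (m : ℝ) := by
    have := Nat.pos_of_ne_zero (NeZero.ne m); exact_mod_cast this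
  have hmpow1 : (0 : ℝ) < (m : ℝ) ^ (n - 1) := pow_pos hm0 _
  have hmpown : (0 : ℝ) < (m : ℝ) ^ n := pow_pos hm0 _
  -- basic objects
  set A : 𝕄 → ℝ := fun M => (∑ x, p M x) / (m : ℝ) ^ n with hA
  set Fav : Fin n → ZMod m → 𝕄 → ℝ := fun i l M =>
    (∑ y ∈ univ.filter fun y : Fin n → ZMod m => y i = l, p M y) / (m : ℝ) ^ (n - 1) with hFav
  -- key identity
  have hkey : ∀ M x, p M x = ∑ i, Fav i (x i) M - ((n : ℝ) - 1) * A M := by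
    intro M x
    have := key_identity m n hn (p M) (fun r hr k k' => hPO r hr M k k') x
    rw [this, hFav, hA]
    simp only
    rw [← Finset.sum_div]
    ring
  -- sums over M
  have hFavsum : ∀ i l, ∑ M, Fav i l M = 1 := by
    intro i l
    rw [hFav]
    simp only
    rw [← Finset.sum_div]
    rw [Finset.sum_comm]
    have h1 : ∀ y ∈ univ.filter fun y : Fin n → ZMod m => y i = l, ∑ M, p M y = 1 :=
      fun y _ => hp_sum y
    rw [Finset.sum_congr rfl h1, Finset.sum_const, count_coord m n hn1 i l, nsmul_eq_mul,
      mul_one]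
    push_cast
    rw [div_self (ne_of_gt hmpow1)]
  have hAsum : ∑ M, A M = 1 := by
    rw [hA]
    simp only
    rw [← Finset.sum_div, Finset.sum_comm]
    have h1 : ∀ y ∈ (univ : Finset (Fin n → ZMod m)), ∑ M, p M y = 1 := fun y _ => hp_sum y
    rw [Finset.sum_congr rfl h1, Finset.sum_const, Finset.card_univ, nsmul_eq_mul, mul_one]
    rw [show Fintype.card (Fin n → ZMod m) = m ^ n by simp [Fintype.card_fun, ZMod.card]]
    push_cast
    rw [div_self (ne_of_gt hmpown)]
  -- minima
  have hzne : (univ : Finset (ZMod m)).Nonempty := ⟨0, mem_univ 0⟩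
  set d : Fin n → 𝕄 → ℝ := fun i M => univ.inf' hzne (fun l => Fav i l M - A M) with hd
  set g : Fin n → ZMod m → 𝕄 → ℝ := fun i l M => Fav i l M - A M - d i M with hg
  have hg_nonneg : ∀ i l M, 0 ≤ g i l M := by
    intro i l M
    have := Finset.inf'_le (fun l => Fav i l M - A M) (mem_univ l)
    rw [hg]
    simp only
    rw [hd]
    linarith [this]
  set a : 𝕄 → ℝ := fun M => A M + ∑ i, d i M with ha
  have ha_nonneg : ∀ M, 0 ≤ a M := by
    intro M
    have hx : ∀ i : Fin n, ∃ l, d i M = Fav i l M - A M := by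
      intro i
      obtain ⟨l, _, hl⟩ := Finset.exists_mem_eq_inf' hzne (fun l => Fav i l M - A M)
      exact ⟨l, hl⟩
    choose xs hxs using hx
    have h1 := hkey M xs
    have h2 : ∑ i, Fav i (xs i) M = ∑ i, (d i M + A M) := by
      refine Finset.sum_congr rfl fun i _ => ?_
      rw [hxs i]; ring
    rw [h2, Finset.sum_add_distrib, Finset.sum_const, Finset.card_univ, Fintype.card_fin,
      nsmul_eq_mul] at h1
    have h3 := hp_nonneg M xs
    rw [ha]
    simp only
    nlinarith [h1, h3]
  set K : Fin n → ℝ := fun i => -∑ M, d i M with hK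
  have hKg : ∀ i l, ∑ M, g i l M = K i := by
    intro i l
    rw [hg, hK]
    simp only
    rw [Finset.sum_sub_distrib, Finset.sum_sub_distrib, hFavsum i l, hAsum]
    ring
  have hK_nonneg : ∀ i, 0 ≤ K i := by
    intro i
    rw [← hKg i 0]
    exact Finset.sum_nonneg fun M _ => hg_nonneg i 0 M
  set p₀ : ℝ := ∑ M, a M with hp₀
  have hp₀_nonneg : 0 ≤ p₀ := Finset.sum_nonneg fun M _ => ha_nonneg M
  have hp₀K : p₀ + ∑ i, K i = 1 := by
    rw [hp₀, ha, hK]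
    simp only
    rw [Finset.sum_add_distrib, hAsum, Finset.sum_comm]
    simp
  -- base decomposition
  have hbase : ∀ M x, p M x = a M + ∑ i, g i (x i) M := by
    intro M x
    have h1 := hkey M x
    have h2 : ∑ i, Fav i (x i) M = ∑ i, (g i (x i) M + d i M + A M) := by
      refine Finset.sum_congr rfl fun i _ => ?_
      rw [hg]; ring
    rw [h2] at h1
    rw [Finset.sum_add_distrib, Finset.sum_add_distrib, Finset.sum_const, Finset.card_univ,
      Fintype.card_fin, nsmul_eq_mul] at h1
    rw [ha, h1]
    simp only
    ring
  -- message set nonempty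
  have hcard : (0 : ℝ) < (Fintype.card 𝕄 : ℝ) := by
    have h1 := hp_sum 0
    rcases Nat.eq_zero_or_pos (Fintype.card 𝕄) with h | h
    · exfalso
      rw [Fintype.card_eq_zero_iff] at h
      rw [Finset.univ_eq_empty, Finset.sum_empty] at h1
      norm_num at h1
    · exact_mod_cast h
  -- define conditional distributions
  refine ⟨p₀, K, fun M => if p₀ = 0 then (Fintype.card 𝕄 : ℝ)⁻¹ else a M / p₀,
    fun i l M => if K i = 0 then (Fintype.card 𝕄 : ℝ)⁻¹ else g i l M / K i,
    hp₀_nonneg, hK_nonneg, hp₀K, ?_, ?_, ?_, ?_⟩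
  · intro M
    dsimp only
    by_cases h : p₀ = 0
    · rw [if_pos h]; positivity
    · rw [if_neg h]
      exact div_nonneg (ha_nonneg M) hp₀_nonneg
  · by_cases h : p₀ = 0
    · simp only [if_pos h]
      rw [Finset.sum_const, Finset.card_univ, nsmul_eq_mul]
      field_simp
    · simp only [if_neg h]
      rw [← Finset.sum_div, ← hp₀, div_self h]
  · intro i hKi l
    have h : K i ≠ 0 := ne_of_gt hKi
    constructor
    · intro M
      dsimp only
      rw [if_neg h]
      exact div_nonneg (hg_nonneg i l M) (le_of_lt hKi)
    · simp only [if_neg h]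
      rw [← Finset.sum_div, hKg i l, div_self h]
  · intro M x
    rw [hbase M x]
    have h1 : p₀ * (if p₀ = 0 then (Fintype.card 𝕄 : ℝ)⁻¹ else a M / p₀) = a M := by
      by_cases h : p₀ = 0
      · rw [if_pos h, h, zero_mul]
        have : a M = 0 := by
          have := (Finset.sum_eq_zero_iff_of_nonneg
            (fun M _ => ha_nonneg M)).mp (hp₀ ▸ h.symm ▸ h) M (mem_univ M)
          exact this
        rw [this]
      · rw [if_neg h]
        field_simp
    have h2 : ∀ i, K i * (if K i = 0 then (Fintype.card 𝕄 : ℝ)⁻¹ else g i (x i) M / K i)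
        = g i (x i) M := by
      intro i
      by_cases h : K i = 0
      · rw [if_pos h, h, zero_mul]
        have : g i (x i) M = 0 := by
          have h3 : ∑ M', g i (x i) M' = 0 := by rw [hKg i (x i)]; exact h
          exact (Finset.sum_eq_zero_iff_of_nonneg
            (fun M' _ => hg_nonneg i (x i) M')).mp h3 M (mem_univ M)
        rw [this]
      · rw [if_neg h]
        field_simp
    rw [h1, Finset.sum_congr rfl fun i _ => h2 i]
end

section
/- Let m be a prime and let n : (ZMod m) × (ZMod m) → ℝ³ be a function such that for every pair (r_1, r_2) ∈ (ZMod m)² with r_1 ≠ 0 and r_2 ≠ 0 and all k, k′ ∈ ZMod m, Σ_{(x_1,x_2) : r_1 x_1 + r_2 x_2 = k} n(x_1,x_2) = Σ_{(x_1,x_2) : r_1 x_1 + r_2 x_2 = k′} n(x_1,x_2). Then there exist functions a, b : ZMod m → ℝ³ such that n(x_1,x_2) = a(x_1) + b(x_2) for all x_1, x_2 ∈ ZMod m. -/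
open Finset

/-- **Additive Bloch structure lemma.** Let `m` be prime and `nv : (ZMod m)² → ℝ³` such that
for every mask `(r₁, r₂)` with both components nonzero, the sums of `nv` over the parity
classes `{(x₁,x₂) : r₁x₁ + r₂x₂ = k}` agree for all `k`. Then `nv` decomposes additively into
single-digit contributions. -/
theorem additive_bloch_structure
    (m : ℕ) (hm : Nat.Prime m) [NeZero m]
    (nv : ZMod m → ZMod m → EuclideanSpace ℝ (Fin 3))
    (hPO : ∀ r₁ r₂ : ZMod m, r₁ ≠ 0 → r₂ ≠ 0 → ∀ k k' : ZMod m,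
      ∑ x ∈ Finset.univ.filter (fun x : ZMod m × ZMod m => r₁ * x.1 + r₂ * x.2 = k),
        nv x.1 x.2 =
      ∑ x ∈ Finset.univ.filter (fun x : ZMod m × ZMod m => r₁ * x.1 + r₂ * x.2 = k'),
        nv x.1 x.2) :
    ∃ a b : ZMod m → EuclideanSpace ℝ (Fin 3),
      ∀ x₁ x₂ : ZMod m, nv x₁ x₂ = a x₁ + b x₂ := by
  haveI := Fact.mk hm
  have hmR : (m : ℝ) ≠ 0 := Nat.cast_ne_zero.mpr (NeZero.ne m)
  set S : EuclideanSpace ℝ (Fin 3) := ∑ x : ZMod m, ∑ y : ZMod m, nv x y with hSdef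
  set R : ZMod m → EuclideanSpace ℝ (Fin 3) := fun u => ∑ y : ZMod m, nv u y with hRdef
  set C : ZMod m → EuclideanSpace ℝ (Fin 3) := fun v => ∑ x : ZMod m, nv x v with hCdef
  have key : ∀ u v : ZMod m, (m : ℝ) • nv u v = R u + C v - (m : ℝ)⁻¹ • S := by
    intro u v
    -- Step 1: each parity class of a mask (1, r₂), r₂ ≠ 0, sums to S/m.
    have hclass : ∀ r₂ : ZMod m, r₂ ≠ 0 →
        (∑ x ∈ Finset.univ.filter
            (fun x : ZMod m × ZMod m => 1 * x.1 + r₂ * x.2 = u + r₂ * v), nv x.1 x.2)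
          = (m : ℝ)⁻¹ • S := by
      intro r₂ hr₂
      have hall := hPO 1 r₂ one_ne_zero hr₂
      have hsum : ∑ k : ZMod m, (∑ x ∈ Finset.univ.filter
            (fun x : ZMod m × ZMod m => 1 * x.1 + r₂ * x.2 = k), nv x.1 x.2) = S := by
        rw [Finset.sum_fiberwise_of_maps_to (fun x _ => Finset.mem_univ _), hSdef]
        exact Fintype.sum_prod_type _
      have hconst : ∑ k : ZMod m, (∑ x ∈ Finset.univ.filter
            (fun x : ZMod m × ZMod m => 1 * x.1 + r₂ * x.2 = k), nv x.1 x.2)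
          = (m : ℝ) • (∑ x ∈ Finset.univ.filter
            (fun x : ZMod m × ZMod m => 1 * x.1 + r₂ * x.2 = u + r₂ * v), nv x.1 x.2) := by
        rw [Finset.sum_congr rfl (fun k _ => hall k (u + r₂ * v)), Finset.sum_const,
          Finset.card_univ, ZMod.card, ← Nat.cast_smul_eq_nsmul ℝ]
      rw [eq_inv_smul_iff₀ hmR, ← hconst, hsum]
    -- Step 2: reindex each such class as a sum over x₂.
    have hre : ∀ r₂ : ZMod m, r₂ ≠ 0 →
        (∑ x ∈ Finset.univ.filter
            (fun x : ZMod m × ZMod m => 1 * x.1 + r₂ * x.2 = u + r₂ * v), nv x.1 x.2)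
          = ∑ x₂ : ZMod m, nv (u + r₂ * (v - x₂)) x₂ := by
      intro r₂ hr₂
      refine (Finset.sum_nbij' (i := fun x : ZMod m × ZMod m => x.2)
        (j := fun x₂ : ZMod m => (u + r₂ * (v - x₂), x₂)) ?_ ?_ ?_ ?_ ?_).symm.symm
      · intro x hx; exact Finset.mem_univ _
      · intro x₂ _; simp only [Finset.mem_filter, Finset.mem_univ, true_and]; ring
      · intro x hx
        simp only [Finset.mem_filter, Finset.mem_univ, true_and] at hx
        have : x.1 = u + r₂ * (v - x.2) := by linear_combination hx
        exact Prod.ext this.symm rfl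
      · intro x₂ _; rfl
      · intro x hx
        simp only [Finset.mem_filter, Finset.mem_univ, true_and] at hx
        have : x.1 = u + r₂ * (v - x.2) := by linear_combination hx
        rw [this]
    -- Total over all r₂ ≠ 0.
    have hT : ∑ r₂ ∈ Finset.univ.erase (0 : ZMod m), ∑ x₂ : ZMod m, nv (u + r₂ * (v - x₂)) x₂
        = ((m : ℝ) - 1) • ((m : ℝ)⁻¹ • S) := by
      rw [Finset.sum_congr rfl (fun r₂ hr₂ => by
        rw [← hre r₂ (Finset.mem_erase.mp hr₂).1, hclass r₂ (Finset.mem_erase.mp hr₂).1])]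
      rw [Finset.sum_const, Finset.card_erase_of_mem (Finset.mem_univ _), Finset.card_univ,
        ZMod.card, ← Nat.cast_smul_eq_nsmul ℝ]
      congr 1
      have h1 : 1 ≤ m := hm.one_lt.le
      push_cast [Nat.cast_sub h1]
      ring
    -- Swap and evaluate the double sum.
    have hswap : ∑ r₂ ∈ Finset.univ.erase (0 : ZMod m), ∑ x₂ : ZMod m, nv (u + r₂ * (v - x₂)) x₂
        = ∑ x₂ : ZMod m, ∑ r₂ ∈ Finset.univ.erase (0 : ZMod m), nv (u + r₂ * (v - x₂)) x₂ :=
      Finset.sum_comm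
    -- inner sum at x₂ = v
    have hv : ∑ r₂ ∈ Finset.univ.erase (0 : ZMod m), nv (u + r₂ * (v - v)) v
        = ((m : ℝ) - 1) • nv u v := by
      have : ∀ r₂ ∈ Finset.univ.erase (0 : ZMod m), nv (u + r₂ * (v - v)) v = nv u v := by
        intro r₂ _; rw [sub_self, mul_zero, add_zero]
      rw [Finset.sum_congr rfl this, Finset.sum_const,
        Finset.card_erase_of_mem (Finset.mem_univ _), Finset.card_univ, ZMod.card,
        ← Nat.cast_smul_eq_nsmul ℝ]
      congr 1
      push_cast [Nat.cast_sub hm.one_lt.le]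
      ring
    -- inner sum at x₂ ≠ v
    have hne : ∀ x₂ : ZMod m, x₂ ≠ v →
        ∑ r₂ ∈ Finset.univ.erase (0 : ZMod m), nv (u + r₂ * (v - x₂)) x₂
          = ∑ x₁ ∈ Finset.univ.erase u, nv x₁ x₂ := by
      intro x₂ hx₂
      have hvx : v - x₂ ≠ 0 := sub_ne_zero.mpr (Ne.symm hx₂)
      refine Finset.sum_nbij' (i := fun r₂ => u + r₂ * (v - x₂))
        (j := fun x₁ => (x₁ - u) / (v - x₂)) ?_ ?_ ?_ ?_ ?_
      · intro r₂ hr₂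
        rw [Finset.mem_erase] at hr₂ ⊢
        refine ⟨?_, Finset.mem_univ _⟩
        intro h
        exact hr₂.1 (by
          have : r₂ * (v - x₂) = 0 := by linear_combination h
          exact (mul_eq_zero.mp this).resolve_right hvx)
      · intro x₁ hx₁
        rw [Finset.mem_erase] at hx₁ ⊢
        refine ⟨?_, Finset.mem_univ _⟩
        intro h
        exact hx₁.1 (by
          have := (div_eq_zero_iff.mp h).resolve_right hvx
          linear_combination this)
      · intro r₂ _
        field_simp
        ring
      · intro x₁ _
        field_simp
        ring
      · intro r₂ _; rfl
    -- put everything together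
    have hsplit : ∑ x₂ : ZMod m, ∑ r₂ ∈ Finset.univ.erase (0 : ZMod m),
          nv (u + r₂ * (v - x₂)) x₂
        = ((m : ℝ) - 1) • nv u v + ∑ x₂ ∈ Finset.univ.erase v,
            ∑ x₁ ∈ Finset.univ.erase u, nv x₁ x₂ := by
      rw [← Finset.add_sum_erase _ _ (Finset.mem_univ v), hv]
      congr 1
      exact Finset.sum_congr rfl (fun x₂ hx₂ => hne x₂ (Finset.mem_erase.mp hx₂).1)
    have hrest : ∑ x₂ ∈ Finset.univ.erase v, ∑ x₁ ∈ Finset.univ.erase u, nv x₁ x₂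
        = S - C v - R u + nv u v := by
      have h1 : ∀ x₂ : ZMod m, ∑ x₁ ∈ Finset.univ.erase u, nv x₁ x₂
          = (∑ x₁ : ZMod m, nv x₁ x₂) - nv u x₂ := by
        intro x₂
        rw [eq_sub_iff_add_eq, add_comm]
        exact Finset.add_sum_erase univ (fun x₁ => nv x₁ x₂) (Finset.mem_univ u)
      rw [Finset.sum_congr rfl (fun x₂ _ => h1 x₂), Finset.sum_sub_distrib]
      have h2 : ∑ x₂ ∈ Finset.univ.erase v, ∑ x₁ : ZMod m, nv x₁ x₂ = S - C v := by
        have hS' : S = ∑ x₂ : ZMod m, ∑ x₁ : ZMod m, nv x₁ x₂ := by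
          rw [hSdef]; exact Finset.sum_comm
        rw [eq_sub_iff_add_eq, add_comm, hS']
        exact Finset.add_sum_erase univ (fun x₂ => ∑ x₁ : ZMod m, nv x₁ x₂) (Finset.mem_univ v)
      have h3 : ∑ x₂ ∈ Finset.univ.erase v, nv u x₂ = R u - nv u v := by
        rw [eq_sub_iff_add_eq, add_comm]
        exact Finset.add_sum_erase univ (fun x₂ => nv u x₂) (Finset.mem_univ v)
      rw [h2, h3]
      abel
    have main : ((m : ℝ) - 1) • ((m : ℝ)⁻¹ • S)
        = ((m : ℝ) - 1) • nv u v + (S - C v - R u + nv u v) := by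
      rw [← hT, hswap, hsplit, hrest]
    have hinv : (m : ℝ) • ((m : ℝ)⁻¹ • S) = S := by
      rw [smul_smul, mul_inv_cancel₀ hmR, one_smul]
    have : (m : ℝ) • nv u v = R u + C v - (m : ℝ)⁻¹ • S := by
      have expand := main
      rw [sub_smul, sub_smul, one_smul, one_smul, hinv] at expand
      have := expand
      -- S - m⁻¹ S = m nv - nv + S - C - R + nv
      linear_combination (norm := module) -this
    exact this
  refine ⟨fun u => (m : ℝ)⁻¹ • R u, fun v => (m : ℝ)⁻¹ • (C v - (m : ℝ)⁻¹ • S), fun u v => ?_⟩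
  have h := key u v
  have hx : nv u v = (m : ℝ)⁻¹ • ((m : ℝ) • nv u v) := by
    rw [smul_smul, inv_mul_cancel₀ hmR, one_smul]
  show nv u v = (m : ℝ)⁻¹ • R u + (m : ℝ)⁻¹ • (C v - (m : ℝ)⁻¹ • S)
  rw [hx, h]
  module
end

section
/- Define f : ZMod 3 → ℝ by f(0) = −1, f(1) = 1, f(2) = 0, and set ρ_{x_1 x_2} = (1/2)(I + (f(x_2)/√2)·σ_x + (f(x_1)/√2)·σ_z) for (x_1,x_2) ∈ (ZMod 3)², together with the measurements M_{0|1} = (1/2)(I + σ_z), M_{1|1} = (1/2)(I − σ_z), M_{2|1} = 0, M_{0|2} = (1/2)(I + σ_x), M_{1|2} = (1/2)(I − σ_x), M_{2|2} = 0. Then each ρ_{x_1 x_2} is positive semidefinite with trace 1, each {M_{b|y}} is a POVM, the full parity-obliviousness constraints hold, and the POREC success probability of this strategy equals 2/3 + 1/(3·√2). -/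
open Finset
open scoped ComplexOrder

noncomputable section

/-- Pauli matrix `σ_x`. -/
def sigmaX : Matrix (Fin 2) (Fin 2) ℂ := !![0, 1; 1, 0]

/-- Pauli matrix `σ_z`. -/
def sigmaZ : Matrix (Fin 2) (Fin 2) ℂ := !![1, 0; 0, -1]

/-- The sign function `f(0) = -1`, `f(1) = 1`, `f(2) = 0` on `ZMod 3`. -/
def fSign : ZMod 3 → ℝ := fun k => if k = 1 then 1 else if k = 0 then -1 else 0

/-- The optimal qubit states for the `(2,3)` POREC. -/
def porecState (x₁ x₂ : ZMod 3) : Matrix (Fin 2) (Fin 2) ℂ :=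
  (1 / 2 : ℝ) • ((1 : Matrix (Fin 2) (Fin 2) ℂ)
    + (fSign x₂ / Real.sqrt 2) • sigmaX + (fSign x₁ / Real.sqrt 2) • sigmaZ)

/-- The optimal measurement for `y = 1`: `σ_z` projectors, third outcome null. -/
def porecMeas₁ (b : ZMod 3) : Matrix (Fin 2) (Fin 2) ℂ :=
  if b = 0 then (1 / 2 : ℝ) • ((1 : Matrix (Fin 2) (Fin 2) ℂ) + sigmaZ)
  else if b = 1 then (1 / 2 : ℝ) • ((1 : Matrix (Fin 2) (Fin 2) ℂ) - sigmaZ)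
  else 0

/-- The optimal measurement for `y = 2`: `σ_x` projectors, third outcome null. -/
def porecMeas₂ (b : ZMod 3) : Matrix (Fin 2) (Fin 2) ℂ :=
  if b = 0 then (1 / 2 : ℝ) • ((1 : Matrix (Fin 2) (Fin 2) ℂ) + sigmaX)
  else if b = 1 then (1 / 2 : ℝ) • ((1 : Matrix (Fin 2) (Fin 2) ℂ) - sigmaX)
  else 0

lemma psd2 (a b c : ℝ) (ha : 0 ≤ a) (hb : 0 ≤ b) (hc : c^2 ≤ a*b) :
    (!![(a:ℂ), c; c, b]).PosSemidef := by
  refine Matrix.PosSemidef.of_dotProduct_mulVec_nonneg ?_ ?_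
  · ext i j; fin_cases i <;> fin_cases j <;>
      simp [Matrix.conjTranspose_apply]
  · intro x
    have key : dotProduct (star x) ((!![(a:ℂ), c; c, b]).mulVec x) =
        ((a * Complex.normSq (x 0) + b * Complex.normSq (x 1)
          + 2 * c * ((star (x 0) * x 1).re) : ℝ) : ℂ) := by
      simp [dotProduct, Matrix.mulVec, Fin.sum_univ_two, Complex.normSq,
        Complex.ext_iff, Complex.mul_re, Complex.mul_im]
      constructor <;> ring
    rw [key, Complex.zero_le_real]
    set p := Complex.normSq (x 0) with hp
    set q := Complex.normSq (x 1) with hq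
    set r := ((star (x 0) * x 1).re) with hr
    have hp0 : 0 ≤ p := Complex.normSq_nonneg _
    have hq0 : 0 ≤ q := Complex.normSq_nonneg _
    have hrr : r^2 ≤ p * q := by
      have h1 : Complex.normSq (star (x 0) * x 1) = p * q := by
        simp [Complex.normSq_mul, Complex.normSq_conj, hp, hq, Complex.star_def]
      nlinarith [sq_nonneg ((star (x 0) * x 1).im), Complex.normSq_apply (star (x 0) * x 1)]
    nlinarith [sq_nonneg (a*p - b*q), sq_nonneg (a*p + b*q), mul_nonneg hp0 hq0,
      mul_nonneg ha hp0, mul_nonneg hb hq0, sq_nonneg (a*p + b*q + 2*c*r), sq_nonneg r,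
      mul_le_mul_of_nonneg_left hrr (mul_nonneg ha hb), sq_nonneg (c*r)]

lemma zmod3_sum {M : Type*} [AddCommMonoid M] (g : ZMod 3 → M) :
    ∑ b : ZMod 3, g b = g 0 + g 1 + g 2 := by
  rw [show (Finset.univ : Finset (ZMod 3)) = {0,1,2} from by decide]
  rw [Finset.sum_insert (by decide), Finset.sum_insert (by decide), Finset.sum_singleton, add_assoc]

@[simp] lemma fSign_zero : fSign 0 = -1 := by rw [fSign]; rw [if_neg (by decide), if_pos rfl]
@[simp] lemma fSign_one : fSign 1 = 1 := by rw [fSign]; rw [if_pos rfl]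
@[simp] lemma fSign_two : fSign 2 = 0 := by rw [fSign]; rw [if_neg (by decide), if_neg (by decide)]

lemma fSign_sq (k : ZMod 3) : (fSign k)^2 ≤ 1 := by
  rw [fSign]; split_ifs <;> norm_num

lemma state_entries (x₁ x₂ : ZMod 3) : porecState x₁ x₂ =
    !![((((1 + fSign x₁ / Real.sqrt 2)/2 : ℝ)):ℂ), (((fSign x₂ / Real.sqrt 2 / 2 : ℝ)):ℂ);
       (((fSign x₂ / Real.sqrt 2 / 2 : ℝ)):ℂ), ((((1 - fSign x₁ / Real.sqrt 2)/2 : ℝ)):ℂ)] := by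
  ext i j
  fin_cases i <;> fin_cases j <;>
    simp [porecState, sigmaX, sigmaZ, Matrix.add_apply, Matrix.smul_apply, Matrix.one_apply,
      Complex.real_smul] <;> push_cast <;> ring

lemma state_psd (x₁ x₂ : ZMod 3) : (porecState x₁ x₂).PosSemidef := by
  rw [state_entries]
  have hs0 : (0:ℝ) < Real.sqrt 2 := Real.sqrt_pos.mpr (by norm_num)
  have hs2 : Real.sqrt 2 ^ 2 = 2 := Real.sq_sqrt (by norm_num)
  have hs1 : (1:ℝ) ≤ Real.sqrt 2 := by nlinarith
  have h1 := fSign_sq x₁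
  have h2 := fSign_sq x₂
  apply psd2
  · rw [le_div_iff₀ (by norm_num), div_eq_mul_inv]
    have hi : Real.sqrt 2 * (Real.sqrt 2)⁻¹ = 1 := mul_inv_cancel₀ (ne_of_gt hs0)
    have hi1 : (Real.sqrt 2)⁻¹ ≤ 1 := by
      rw [inv_le_one_iff₀]; right; exact hs1
    have hi0 : (0:ℝ) < (Real.sqrt 2)⁻¹ := by positivity
    nlinarith [sq_nonneg (fSign x₁ + 1), sq_nonneg (fSign x₁ - 1)]
  · rw [le_div_iff₀ (by norm_num), div_eq_mul_inv]
    have hi1 : (Real.sqrt 2)⁻¹ ≤ 1 := by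
      rw [inv_le_one_iff₀]; right; exact hs1
    have hi0 : (0:ℝ) < (Real.sqrt 2)⁻¹ := by positivity
    nlinarith [sq_nonneg (fSign x₁ + 1), sq_nonneg (fSign x₁ - 1)]
  · have hu : (fSign x₁ / Real.sqrt 2)^2 ≤ 1/2 := by
      rw [div_pow, hs2]; linarith
    have hv : (fSign x₂ / Real.sqrt 2)^2 ≤ 1/2 := by
      rw [div_pow, hs2]; linarith
    nlinarith [hu, hv]


lemma state_trace (x₁ x₂ : ZMod 3) : (porecState x₁ x₂).trace = 1 := by
  rw [state_entries, Matrix.trace_fin_two]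
  have : ((1 + fSign x₁ / Real.sqrt 2)/2 : ℝ) + ((1 - fSign x₁ / Real.sqrt 2)/2 : ℝ) = 1 := by ring
  show (((1 + fSign x₁ / Real.sqrt 2)/2 : ℝ):ℂ) + (((1 - fSign x₁ / Real.sqrt 2)/2 : ℝ):ℂ) = 1
  exact_mod_cast this

lemma meas₁_psd (b : ZMod 3) : (porecMeas₁ b).PosSemidef := by
  fin_cases b
  · show (porecMeas₁ 0).PosSemidef
    have h : porecMeas₁ 0 = !![((1:ℝ):ℂ), ((0:ℝ):ℂ); ((0:ℝ):ℂ), ((0:ℝ):ℂ)] := by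
      rw [porecMeas₁, if_pos rfl]
      ext i j; fin_cases i <;> fin_cases j <;>
        simp [sigmaZ, Matrix.one_apply] <;> norm_num
    rw [h]; exact psd2 1 0 0 (by norm_num) le_rfl (by norm_num)
  · show (porecMeas₁ 1).PosSemidef
    have h : porecMeas₁ 1 = !![((0:ℝ):ℂ), ((0:ℝ):ℂ); ((0:ℝ):ℂ), ((1:ℝ):ℂ)] := by
      rw [porecMeas₁, if_neg (by decide), if_pos rfl]
      ext i j; fin_cases i <;> fin_cases j <;>
        simp [sigmaZ, Matrix.one_apply] <;> norm_num
    rw [h]; exact psd2 0 1 0 le_rfl (by norm_num) (by norm_num)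
  · show (porecMeas₁ 2).PosSemidef
    have h : porecMeas₁ 2 = 0 := by rw [porecMeas₁, if_neg (by decide), if_neg (by decide)]
    rw [h]; exact Matrix.PosSemidef.zero

lemma meas₂_psd (b : ZMod 3) : (porecMeas₂ b).PosSemidef := by
  fin_cases b
  · show (porecMeas₂ 0).PosSemidef
    have h : porecMeas₂ 0 = !![((1/2:ℝ):ℂ), ((1/2:ℝ):ℂ); ((1/2:ℝ):ℂ), ((1/2:ℝ):ℂ)] := by
      rw [porecMeas₂, if_pos rfl]
      ext i j; fin_cases i <;> fin_cases j <;>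
        simp [sigmaX, Matrix.one_apply] <;> norm_num
    rw [h]; exact psd2 (1/2) (1/2) (1/2) (by norm_num) (by norm_num) (by norm_num)
  · show (porecMeas₂ 1).PosSemidef
    have h : porecMeas₂ 1 = !![((1/2:ℝ):ℂ), ((-(1/2):ℝ):ℂ); ((-(1/2):ℝ):ℂ), ((1/2:ℝ):ℂ)] := by
      rw [porecMeas₂, if_neg (by decide), if_pos rfl]
      ext i j; fin_cases i <;> fin_cases j <;>
        simp [sigmaX, Matrix.one_apply] <;> norm_num
    rw [h]; exact psd2 (1/2) (1/2) (-(1/2)) (by norm_num) (by norm_num) (by norm_num)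
  · show (porecMeas₂ 2).PosSemidef
    have h : porecMeas₂ 2 = 0 := by rw [porecMeas₂, if_neg (by decide), if_neg (by decide)]
    rw [h]; exact Matrix.PosSemidef.zero

lemma meas₁_sum : ∑ b : ZMod 3, porecMeas₁ b = 1 := by
  rw [zmod3_sum]
  rw [show porecMeas₁ 0 = (1 / 2 : ℝ) • ((1 : Matrix (Fin 2) (Fin 2) ℂ) + sigmaZ) from
    by rw [porecMeas₁, if_pos rfl]]
  rw [show porecMeas₁ 1 = (1 / 2 : ℝ) • ((1 : Matrix (Fin 2) (Fin 2) ℂ) - sigmaZ) from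
    by rw [porecMeas₁, if_neg (by decide), if_pos rfl]]
  rw [show porecMeas₁ 2 = 0 from by rw [porecMeas₁, if_neg (by decide), if_neg (by decide)]]
  ext i j; fin_cases i <;> fin_cases j <;>
    simp [sigmaZ, Matrix.one_apply] <;> norm_num

lemma meas₂_sum : ∑ b : ZMod 3, porecMeas₂ b = 1 := by
  rw [zmod3_sum]
  rw [show porecMeas₂ 0 = (1 / 2 : ℝ) • ((1 : Matrix (Fin 2) (Fin 2) ℂ) + sigmaX) from
    by rw [porecMeas₂, if_pos rfl]]
  rw [show porecMeas₂ 1 = (1 / 2 : ℝ) • ((1 : Matrix (Fin 2) (Fin 2) ℂ) - sigmaX) from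
    by rw [porecMeas₂, if_neg (by decide), if_pos rfl]]
  rw [show porecMeas₂ 2 = 0 from by rw [porecMeas₂, if_neg (by decide), if_neg (by decide)]]
  ext i j; fin_cases i <;> fin_cases j <;>
    simp [sigmaX, Matrix.one_apply] <;> norm_num

lemma parity_sum₁ (k : ZMod 3) :
    ∑ x ∈ Finset.univ.filter (fun x : ZMod 3 × ZMod 3 => x.1 + x.2 = k),
      porecState x.1 x.2 = (3/2 : ℝ) • (1 : Matrix (Fin 2) (Fin 2) ℂ) := by
  have key : ∀ a b c d e f : ZMod 3, fSign a + fSign c + fSign e = 0 →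
      fSign b + fSign d + fSign f = 0 →
      porecState a b + porecState c d + porecState e f
        = (3/2 : ℝ) • (1 : Matrix (Fin 2) (Fin 2) ℂ) := by
    intro a b c d e f h1 h2
    rw [state_entries, state_entries, state_entries]
    ext i j
    fin_cases i <;> fin_cases j <;>
      · have hs : Real.sqrt 2 ≠ 0 := by positivity
        simp [Matrix.add_apply, Matrix.smul_apply, Matrix.one_apply, Complex.real_smul,
          Complex.ext_iff]
        field_simp
        linarith [h1, h2]
  obtain hk|hk|hk : k = 0 ∨ k = 1 ∨ k = 2 := by revert k; decide
  all_goals subst hk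
  · rw [show Finset.univ.filter (fun x : ZMod 3 × ZMod 3 => x.1 + x.2 = 0)
        = {((0:ZMod 3),(0:ZMod 3)),(1,2),(2,1)} from by decide]
    rw [Finset.sum_insert (by decide), Finset.sum_insert (by decide), Finset.sum_singleton,
      ← add_assoc]
    exact key 0 0 1 2 2 1 (by simp) (by simp)
  · rw [show Finset.univ.filter (fun x : ZMod 3 × ZMod 3 => x.1 + x.2 = 1)
        = {((0:ZMod 3),(1:ZMod 3)),(1,0),(2,2)} from by decide]
    rw [Finset.sum_insert (by decide), Finset.sum_insert (by decide), Finset.sum_singleton,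
      ← add_assoc]
    exact key 0 1 1 0 2 2 (by simp) (by simp)
  · rw [show Finset.univ.filter (fun x : ZMod 3 × ZMod 3 => x.1 + x.2 = 2)
        = {((0:ZMod 3),(2:ZMod 3)),(1,1),(2,0)} from by decide]
    rw [Finset.sum_insert (by decide), Finset.sum_insert (by decide), Finset.sum_singleton,
      ← add_assoc]
    exact key 0 2 1 1 2 0 (by simp) (by simp)

lemma parity_sum₂ (k : ZMod 3) :
    ∑ x ∈ Finset.univ.filter (fun x : ZMod 3 × ZMod 3 => x.1 + 2 * x.2 = k),
      porecState x.1 x.2 = (3/2 : ℝ) • (1 : Matrix (Fin 2) (Fin 2) ℂ) := by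
  have key : ∀ a b c d e f : ZMod 3, fSign a + fSign c + fSign e = 0 →
      fSign b + fSign d + fSign f = 0 →
      porecState a b + porecState c d + porecState e f
        = (3/2 : ℝ) • (1 : Matrix (Fin 2) (Fin 2) ℂ) := by
    intro a b c d e f h1 h2
    rw [state_entries, state_entries, state_entries]
    ext i j
    fin_cases i <;> fin_cases j <;>
      · have hs : Real.sqrt 2 ≠ 0 := by positivity
        simp [Matrix.add_apply, Matrix.smul_apply, Matrix.one_apply, Complex.real_smul,
          Complex.ext_iff]
        field_simp
        linarith [h1, h2]
  obtain hk|hk|hk : k = 0 ∨ k = 1 ∨ k = 2 := by revert k; decide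
  all_goals subst hk
  · rw [show Finset.univ.filter (fun x : ZMod 3 × ZMod 3 => x.1 + 2 * x.2 = 0)
        = {((0:ZMod 3),(0:ZMod 3)),(1,1),(2,2)} from by decide]
    rw [Finset.sum_insert (by decide), Finset.sum_insert (by decide), Finset.sum_singleton,
      ← add_assoc]
    exact key 0 0 1 1 2 2 (by simp) (by simp)
  · rw [show Finset.univ.filter (fun x : ZMod 3 × ZMod 3 => x.1 + 2 * x.2 = 1)
        = {((0:ZMod 3),(2:ZMod 3)),(1,0),(2,1)} from by decide]
    rw [Finset.sum_insert (by decide), Finset.sum_insert (by decide), Finset.sum_singleton,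
      ← add_assoc]
    exact key 0 2 1 0 2 1 (by simp) (by simp)
  · rw [show Finset.univ.filter (fun x : ZMod 3 × ZMod 3 => x.1 + 2 * x.2 = 2)
        = {((0:ZMod 3),(1:ZMod 3)),(1,2),(2,0)} from by decide]
    rw [Finset.sum_insert (by decide), Finset.sum_insert (by decide), Finset.sum_singleton,
      ← add_assoc]
    exact key 0 1 1 2 2 0 (by simp) (by simp)

lemma meas₁0 : porecMeas₁ 0 = !![1,0;0,0] := by
  rw [porecMeas₁, if_pos rfl]
  ext i j; fin_cases i <;> fin_cases j <;> simp [sigmaZ, Matrix.one_apply] <;> norm_num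
lemma meas₁1 : porecMeas₁ 1 = !![0,0;0,1] := by
  rw [porecMeas₁, if_neg (by decide), if_pos rfl]
  ext i j; fin_cases i <;> fin_cases j <;> simp [sigmaZ, Matrix.one_apply] <;> norm_num
lemma meas₁2 : porecMeas₁ 2 = 0 := by
  rw [porecMeas₁, if_neg (by decide), if_neg (by decide)]
lemma meas₂0 : porecMeas₂ 0 = !![1/2,1/2;1/2,1/2] := by
  rw [porecMeas₂, if_pos rfl]
  ext i j; fin_cases i <;> fin_cases j <;> simp [sigmaX, Matrix.one_apply] <;> norm_num
lemma meas₂1 : porecMeas₂ 1 = !![1/2,-(1/2);-(1/2),1/2] := by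
  rw [porecMeas₂, if_neg (by decide), if_pos rfl]
  ext i j; fin_cases i <;> fin_cases j <;> simp [sigmaX, Matrix.one_apply] <;> norm_num
lemma meas₂2 : porecMeas₂ 2 = 0 := by
  rw [porecMeas₂, if_neg (by decide), if_neg (by decide)]

lemma tr10 (x₁ x₂ : ZMod 3) :
    ((porecState x₁ x₂ * porecMeas₁ 0).trace).re = (1 + fSign x₁ / Real.sqrt 2)/2 := by
  rw [state_entries, meas₁0]
  simp [Matrix.trace_fin_two, Matrix.mul_apply, Fin.sum_univ_two]
lemma tr11 (x₁ x₂ : ZMod 3) :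
    ((porecState x₁ x₂ * porecMeas₁ 1).trace).re = (1 - fSign x₁ / Real.sqrt 2)/2 := by
  rw [state_entries, meas₁1]
  simp [Matrix.trace_fin_two, Matrix.mul_apply, Fin.sum_univ_two]
lemma tr12 (x₁ x₂ : ZMod 3) :
    ((porecState x₁ x₂ * porecMeas₁ 2).trace).re = 0 := by
  rw [meas₁2]; simp
lemma tr20 (x₁ x₂ : ZMod 3) :
    ((porecState x₁ x₂ * porecMeas₂ 0).trace).re = (1 + fSign x₂ / Real.sqrt 2)/2 := by
  rw [state_entries, meas₂0]
  simp [Matrix.trace_fin_two, Matrix.mul_apply, Fin.sum_univ_two, Complex.add_re,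
    Complex.mul_re]
  ring
lemma tr21 (x₁ x₂ : ZMod 3) :
    ((porecState x₁ x₂ * porecMeas₂ 1).trace).re = (1 - fSign x₂ / Real.sqrt 2)/2 := by
  rw [state_entries, meas₂1]
  simp [Matrix.trace_fin_two, Matrix.mul_apply, Fin.sum_univ_two, Complex.add_re,
    Complex.mul_re]
  ring
lemma tr22 (x₁ x₂ : ZMod 3) :
    ((porecState x₁ x₂ * porecMeas₂ 2).trace).re = 0 := by
  rw [meas₂2]; simp

lemma final_value :
    (1 / 18 : ℝ) *
        ∑ x : ZMod 3 × ZMod 3,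
          ((∑ b ∈ Finset.univ.filter (fun b => b ≠ x.1),
              ((porecState x.1 x.2 * porecMeas₁ b).trace).re) +
           (∑ b ∈ Finset.univ.filter (fun b => b ≠ x.2),
              ((porecState x.1 x.2 * porecMeas₂ b).trace).re))
      = 2 / 3 + 1 / (3 * Real.sqrt 2) := by
  simp only [Finset.sum_filter, Fintype.sum_prod_type, zmod3_sum]
  simp (config := { decide := true }) only [ne_eq, if_true, if_false]
  simp only [tr10, tr11, tr12, tr20, tr21, tr22, fSign_zero, fSign_one, fSign_two]
  have hs : Real.sqrt 2 ≠ 0 := by positivity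
  field_simp
  ring

/-- **Exact qubit optimum for the (2,3) POREC (achievability).** The explicit strategy with
states `ρ_{x₁x₂} = (1/2)(I + (f(x₂)/√2)σ_x + (f(x₁)/√2)σ_z)` and complementary Pauli
measurements is a valid, fully parity-oblivious qubit strategy achieving POREC success
probability exactly `2/3 + 1/(3√2)`. -/
theorem porec23_qubit_optimal_strategy :
    (∀ x₁ x₂ : ZMod 3, (porecState x₁ x₂).PosSemidef ∧ (porecState x₁ x₂).trace = 1) ∧
    (∀ b : ZMod 3, (porecMeas₁ b).PosSemidef) ∧ (∑ b : ZMod 3, porecMeas₁ b = 1) ∧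
    (∀ b : ZMod 3, (porecMeas₂ b).PosSemidef) ∧ (∑ b : ZMod 3, porecMeas₂ b = 1) ∧
    (∀ k k' : ZMod 3,
      ∑ x ∈ Finset.univ.filter (fun x : ZMod 3 × ZMod 3 => x.1 + x.2 = k),
        porecState x.1 x.2 =
      ∑ x ∈ Finset.univ.filter (fun x : ZMod 3 × ZMod 3 => x.1 + x.2 = k'),
        porecState x.1 x.2) ∧
    (∀ k k' : ZMod 3,
      ∑ x ∈ Finset.univ.filter (fun x : ZMod 3 × ZMod 3 => x.1 + 2 * x.2 = k),
        porecState x.1 x.2 =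
      ∑ x ∈ Finset.univ.filter (fun x : ZMod 3 × ZMod 3 => x.1 + 2 * x.2 = k'),
        porecState x.1 x.2) ∧
    (1 / 18 : ℝ) *
        ∑ x : ZMod 3 × ZMod 3,
          ((∑ b ∈ Finset.univ.filter (fun b => b ≠ x.1),
              ((porecState x.1 x.2 * porecMeas₁ b).trace).re) +
           (∑ b ∈ Finset.univ.filter (fun b => b ≠ x.2),
              ((porecState x.1 x.2 * porecMeas₂ b).trace).re))
      = 2 / 3 + 1 / (3 * Real.sqrt 2) := by
  exact ⟨fun x₁ x₂ => ⟨state_psd x₁ x₂, state_trace x₁ x₂⟩, meas₁_psd, meas₁_sum,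
    meas₂_psd, meas₂_sum,
    fun k k' => by rw [parity_sum₁, parity_sum₁],
    fun k k' => by rw [parity_sum₂, parity_sum₂],
    final_value⟩

end
end

section
/- Let t, s : Fin 3 → ℝ be nonnegative with Σ_i t_i = 2 and Σ_j s_j = 2, let m̂_0, m̂_1, m̂_2 and n̂_0, n̂_1, n̂_2 be unit vectors in ℝ³ with Σ_i t_i m̂_i = 0 and Σ_j s_j n̂_j = 0, and let λ, μ ≥ 0 be such that ‖λ t_i m̂_i + μ s_j n̂_j‖ ≤ 1 for all i, j ∈ {0,1,2}. Then λ·Σ_i t_i² + μ·Σ_j s_j² ≤ 2√2. -/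
open Finset


open RealInnerProductSpace

lemma porec_self_bound
    (t : Fin 3 → ℝ) (ht_nonneg : ∀ i, 0 ≤ t i) (ht_sum : ∑ i, t i = 2)
    (mhat : Fin 3 → EuclideanSpace ℝ (Fin 3))
    (hm_unit : ∀ i, ‖mhat i‖ = 1)
    (hm_sum : ∑ i, t i • mhat i = 0) :
    ⟪∑ i, (t i)^2 • mhat i, ∑ i, (t i)^2 • mhat i⟫
      ≤ 2 * (∑ i, (t i)^3) - (∑ i, (t i)^2)^2 := by
  have hrow : ∀ i, ∑ k, t k * ⟪mhat i, mhat k⟫ = 0 := by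
    intro i
    have h : ⟪mhat i, ∑ k, t k • mhat k⟫ = 0 := by rw [hm_sum, inner_zero_right]
    simp only [inner_sum, real_inner_smul_right] at h
    exact h
  have hcol : ∀ k, ∑ i, t i * ⟪mhat i, mhat k⟫ = 0 := by
    intro k
    have h : ⟪∑ i, t i • mhat i, mhat k⟫ = 0 := by rw [hm_sum, inner_zero_left]
    simp only [sum_inner, real_inner_smul_left] at h
    exact h
  have hd : ∀ i k, -1 ≤ ⟪mhat i, mhat k⟫ := by
    intro i k
    have h := abs_real_inner_le_norm (mhat i) (mhat k)
    rw [hm_unit, hm_unit, mul_one] at h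
    linarith [(abs_le.mp h).1]
  have hU : ⟪∑ i, (t i)^2 • mhat i, ∑ i, (t i)^2 • mhat i⟫
      = ∑ i, ∑ k, (t i)^2 * (t k)^2 * ⟪mhat i, mhat k⟫ := by
    simp only [Fin.sum_univ_three, inner_add_left, inner_add_right, real_inner_smul_left,
      real_inner_smul_right]
    ring
  have hQ : 0 ≤ ∑ i, ∑ k, t i * t k * (1 + ⟪mhat i, mhat k⟫) * (t i - t k)^2 := by
    refine Finset.sum_nonneg fun i _ => Finset.sum_nonneg fun k _ => ?_
    have h1 : 0 ≤ 1 + ⟪mhat i, mhat k⟫ := by linarith [hd i k]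
    exact mul_nonneg (mul_nonneg (mul_nonneg (ht_nonneg i) (ht_nonneg k)) h1) (sq_nonneg _)
  rw [hU]
  have h0 := hrow 0; have h1 := hrow 1; have h2 := hrow 2
  have g0 := hcol 0; have g1 := hcol 1; have g2 := hcol 2
  simp only [Fin.sum_univ_three] at h0 h1 h2 g0 g1 g2 hQ ht_sum ⊢
  have hid : (t 0 * t 0 * (1 + ⟪mhat 0, mhat 0⟫) * (t 0 - t 0)^2
      + t 0 * t 1 * (1 + ⟪mhat 0, mhat 1⟫) * (t 0 - t 1)^2
      + t 0 * t 2 * (1 + ⟪mhat 0, mhat 2⟫) * (t 0 - t 2)^2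
      + (t 1 * t 0 * (1 + ⟪mhat 1, mhat 0⟫) * (t 1 - t 0)^2
      + t 1 * t 1 * (1 + ⟪mhat 1, mhat 1⟫) * (t 1 - t 1)^2
      + t 1 * t 2 * (1 + ⟪mhat 1, mhat 2⟫) * (t 1 - t 2)^2)
      + (t 2 * t 0 * (1 + ⟪mhat 2, mhat 0⟫) * (t 2 - t 0)^2
      + t 2 * t 1 * (1 + ⟪mhat 2, mhat 1⟫) * (t 2 - t 1)^2
      + t 2 * t 2 * (1 + ⟪mhat 2, mhat 2⟫) * (t 2 - t 2)^2))
      = 4 * (t 0^3 + t 1^3 + t 2^3) - 2 * (t 0^2 + t 1^2 + t 2^2)^2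
        - 2 * ((t 0)^2 * (t 0)^2 * ⟪mhat 0, mhat 0⟫
          + (t 0)^2 * (t 1)^2 * ⟪mhat 0, mhat 1⟫
          + (t 0)^2 * (t 2)^2 * ⟪mhat 0, mhat 2⟫
          + ((t 1)^2 * (t 0)^2 * ⟪mhat 1, mhat 0⟫
          + (t 1)^2 * (t 1)^2 * ⟪mhat 1, mhat 1⟫
          + (t 1)^2 * (t 2)^2 * ⟪mhat 1, mhat 2⟫)
          + ((t 2)^2 * (t 0)^2 * ⟪mhat 2, mhat 0⟫
          + (t 2)^2 * (t 1)^2 * ⟪mhat 2, mhat 1⟫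
          + (t 2)^2 * (t 2)^2 * ⟪mhat 2, mhat 2⟫)) := by
    linear_combination (2 * (t 0^3 + t 1^3 + t 2^3)) * ht_sum
      + (t 0^3) * h0 + (t 1^3) * h1 + (t 2^3) * h2
      + (t 0^3) * g0 + (t 1^3) * g1 + (t 2^3) * g2
  linarith [hQ, hid]

set_option maxHeartbeats 1000000

/-- **Core bound `|F| ≤ 2√2` for extremal qubit POVM pairs.** Let `t, s : Fin 3 → ℝ` be
nonnegative weights summing to `2`, `m̂ᵢ, n̂ⱼ` unit vectors in `ℝ³` with `∑ tᵢ m̂ᵢ = 0` and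
`∑ sⱼ n̂ⱼ = 0`, and `λ, μ ≥ 0` such that `‖λ tᵢ m̂ᵢ + μ sⱼ n̂ⱼ‖ ≤ 1` for all `i, j`. Then
`λ ∑ tᵢ² + μ ∑ sⱼ² ≤ 2√2`. -/
theorem porec_core_F_bound
    (t s : Fin 3 → ℝ)
    (ht_nonneg : ∀ i, 0 ≤ t i) (hs_nonneg : ∀ j, 0 ≤ s j)
    (ht_sum : ∑ i, t i = 2) (hs_sum : ∑ j, s j = 2)
    (mhat nhat : Fin 3 → EuclideanSpace ℝ (Fin 3))
    (hm_unit : ∀ i, ‖mhat i‖ = 1) (hn_unit : ∀ j, ‖nhat j‖ = 1)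
    (hm_sum : ∑ i, t i • mhat i = 0) (hn_sum : ∑ j, s j • nhat j = 0)
    (lam mu : ℝ) (hlam : 0 ≤ lam) (hmu : 0 ≤ mu)
    (hball : ∀ i j, ‖(lam * t i) • mhat i + (mu * s j) • nhat j‖ ≤ 1) :
    lam * (∑ i, (t i) ^ 2) + mu * (∑ j, (s j) ^ 2) ≤ 2 * Real.sqrt 2 := by
  -- squared ball constraints
  have hB : ∀ i j, (lam * t i)^2 + 2*((lam * t i)*(mu * s j)*⟪mhat i, nhat j⟫)
      + (mu * s j)^2 ≤ 1 := by
    intro i j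
    have h1 := hball i j
    have h2 : ‖(lam * t i) • mhat i + (mu * s j) • nhat j‖^2 ≤ 1 :=
      pow_le_one₀ (norm_nonneg _) h1
    have h3 := norm_add_sq_real ((lam * t i) • mhat i) ((mu * s j) • nhat j)
    have hna : ‖(lam * t i) • mhat i‖ = lam * t i := by
      rw [norm_smul, hm_unit, mul_one, Real.norm_eq_abs,
        abs_of_nonneg (mul_nonneg hlam (ht_nonneg i))]
    have hnb : ‖(mu * s j) • nhat j‖ = mu * s j := by
      rw [norm_smul, hn_unit, mul_one, Real.norm_eq_abs,
        abs_of_nonneg (mul_nonneg hmu (hs_nonneg j))]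
    have hip : ⟪(lam * t i) • mhat i, (mu * s j) • nhat j⟫
        = (lam * t i)*(mu * s j)*⟪mhat i, nhat j⟫ := by
      rw [real_inner_smul_left, real_inner_smul_right]; ring
    rw [hna, hnb, hip] at h3
    linarith [h2, h3.le, h3.ge]
  -- weighted sum of ball constraints
  have key1 : 2*lam^2*(∑ i, (t i)^3) + 2*mu^2*(∑ j, (s j)^3)
      + 2*lam*mu*(∑ i, ∑ j, (t i)^2*(s j)^2*⟪mhat i, nhat j⟫) ≤ 4 := by
    have h1 : ∑ i, ∑ j, t i * s j * ((lam * t i)^2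
        + 2*((lam * t i)*(mu * s j)*⟪mhat i, nhat j⟫) + (mu * s j)^2)
        ≤ ∑ i, ∑ j, t i * s j := by
      refine Finset.sum_le_sum fun i _ => Finset.sum_le_sum fun j _ => ?_
      have hts : 0 ≤ t i * s j := mul_nonneg (ht_nonneg i) (hs_nonneg j)
      nlinarith [hB i j]
    have h2 : ∑ i, ∑ j, t i * s j = 4 := by
      simp only [← Finset.mul_sum, hs_sum, ← Finset.sum_mul, ht_sum]
      norm_num
    have h3 : ∑ i, ∑ j, t i * s j * ((lam * t i)^2
        + 2*((lam * t i)*(mu * s j)*⟪mhat i, nhat j⟫) + (mu * s j)^2)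
        = 2*lam^2*(∑ i, (t i)^3) + 2*mu^2*(∑ j, (s j)^3)
          + 2*lam*mu*(∑ i, ∑ j, (t i)^2*(s j)^2*⟪mhat i, nhat j⟫) := by
      have ht' := ht_sum; have hs' := hs_sum
      simp only [Fin.sum_univ_three] at ht' hs' ⊢
      linear_combination (lam^2*(t 0^3 + t 1^3 + t 2^3)) * hs'
        + (mu^2*(s 0^3 + s 1^3 + s 2^3)) * ht'
    linarith
  -- the vectors u and v
  set u : EuclideanSpace ℝ (Fin 3) := ∑ i, (t i)^2 • mhat i with hu_def
  set v : EuclideanSpace ℝ (Fin 3) := ∑ j, (s j)^2 • nhat j with hv_def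
  have hW : ⟪u, v⟫ = ∑ i, ∑ j, (t i)^2*(s j)^2*⟪mhat i, nhat j⟫ := by
    rw [hu_def, hv_def]
    simp only [Fin.sum_univ_three, inner_add_left, inner_add_right,
      real_inner_smul_left, real_inner_smul_right]
    ring
  have hmix : 0 ≤ lam^2 * ⟪u, u⟫ + 2*lam*mu*⟪u, v⟫ + mu^2 * ⟪v, v⟫ := by
    have h := real_inner_self_nonneg (x := lam • u + mu • v)
    simp only [real_inner_add_add_self, real_inner_smul_left, real_inner_smul_right] at h
    nlinarith [h, real_inner_comm u v]
  have haux_t := porec_self_bound t ht_nonneg ht_sum mhat hm_unit hm_sum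
  have haux_s := porec_self_bound s hs_nonneg hs_sum nhat hn_unit hn_sum
  rw [← hu_def] at haux_t
  rw [← hv_def] at haux_s
  have h1 : lam^2 * ⟪u, u⟫ ≤ lam^2 * (2 * (∑ i, (t i)^3) - (∑ i, (t i)^2)^2) :=
    mul_le_mul_of_nonneg_left haux_t (sq_nonneg lam)
  have h2 : mu^2 * ⟪v, v⟫ ≤ mu^2 * (2 * (∑ j, (s j)^3) - (∑ j, (s j)^2)^2) :=
    mul_le_mul_of_nonneg_left haux_s (sq_nonneg mu)
  rw [hW] at hmix
  have hfin : lam^2*(∑ i, (t i)^2)^2 + mu^2*(∑ j, (s j)^2)^2 ≤ 4 := by nlinarith [key1, hmix, h1, h2]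
  -- from x² + y² ≤ 4 with x, y ≥ 0 conclude x + y ≤ 2√2
  have hX : 0 ≤ ∑ i, (t i)^2 := Finset.sum_nonneg fun i _ => sq_nonneg _
  have hY : 0 ≤ ∑ j, (s j)^2 := Finset.sum_nonneg fun j _ => sq_nonneg _
  have hx : 0 ≤ lam * (∑ i, (t i)^2) := mul_nonneg hlam hX
  have hy : 0 ≤ mu * (∑ j, (s j)^2) := mul_nonneg hmu hY
  have hs2 : Real.sqrt 2 ^ 2 = 2 := Real.sq_sqrt (by norm_num)
  have hs2n : 0 ≤ Real.sqrt 2 := Real.sqrt_nonneg 2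
  have hr1 : (1:ℝ) ≤ Real.sqrt 2 := by nlinarith [hs2, hs2n]
  nlinarith [hfin, hx, hy, hs2, hs2n, hr1,
    sq_nonneg (lam * (∑ i, (t i)^2) - mu * (∑ j, (s j)^2)),
    sq_nonneg (lam * (∑ i, (t i)^2) + mu * (∑ j, (s j)^2) - 2*Real.sqrt 2)]
end

section
/- For every prime m ≥ 3, every qubit strategy for the (2,m) parity-oblivious random exclusion code satisfying full parity-obliviousness and using, for each y ∈ {1,2}, a two-outcome projective measurement has success probability at most (m−1)/m + 1/(m·√2). -/
open Finset
open scoped ComplexOrder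

noncomputable section

/-- Pauli matrix `σ_y`. -/
def sigmaY : Matrix (Fin 2) (Fin 2) ℂ := !![0, -Complex.I; Complex.I, 0]

/-- `v·σ = v₁σ_x + v₂σ_y + v₃σ_z` for `v ∈ ℝ³`. -/
def dotSigma (v : EuclideanSpace ℝ (Fin 3)) : Matrix (Fin 2) (Fin 2) ℂ :=
  v 0 • sigmaX + v 1 • sigmaY + v 2 • sigmaZ

/-! ### Auxiliary lemmas -/

lemma dotSigma_add' (v w : EuclideanSpace ℝ (Fin 3)) :
    dotSigma (v + w) = dotSigma v + dotSigma w := by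
  unfold dotSigma
  have h : ∀ i : Fin 3, (v + w) i = v i + w i := fun i => rfl
  rw [h 0, h 1, h 2]
  module

lemma dotSigma_sub' (v w : EuclideanSpace ℝ (Fin 3)) :
    dotSigma (v - w) = dotSigma v - dotSigma w := by
  unfold dotSigma
  have h : ∀ i : Fin 3, (v - w) i = v i - w i := fun i => rfl
  rw [h 0, h 1, h 2]
  module

lemma trace_mul_dotSigma (ρ : Matrix (Fin 2) (Fin 2) ℂ) (w : EuclideanSpace ℝ (Fin 3)) :
    (ρ * dotSigma w).trace =
      ρ 0 0 * (w 2) + ρ 0 1 * ((w 0) + (w 1) * Complex.I)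
      + ρ 1 0 * ((w 0) - (w 1) * Complex.I) - ρ 1 1 * (w 2) := by
  simp [Matrix.trace_fin_two, Matrix.mul_apply, Fin.sum_univ_two, dotSigma, sigmaX, sigmaY,
    sigmaZ, Matrix.smul_apply, Matrix.add_apply, Complex.real_smul]
  ring

set_option maxHeartbeats 1000000 in
lemma abs_re_trace_mul_dotSigma_le (ρ : Matrix (Fin 2) (Fin 2) ℂ) (hρ : ρ.PosSemidef)
    (htr : ρ.trace = 1) (w : EuclideanSpace ℝ (Fin 3)) :
    |((ρ * dotSigma w).trace).re| ≤ ‖w‖ := by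
  obtain ⟨hherm, hpsd⟩ := Matrix.posSemidef_iff_dotProduct_mulVec.1 hρ
  have h10 : ρ 1 0 = (starRingEnd ℂ) (ρ 0 1) := (hherm.apply 1 0).symm
  have h00 : (ρ 0 0).im = 0 := by
    have := hherm.apply 0 0
    rw [Complex.star_def, Complex.conj_eq_iff_im] at this
    exact this
  have h11 : (ρ 1 1).im = 0 := by
    have := hherm.apply 1 1
    rw [Complex.star_def, Complex.conj_eq_iff_im] at this
    exact this
  set a := (ρ 0 0).re with ha
  set d := (ρ 1 1).re with hd
  set p := (ρ 0 1).re with hp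
  set q := (ρ 0 1).im with hq
  have htr' : a + d = 1 := by
    have := congrArg Complex.re htr
    simpa [Matrix.trace_fin_two] using this
  have hv1 := hpsd ![ρ 0 1, -(ρ 0 0)]
  have hv2 := hpsd ![ρ 1 1, -(ρ 1 0)]
  rw [Complex.le_def] at hv1 hv2
  have hv1' : 0 ≤ a * (a * d - p^2 - q^2) := by
    have := hv1.1
    simp [dotProduct, Matrix.mulVec, Fin.sum_univ_two, h10, Complex.add_re,
      Complex.mul_re, Complex.mul_im, h00, h11] at this
    nlinarith [this]
  have hv2' : 0 ≤ d * (a * d - p^2 - q^2) := by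
    have := hv2.1
    simp [dotProduct, Matrix.mulVec, Fin.sum_univ_two, h10, Complex.add_re,
      Complex.mul_re, Complex.mul_im, h00, h11] at this
    nlinarith [this]
  have hdet : 0 ≤ a * d - p^2 - q^2 := by nlinarith
  have hkey : ((ρ * dotSigma w).trace).re = (a - d) * w 2 + 2*p*(w 0) - 2*q*(w 1) := by
    rw [trace_mul_dotSigma]
    simp [h10, Complex.add_re, Complex.sub_re, Complex.mul_re, Complex.mul_im, h00, h11]
    ring
  have hnorm : ‖w‖ = Real.sqrt ((w 0)^2 + (w 1)^2 + (w 2)^2) := by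
    rw [EuclideanSpace.norm_eq]
    congr 1
    simp [Fin.sum_univ_three, Real.norm_eq_abs, sq_abs]
  rw [hkey, hnorm]
  have hsq : ((a - d) * w 2 + 2*p*(w 0) - 2*q*(w 1))^2 ≤ (w 0)^2 + (w 1)^2 + (w 2)^2 := by
    have hu : (a-d)^2 + 4*p^2 + 4*q^2 ≤ 1 := by nlinarith
    nlinarith [sq_nonneg ((a-d)*(w 0) - 2*p*(w 2)), sq_nonneg ((a-d)*(w 1) + 2*q*(w 2)),
      sq_nonneg (2*p*(w 1) + 2*q*(w 0)),
      mul_nonneg (sub_nonneg.2 hu) (by positivity : (0:ℝ) ≤ (w 0)^2 + (w 1)^2 + (w 2)^2)]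
  calc |((a - d) * w 2 + 2*p*(w 0) - 2*q*(w 1))|
      = Real.sqrt (((a - d) * w 2 + 2*p*(w 0) - 2*q*(w 1))^2) := (Real.sqrt_sq_eq_abs _).symm
    _ ≤ _ := Real.sqrt_le_sqrt hsq

lemma tr_half_plus (A N : Matrix (Fin 2) (Fin 2) ℂ) (htr : A.trace = 1) :
    ((A * ((1/2 : ℝ) • ((1 : Matrix (Fin 2) (Fin 2) ℂ) + N))).trace).re
    = 1/2 * (1 + ((A * N).trace).re) := by
  rw [Matrix.mul_smul, Matrix.trace_smul, Matrix.mul_add, Matrix.mul_one, Matrix.trace_add, htr]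
  rw [Complex.real_smul]
  simp [Complex.add_re, Complex.mul_re]

lemma tr_half_minus (A N : Matrix (Fin 2) (Fin 2) ℂ) (htr : A.trace = 1) :
    ((A * ((1/2 : ℝ) • ((1 : Matrix (Fin 2) (Fin 2) ℂ) - N))).trace).re
    = 1/2 * (1 - ((A * N).trace).re) := by
  rw [Matrix.mul_smul, Matrix.trace_smul, Matrix.mul_sub, Matrix.mul_one, Matrix.trace_sub, htr]
  rw [Complex.real_smul]
  simp [Complex.sub_re, Complex.mul_re]

lemma sum_ite01 {K β : Type*} [Fintype K] [DecidableEq K] [AddCommMonoid β]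
    {z o : K} (hzo : z ≠ o) (g h : K → β) :
    (∑ x : K, if x = z then g x else if x = o then h x else 0) = g z + h o := by
  have hsplit : ∀ x : K, (if x = z then g x else if x = o then h x else 0)
      = (if x = z then g x else 0) + (if x = o then h x else 0) := by
    intro x
    by_cases h1 : x = z
    · subst h1; simp [hzo]
    · by_cases h2 : x = o <;> simp [h1, h2, Ne.symm hzo]
  calc (∑ x : K, if x = z then g x else if x = o then h x else 0)
      = ∑ x : K, ((if x = z then g x else 0) + (if x = o then h x else 0)) :=
        Finset.sum_congr rfl (fun x _ => hsplit x)
    _ = (∑ x : K, (if x = z then g x else 0)) + ∑ x : K, (if x = o then h x else 0) :=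
        Finset.sum_add_distrib
    _ = g z + h o := by
        rw [Finset.sum_ite_eq' Finset.univ, Finset.sum_ite_eq' Finset.univ]
        simp

lemma po_minor (m : ℕ) (hm : Nat.Prime m) [NeZero m]
    (ρ : ZMod m → ZMod m → Matrix (Fin 2) (Fin 2) ℂ)
    (hPO : ∀ r₁ r₂ : ZMod m, r₁ ≠ 0 → r₂ ≠ 0 → ∀ k k' : ZMod m,
      (∑ x ∈ Finset.univ.filter (fun x : ZMod m × ZMod m => r₁ * x.1 + r₂ * x.2 = k),
        ρ x.1 x.2) =
      ∑ x ∈ Finset.univ.filter (fun x : ZMod m × ZMod m => r₁ * x.1 + r₂ * x.2 = k'),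
        ρ x.1 x.2)
    (a a' b b' : ZMod m) :
    ρ a b + ρ a' b' = ρ a b' + ρ a' b := by
  haveI : Fact (Nat.Prime m) := ⟨hm⟩
  set T : Matrix (Fin 2) (Fin 2) ℂ := ∑ x : ZMod m × ZMod m, ρ x.1 x.2 with hT
  have hmc : (m : ℂ) ≠ 0 := Nat.cast_ne_zero.mpr hm.ne_zero
  have hline : ∀ r₁ r₂ : ZMod m, r₁ ≠ 0 → r₂ ≠ 0 → ∀ k : ZMod m,
      (m : ℂ) • (∑ x ∈ Finset.univ.filter
          (fun x : ZMod m × ZMod m => r₁ * x.1 + r₂ * x.2 = k), ρ x.1 x.2) = T := by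
    intro r₁ r₂ h1 h2 k
    have hfib := Finset.sum_fiberwise Finset.univ
      (fun x : ZMod m × ZMod m => r₁ * x.1 + r₂ * x.2) (fun x => ρ x.1 x.2)
    calc (m : ℂ) • (∑ x ∈ Finset.univ.filter
          (fun x : ZMod m × ZMod m => r₁ * x.1 + r₂ * x.2 = k), ρ x.1 x.2)
        = (m : ℕ) • (∑ x ∈ Finset.univ.filter
          (fun x : ZMod m × ZMod m => r₁ * x.1 + r₂ * x.2 = k), ρ x.1 x.2) :=
          Nat.cast_smul_eq_nsmul ℂ _ _
      _ = ∑ _j : ZMod m, (∑ x ∈ Finset.univ.filter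
          (fun x : ZMod m × ZMod m => r₁ * x.1 + r₂ * x.2 = k), ρ x.1 x.2) := by
          rw [Finset.sum_const, Finset.card_univ, ZMod.card]
      _ = ∑ j : ZMod m, (∑ x ∈ Finset.univ.filter
          (fun x : ZMod m × ZMod m => r₁ * x.1 + r₂ * x.2 = j), ρ x.1 x.2) :=
          Finset.sum_congr rfl (fun j _ => (hPO r₁ r₂ h1 h2 j k).symm)
      _ = T := hfib
  have hrepar : ∀ r₂ k : ZMod m,
      (∑ x ∈ Finset.univ.filter
        (fun x : ZMod m × ZMod m => 1 * x.1 + r₂ * x.2 = k), ρ x.1 x.2)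
      = ∑ x₂ : ZMod m, ρ (k - r₂ * x₂) x₂ := by
    intro r₂ k
    refine Finset.sum_nbij' (i := fun x : ZMod m × ZMod m => x.2)
      (j := fun x₂ : ZMod m => (k - r₂ * x₂, x₂)) ?_ ?_ ?_ ?_ ?_
    · intro x _; exact Finset.mem_univ _
    · intro x₂ _; simp only [Finset.mem_filter, Finset.mem_univ, true_and]; ring
    · intro x hx
      simp only [Finset.mem_filter, Finset.mem_univ, true_and, one_mul] at hx
      have : k - r₂ * x.2 = x.1 := by rw [← hx]; ring
      simp only [this]
    · intro x₂ _; rfl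
    · intro x hx
      simp only [Finset.mem_filter, Finset.mem_univ, true_and, one_mul] at hx
      have : k - r₂ * x.2 = x.1 := by rw [← hx]; ring
      simp only [this]
  have claim : ∀ a b : ZMod m, ((m:ℂ))^2 • ρ a b
      = (m:ℂ) • (∑ x₂ : ZMod m, ρ a x₂) + (m:ℂ) • (∑ x₁ : ZMod m, ρ x₁ b) - T := by
    intro a b
    have hsplit : ∀ r₂ : ZMod m, (∑ x₂ : ZMod m, ρ (a + r₂ * b - r₂ * x₂) x₂)
        = ρ a b + ∑ x₂ ∈ Finset.univ.erase b, ρ (a + r₂ * b - r₂ * x₂) x₂ := by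
      intro r₂
      rw [← Finset.add_sum_erase _ _ (Finset.mem_univ b)]
      congr 2
      ring
    have hinner : ∀ x₂ ∈ Finset.univ.erase b,
        (∑ r₂ ∈ Finset.univ.erase 0, ρ (a + r₂ * b - r₂ * x₂) x₂)
        = ∑ x₁ ∈ Finset.univ.erase a, ρ x₁ x₂ := by
      intro x₂ hx₂
      have hbx : b - x₂ ≠ 0 := sub_ne_zero.2 (Ne.symm (Finset.mem_erase.1 hx₂).1)
      refine Finset.sum_nbij' (i := fun r₂ => a + r₂ * b - r₂ * x₂)
        (j := fun x₁ => (x₁ - a) * (b - x₂)⁻¹) ?_ ?_ ?_ ?_ ?_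
      · intro r₂ hr₂
        have hr : r₂ ≠ 0 := (Finset.mem_erase.1 hr₂).1
        simp only [Finset.mem_erase, Finset.mem_univ, and_true]
        intro h
        exact mul_ne_zero hr hbx (by linear_combination h)
      · intro x₁ hx₁
        have hx : x₁ ≠ a := (Finset.mem_erase.1 hx₁).1
        simp only [Finset.mem_erase, Finset.mem_univ, and_true]
        exact mul_ne_zero (sub_ne_zero.2 hx) (inv_ne_zero hbx)
      · intro r₂ _
        field_simp
        ring
      · intro x₁ _
        field_simp
        ring
      · intro r₂ _; rfl
    have hcount : (∑ r₂ ∈ Finset.univ.erase 0,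
        (∑ x₂ : ZMod m, ρ (a + r₂ * b - r₂ * x₂) x₂))
        = (m - 1) • ρ a b + ∑ x₂ ∈ Finset.univ.erase b, ∑ x₁ ∈ Finset.univ.erase a, ρ x₁ x₂ := by
      calc (∑ r₂ ∈ Finset.univ.erase 0, (∑ x₂ : ZMod m, ρ (a + r₂ * b - r₂ * x₂) x₂))
          = ∑ r₂ ∈ Finset.univ.erase 0,
            (ρ a b + ∑ x₂ ∈ Finset.univ.erase b, ρ (a + r₂ * b - r₂ * x₂) x₂) :=
            Finset.sum_congr rfl (fun r₂ _ => hsplit r₂)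
        _ = (∑ _r₂ ∈ Finset.univ.erase (0 : ZMod m), ρ a b)
            + ∑ r₂ ∈ Finset.univ.erase 0, ∑ x₂ ∈ Finset.univ.erase b,
              ρ (a + r₂ * b - r₂ * x₂) x₂ := Finset.sum_add_distrib
        _ = (m - 1) • ρ a b + ∑ x₂ ∈ Finset.univ.erase b, ∑ r₂ ∈ Finset.univ.erase 0,
              ρ (a + r₂ * b - r₂ * x₂) x₂ := by
            rw [Finset.sum_const, Finset.card_erase_of_mem (Finset.mem_univ _),
              Finset.card_univ, ZMod.card, Finset.sum_comm]
        _ = _ := by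
            congr 1
            exact Finset.sum_congr rfl hinner
    have hmul : (m:ℂ) • (∑ r₂ ∈ Finset.univ.erase 0,
        (∑ x₂ : ZMod m, ρ (a + r₂ * b - r₂ * x₂) x₂)) = (m - 1) • T := by
      have heach : ∀ r₂ ∈ Finset.univ.erase (0 : ZMod m),
          (m:ℂ) • (∑ x₂ : ZMod m, ρ (a + r₂ * b - r₂ * x₂) x₂) = T := by
        intro r₂ hr₂
        rw [← hrepar r₂ (a + r₂ * b)]
        exact hline 1 r₂ one_ne_zero (Finset.mem_erase.1 hr₂).1 (a + r₂ * b)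
      calc (m:ℂ) • (∑ r₂ ∈ Finset.univ.erase 0,
            (∑ x₂ : ZMod m, ρ (a + r₂ * b - r₂ * x₂) x₂))
          = ∑ r₂ ∈ Finset.univ.erase (0 : ZMod m),
            (m:ℂ) • (∑ x₂ : ZMod m, ρ (a + r₂ * b - r₂ * x₂) x₂) := Finset.smul_sum
        _ = ∑ _r₂ ∈ Finset.univ.erase (0 : ZMod m), T := Finset.sum_congr rfl heach
        _ = (m - 1) • T := by
            rw [Finset.sum_const, Finset.card_erase_of_mem (Finset.mem_univ _),
              Finset.card_univ, ZMod.card]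
    have hE : (∑ x₂ ∈ Finset.univ.erase b, ∑ x₁ ∈ Finset.univ.erase a, ρ x₁ x₂)
        = T - (∑ x₁ : ZMod m, ρ x₁ b) - (∑ x₂ : ZMod m, ρ a x₂) + ρ a b := by
      rw [Finset.sum_congr rfl
        (fun x₂ _ => Finset.sum_erase_eq_sub (f := fun x₁ => ρ x₁ x₂) (Finset.mem_univ a))]
      rw [Finset.sum_sub_distrib, Finset.sum_erase_eq_sub (Finset.mem_univ b),
        Finset.sum_erase_eq_sub (Finset.mem_univ b)]
      have h2 : (∑ x₂ : ZMod m, ∑ x₁ : ZMod m, ρ x₁ x₂) = T := by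
        rw [Finset.sum_comm, hT, Fintype.sum_prod_type']
      rw [h2]
      abel
    have hm1 : ∀ X : Matrix (Fin 2) (Fin 2) ℂ, (m - 1) • X = ((m:ℂ) - 1) • X := by
      intro X
      rw [← Nat.cast_smul_eq_nsmul ℂ, Nat.cast_sub hm.one_lt.le, Nat.cast_one]
    rw [hcount, hm1, hm1, hE] at hmul
    linear_combination (norm := module) hmul
  have h1 := claim a b
  have h2 := claim a' b'
  have h3 := claim a b'
  have h4 := claim a' b
  have h5 : ((m:ℂ))^2 • (ρ a b + ρ a' b') = ((m:ℂ))^2 • (ρ a b' + ρ a' b) := by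
    linear_combination (norm := module) h1 + h2 - h3 - h4
  exact smul_right_injective _ (pow_ne_zero 2 hmc) h5

set_option maxHeartbeats 2000000

/-- **Projective qubit bound for the (2,m) POREC.** For every prime `m ≥ 3`, every
fully parity-oblivious qubit strategy whose measurements are two-outcome projective
measurements `M_{0|y} = (I + m̂_y·σ)/2`, `M_{1|y} = (I − m̂_y·σ)/2`, `M_{b|y} = 0` otherwise,
has POREC success probability at most `(m−1)/m + 1/(m√2)`. -/
theorem porec2m_projective_qubit_bound
    (m : ℕ) (hm : Nat.Prime m) (hm3 : 3 ≤ m) [NeZero m]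
    (ρ : ZMod m → ZMod m → Matrix (Fin 2) (Fin 2) ℂ)
    (hρ_psd : ∀ x₁ x₂, (ρ x₁ x₂).PosSemidef)
    (hρ_tr : ∀ x₁ x₂, (ρ x₁ x₂).trace = 1)
    (M₁ M₂ : ZMod m → Matrix (Fin 2) (Fin 2) ℂ)
    (mhat₁ mhat₂ : EuclideanSpace ℝ (Fin 3))
    (hmhat₁ : ‖mhat₁‖ = 1) (hmhat₂ : ‖mhat₂‖ = 1)
    (hM₁ : ∀ b : ZMod m, M₁ b =
      if b = 0 then (1 / 2 : ℝ) • ((1 : Matrix (Fin 2) (Fin 2) ℂ) + dotSigma mhat₁)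
      else if b = 1 then (1 / 2 : ℝ) • ((1 : Matrix (Fin 2) (Fin 2) ℂ) - dotSigma mhat₁)
      else 0)
    (hM₂ : ∀ b : ZMod m, M₂ b =
      if b = 0 then (1 / 2 : ℝ) • ((1 : Matrix (Fin 2) (Fin 2) ℂ) + dotSigma mhat₂)
      else if b = 1 then (1 / 2 : ℝ) • ((1 : Matrix (Fin 2) (Fin 2) ℂ) - dotSigma mhat₂)
      else 0)
    (hPO : ∀ r₁ r₂ : ZMod m, r₁ ≠ 0 → r₂ ≠ 0 → ∀ k k' : ZMod m,
      ∑ x ∈ Finset.univ.filter (fun x : ZMod m × ZMod m => r₁ * x.1 + r₂ * x.2 = k),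
        ρ x.1 x.2 =
      ∑ x ∈ Finset.univ.filter (fun x : ZMod m × ZMod m => r₁ * x.1 + r₂ * x.2 = k'),
        ρ x.1 x.2) :
    (1 / (2 * (m : ℝ) ^ 2)) *
        ∑ x : ZMod m × ZMod m,
          ((∑ b ∈ Finset.univ.filter (fun b => b ≠ x.1), ((ρ x.1 x.2 * M₁ b).trace).re) +
           (∑ b ∈ Finset.univ.filter (fun b => b ≠ x.2), ((ρ x.1 x.2 * M₂ b).trace).re))
      ≤ ((m : ℝ) - 1) / m + 1 / (m * Real.sqrt 2) := by
  haveI : Fact (Nat.Prime m) := ⟨hm⟩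
  have h01 : (0 : ZMod m) ≠ 1 := zero_ne_one
  -- abbreviations
  set t₁ : ZMod m → ZMod m → ℝ := fun i j => ((ρ i j * dotSigma mhat₁).trace).re with ht₁
  set t₂ : ZMod m → ZMod m → ℝ := fun i j => ((ρ i j * dotSigma mhat₂).trace).re with ht₂
  -- the measurement operators sum to the identity
  have hMsum₁ : (∑ b : ZMod m, M₁ b) = 1 := by
    calc (∑ b : ZMod m, M₁ b)
        = ∑ b : ZMod m, (if b = 0 then
            (1 / 2 : ℝ) • ((1 : Matrix (Fin 2) (Fin 2) ℂ) + dotSigma mhat₁)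
          else if b = 1 then (1 / 2 : ℝ) • ((1 : Matrix (Fin 2) (Fin 2) ℂ) - dotSigma mhat₁)
          else 0) := Finset.sum_congr rfl (fun b _ => hM₁ b)
      _ = (1 / 2 : ℝ) • ((1 : Matrix (Fin 2) (Fin 2) ℂ) + dotSigma mhat₁)
          + (1 / 2 : ℝ) • ((1 : Matrix (Fin 2) (Fin 2) ℂ) - dotSigma mhat₁) := sum_ite01 h01 _ _
      _ = 1 := by module
  have hMsum₂ : (∑ b : ZMod m, M₂ b) = 1 := by
    calc (∑ b : ZMod m, M₂ b)
        = ∑ b : ZMod m, (if b = 0 then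
            (1 / 2 : ℝ) • ((1 : Matrix (Fin 2) (Fin 2) ℂ) + dotSigma mhat₂)
          else if b = 1 then (1 / 2 : ℝ) • ((1 : Matrix (Fin 2) (Fin 2) ℂ) - dotSigma mhat₂)
          else 0) := Finset.sum_congr rfl (fun b _ => hM₂ b)
      _ = (1 / 2 : ℝ) • ((1 : Matrix (Fin 2) (Fin 2) ℂ) + dotSigma mhat₂)
          + (1 / 2 : ℝ) • ((1 : Matrix (Fin 2) (Fin 2) ℂ) - dotSigma mhat₂) := sum_ite01 h01 _ _
      _ = 1 := by module
  -- reduce the exclusion sums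
  have hsum1 : ∀ x : ZMod m × ZMod m,
      (∑ b ∈ Finset.univ.filter (fun b => b ≠ x.1), ((ρ x.1 x.2 * M₁ b).trace).re)
      = 1 - ((ρ x.1 x.2 * M₁ x.1).trace).re := by
    intro x
    have hfull : (∑ b : ZMod m, ((ρ x.1 x.2 * M₁ b).trace).re) = 1 := by
      have h : ((ρ x.1 x.2 * (∑ b : ZMod m, M₁ b)).trace).re = 1 := by
        rw [hMsum₁, Matrix.mul_one, hρ_tr]; simp
      rw [Matrix.mul_sum, Matrix.trace_sum, Complex.re_sum] at h
      exact h
    rw [Finset.filter_ne', Finset.sum_erase_eq_sub (Finset.mem_univ _), hfull]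
  have hsum2 : ∀ x : ZMod m × ZMod m,
      (∑ b ∈ Finset.univ.filter (fun b => b ≠ x.2), ((ρ x.1 x.2 * M₂ b).trace).re)
      = 1 - ((ρ x.1 x.2 * M₂ x.2).trace).re := by
    intro x
    have hfull : (∑ b : ZMod m, ((ρ x.1 x.2 * M₂ b).trace).re) = 1 := by
      have h : ((ρ x.1 x.2 * (∑ b : ZMod m, M₂ b)).trace).re = 1 := by
        rw [hMsum₂, Matrix.mul_one, hρ_tr]; simp
      rw [Matrix.mul_sum, Matrix.trace_sum, Complex.re_sum] at h
      exact h
    rw [Finset.filter_ne', Finset.sum_erase_eq_sub (Finset.mem_univ _), hfull]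
  -- constancy of row/column differences from parity obliviousness
  have hconst₁ : ∀ b : ZMod m, t₁ 0 b - t₁ 1 b = t₁ 0 0 - t₁ 1 0 := by
    intro b
    have key := po_minor m hm ρ hPO 0 1 b 0
    have h' := congrArg (fun X => ((X * dotSigma mhat₁).trace).re) key
    simp only [Matrix.add_mul, Matrix.trace_add, Complex.add_re] at h'
    simp only [ht₁]
    linarith [h']
  have hconst₂ : ∀ a : ZMod m, t₂ a 0 - t₂ a 1 = t₂ 0 0 - t₂ 0 1 := by
    intro a
    have key := po_minor m hm ρ hPO a 0 0 1
    have h' := congrArg (fun X => ((X * dotSigma mhat₂).trace).re) key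
    simp only [Matrix.add_mul, Matrix.trace_add, Complex.add_re] at h'
    simp only [ht₂]
    linarith [h']
  set d₁ : ℝ := t₁ 0 0 - t₁ 1 0 with hd₁
  set d₂ : ℝ := t₂ 0 0 - t₂ 0 1 with hd₂
  -- the two guessing sums
  have hS1 : (∑ x : ZMod m × ZMod m, ((ρ x.1 x.2 * M₁ x.1).trace).re) = m + m/2 * d₁ := by
    rw [Fintype.sum_prod_type]
    have hpt : ∀ x₁ : ZMod m, (∑ x₂ : ZMod m, ((ρ x₁ x₂ * M₁ x₁).trace).re)
        = if x₁ = 0 then (∑ x₂ : ZMod m, 1/2 * (1 + t₁ x₁ x₂))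
          else if x₁ = 1 then (∑ x₂ : ZMod m, 1/2 * (1 - t₁ x₁ x₂)) else 0 := by
      intro x₁
      rw [hM₁ x₁]
      split_ifs with hc1 hc2
      · exact Finset.sum_congr rfl (fun x₂ _ => tr_half_plus _ _ (hρ_tr _ _))
      · exact Finset.sum_congr rfl (fun x₂ _ => tr_half_minus _ _ (hρ_tr _ _))
      · simp
    calc (∑ x₁ : ZMod m, ∑ x₂ : ZMod m, ((ρ x₁ x₂ * M₁ x₁).trace).re)
        = ∑ x₁ : ZMod m, (if x₁ = 0 then (∑ x₂ : ZMod m, 1/2 * (1 + t₁ x₁ x₂))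
          else if x₁ = 1 then (∑ x₂ : ZMod m, 1/2 * (1 - t₁ x₁ x₂)) else 0) :=
          Finset.sum_congr rfl (fun x₁ _ => hpt x₁)
      _ = (∑ x₂ : ZMod m, 1/2 * (1 + t₁ 0 x₂)) + (∑ x₂ : ZMod m, 1/2 * (1 - t₁ 1 x₂)) :=
          sum_ite01 h01 _ _
      _ = ∑ x₂ : ZMod m, (1/2 * (1 + t₁ 0 x₂) + 1/2 * (1 - t₁ 1 x₂)) :=
          Finset.sum_add_distrib.symm
      _ = ∑ _x₂ : ZMod m, ((1:ℝ) + 1/2 * d₁) :=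
          Finset.sum_congr rfl (fun b _ => by linear_combination (1/2 : ℝ) * hconst₁ b)
      _ = m * (1 + 1/2 * d₁) := by
          rw [Finset.sum_const, Finset.card_univ, ZMod.card, nsmul_eq_mul]
      _ = m + m/2 * d₁ := by ring
  have hS2 : (∑ x : ZMod m × ZMod m, ((ρ x.1 x.2 * M₂ x.2).trace).re) = m + m/2 * d₂ := by
    rw [Fintype.sum_prod_type, Finset.sum_comm]
    have hpt : ∀ x₂ : ZMod m, (∑ x₁ : ZMod m, ((ρ x₁ x₂ * M₂ x₂).trace).re)
        = if x₂ = 0 then (∑ x₁ : ZMod m, 1/2 * (1 + t₂ x₁ x₂))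
          else if x₂ = 1 then (∑ x₁ : ZMod m, 1/2 * (1 - t₂ x₁ x₂)) else 0 := by
      intro x₂
      rw [hM₂ x₂]
      split_ifs with hc1 hc2
      · exact Finset.sum_congr rfl (fun x₁ _ => tr_half_plus _ _ (hρ_tr _ _))
      · exact Finset.sum_congr rfl (fun x₁ _ => tr_half_minus _ _ (hρ_tr _ _))
      · simp
    calc (∑ x₂ : ZMod m, ∑ x₁ : ZMod m, ((ρ x₁ x₂ * M₂ x₂).trace).re)
        = ∑ x₂ : ZMod m, (if x₂ = 0 then (∑ x₁ : ZMod m, 1/2 * (1 + t₂ x₁ x₂))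
          else if x₂ = 1 then (∑ x₁ : ZMod m, 1/2 * (1 - t₂ x₁ x₂)) else 0) :=
          Finset.sum_congr rfl (fun x₂ _ => hpt x₂)
      _ = (∑ x₁ : ZMod m, 1/2 * (1 + t₂ x₁ 0)) + (∑ x₁ : ZMod m, 1/2 * (1 - t₂ x₁ 1)) :=
          sum_ite01 h01 _ _
      _ = ∑ x₁ : ZMod m, (1/2 * (1 + t₂ x₁ 0) + 1/2 * (1 - t₂ x₁ 1)) :=
          Finset.sum_add_distrib.symm
      _ = ∑ _x₁ : ZMod m, ((1:ℝ) + 1/2 * d₂) :=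
          Finset.sum_congr rfl (fun a _ => by linear_combination (1/2 : ℝ) * hconst₂ a)
      _ = m * (1 + 1/2 * d₂) := by
          rw [Finset.sum_const, Finset.card_univ, ZMod.card, nsmul_eq_mul]
      _ = m + m/2 * d₂ := by ring
  -- lower bound on d₁ + d₂
  have hminor := po_minor m hm ρ hPO 0 1 0 1
  have hmin₁ : t₁ 0 0 + t₁ 1 1 = t₁ 0 1 + t₁ 1 0 := by
    have h' := congrArg (fun X => ((X * dotSigma mhat₁).trace).re) hminor
    simp only [Matrix.add_mul, Matrix.trace_add, Complex.add_re] at h'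
    simp only [ht₁]
    linarith [h']
  have hmin₂ : t₂ 0 0 + t₂ 1 1 = t₂ 0 1 + t₂ 1 0 := by
    have h' := congrArg (fun X => ((X * dotSigma mhat₂).trace).re) hminor
    simp only [Matrix.add_mul, Matrix.trace_add, Complex.add_re] at h'
    simp only [ht₂]
    linarith [h']
  have hexp_add : ∀ i j : ZMod m,
      ((ρ i j * dotSigma (mhat₁ + mhat₂)).trace).re = t₁ i j + t₂ i j := by
    intro i j
    rw [dotSigma_add', Matrix.mul_add, Matrix.trace_add, Complex.add_re]
  have hexp_sub : ∀ i j : ZMod m,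
      ((ρ i j * dotSigma (mhat₁ - mhat₂)).trace).re = t₁ i j - t₂ i j := by
    intro i j
    rw [dotSigma_sub', Matrix.mul_sub, Matrix.trace_sub, Complex.sub_re]
  have hb1 := abs_re_trace_mul_dotSigma_le (ρ 0 0) (hρ_psd 0 0) (hρ_tr 0 0) (mhat₁ + mhat₂)
  rw [hexp_add] at hb1
  have hb2 := abs_re_trace_mul_dotSigma_le (ρ 1 1) (hρ_psd 1 1) (hρ_tr 1 1) (mhat₁ + mhat₂)
  rw [hexp_add] at hb2
  have hb3 := abs_re_trace_mul_dotSigma_le (ρ 0 1) (hρ_psd 0 1) (hρ_tr 0 1) (mhat₁ - mhat₂)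
  rw [hexp_sub] at hb3
  have hb4 := abs_re_trace_mul_dotSigma_le (ρ 1 0) (hρ_psd 1 0) (hρ_tr 1 0) (mhat₁ - mhat₂)
  rw [hexp_sub] at hb4
  have hnorm2 : ‖mhat₁ + mhat₂‖ + ‖mhat₁ - mhat₂‖ ≤ 2 * Real.sqrt 2 := by
    have hpar : ‖mhat₁ + mhat₂‖^2 + ‖mhat₁ - mhat₂‖^2 = 4 := by
      rw [norm_add_sq_real, norm_sub_sq_real, hmhat₁, hmhat₂]
      ring
    have hs : Real.sqrt 2 ^ 2 = 2 := Real.sq_sqrt (by norm_num)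
    nlinarith [norm_nonneg (mhat₁ + mhat₂), norm_nonneg (mhat₁ - mhat₂),
      Real.sqrt_nonneg 2, sq_nonneg (‖mhat₁ + mhat₂‖ - ‖mhat₁ - mhat₂‖)]
  have hd : -(2 * Real.sqrt 2) ≤ d₁ + d₂ := by
    have e1 := abs_le.1 hb1
    have e2 := abs_le.1 hb2
    have e3 := abs_le.1 hb3
    have e4 := abs_le.1 hb4
    linarith [e1.1, e2.2, e3.1, e4.2, hmin₁, hmin₂, hnorm2, hd₁, hd₂]
  -- total sum
  have hsum : (∑ x : ZMod m × ZMod m,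
        ((∑ b ∈ Finset.univ.filter (fun b => b ≠ x.1), ((ρ x.1 x.2 * M₁ b).trace).re) +
         (∑ b ∈ Finset.univ.filter (fun b => b ≠ x.2), ((ρ x.1 x.2 * M₂ b).trace).re)))
      = 2*(m:ℝ)^2 - (m + m/2*d₁) - (m + m/2*d₂) := by
    calc (∑ x : ZMod m × ZMod m,
        ((∑ b ∈ Finset.univ.filter (fun b => b ≠ x.1), ((ρ x.1 x.2 * M₁ b).trace).re) +
         (∑ b ∈ Finset.univ.filter (fun b => b ≠ x.2), ((ρ x.1 x.2 * M₂ b).trace).re)))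
        = ∑ x : ZMod m × ZMod m,
            ((1 - ((ρ x.1 x.2 * M₁ x.1).trace).re) + (1 - ((ρ x.1 x.2 * M₂ x.2).trace).re)) :=
          Finset.sum_congr rfl (fun x _ => by rw [hsum1 x, hsum2 x])
      _ = (∑ _x : ZMod m × ZMod m, (2:ℝ))
          - ((∑ x : ZMod m × ZMod m, ((ρ x.1 x.2 * M₁ x.1).trace).re)
            + (∑ x : ZMod m × ZMod m, ((ρ x.1 x.2 * M₂ x.2).trace).re)) := by
          rw [← Finset.sum_add_distrib, ← Finset.sum_sub_distrib]
          exact Finset.sum_congr rfl (fun x _ => by ring)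
      _ = 2*(m:ℝ)^2 - (m + m/2*d₁) - (m + m/2*d₂) := by
          rw [Finset.sum_const, Finset.card_univ, Fintype.card_prod, ZMod.card, hS1, hS2,
            nsmul_eq_mul]
          push_cast
          ring
  rw [hsum]
  -- final scalar inequality
  have hm0 : (0:ℝ) < m := by exact_mod_cast hm.pos
  have hs2 : (0:ℝ) < Real.sqrt 2 := Real.sqrt_pos.2 (by norm_num)
  have hs2sq : Real.sqrt 2 * Real.sqrt 2 = 2 := Real.mul_self_sqrt (by norm_num)
  have h1m : (1:ℝ)/(m*Real.sqrt 2) = Real.sqrt 2/(2*m) := by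
    rw [div_eq_div_iff (by positivity) (by positivity)]
    linear_combination (-(m:ℝ)) * hs2sq
  rw [h1m, one_div, inv_mul_eq_div, div_le_iff₀ (by positivity : (0:ℝ) < 2*(m:ℝ)^2)]
  have hR : (((m:ℝ)-1)/m + Real.sqrt 2/(2*m)) * (2*(m:ℝ)^2)
      = 2*(m:ℝ)^2 - 2*m + m * Real.sqrt 2 := by
    field_simp
  rw [hR]
  nlinarith [mul_nonneg hm0.le (by linarith : (0:ℝ) ≤ d₁ + d₂ + 2*Real.sqrt 2)]

end
end

section
/- Let a_0, a_1, b_0, b_1 be vectors in a real inner product space such that ‖a_i + b_j‖ ≤ 1 for all i, j ∈ {0,1}. Then ‖a_0 − a_1‖² + ‖b_0 − b_1‖² ≤ 4, and consequently ‖a_0 − a_1‖ + ‖b_0 − b_1‖ ≤ 2√2. -/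
/-- **Parallelogram bound for Bloch vectors.** If `a₀, a₁, b₀, b₁` are vectors in a real
inner product space with `‖aᵢ + bⱼ‖ ≤ 1` for all `i, j ∈ {0,1}`, then
`‖a₀ - a₁‖ ^ 2 + ‖b₀ - b₁‖ ^ 2 ≤ 4` and consequently `‖a₀ - a₁‖ + ‖b₀ - b₁‖ ≤ 2√2`. -/
theorem parallelogram_bloch_bound
    {E : Type*} [NormedAddCommGroup E] [InnerProductSpace ℝ E]
    (a b : Fin 2 → E)
    (h : ∀ i j : Fin 2, ‖a i + b j‖ ≤ 1) :
    ‖a 0 - a 1‖ ^ 2 + ‖b 0 - b 1‖ ^ 2 ≤ 4 ∧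
    ‖a 0 - a 1‖ + ‖b 0 - b 1‖ ≤ 2 * Real.sqrt 2 := by
  set x := a 0 - a 1
  set y := b 0 - b 1
  have hpar : ‖x + y‖ ^ 2 + ‖x - y‖ ^ 2 = 2 * ‖x‖ ^ 2 + 2 * ‖y‖ ^ 2 := by
    have := norm_add_sq_real x y
    have := norm_sub_sq_real x y
    nlinarith [this]
  have hxy : x + y = (a 0 + b 0) - (a 1 + b 1) := by simp [x, y]; abel
  have hxy' : x - y = (a 0 + b 1) - (a 1 + b 0) := by simp [x, y]; abel
  have h1 : ‖x + y‖ ≤ 2 := by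
    rw [hxy]
    calc ‖(a 0 + b 0) - (a 1 + b 1)‖ ≤ ‖a 0 + b 0‖ + ‖a 1 + b 1‖ := norm_sub_le _ _
      _ ≤ 2 := by have := h 0 0; have := h 1 1; linarith
  have h2 : ‖x - y‖ ≤ 2 := by
    rw [hxy']
    calc ‖(a 0 + b 1) - (a 1 + b 0)‖ ≤ ‖a 0 + b 1‖ + ‖a 1 + b 0‖ := norm_sub_le _ _
      _ ≤ 2 := by have := h 0 1; have := h 1 0; linarith
  have hsq : ‖x‖ ^ 2 + ‖y‖ ^ 2 ≤ 4 := by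
    nlinarith [norm_nonneg (x + y), norm_nonneg (x - y)]
  refine ⟨hsq, ?_⟩
  have h8 : (‖x‖ + ‖y‖) ^ 2 ≤ 8 := by nlinarith [sq_nonneg (‖x‖ - ‖y‖)]
  have : (2 * Real.sqrt 2) ^ 2 = 8 := by
    rw [mul_pow, Real.sq_sqrt (by norm_num : (2:ℝ) ≥ 0)]; norm_num
  nlinarith [norm_nonneg x, norm_nonneg y, Real.sqrt_nonneg 2]
end

section
/- Every qubit strategy for the (2,3) parity-oblivious random access code (retrieval task) satisfying full parity-obliviousness has success probability at most 1/3 + 1/(3·√2); in particular, since 1/3 + 1/(3√2) < 2/3, no qubit strategy exceeds the noncontextual retrieval bound 2/3. -/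
open Finset
open scoped ComplexOrder RealInnerProductSpace

set_option maxHeartbeats 1600000

/-- Expand a sum over `ZMod 3`. -/
lemma porac_sum_zmod3 {α : Type*} [AddCommMonoid α] (f : ZMod 3 → α) :
    ∑ i : ZMod 3, f i = f 0 + f 1 + f 2 := by
  rw [show (univ : Finset (ZMod 3)) = {0, 1, 2} from rfl]
  rw [Finset.sum_insert (by decide), Finset.sum_insert (by decide), Finset.sum_singleton]
  abel

/-- (Scaled) Bloch vector of a 2×2 complex matrix. -/
noncomputable def poracBl (A : Matrix (Fin 2) (Fin 2) ℂ) : EuclideanSpace ℝ (Fin 3) :=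
  (WithLp.equiv 2 (Fin 3 → ℝ)).symm ![(A 0 0).re - (A 1 1).re, 2 * (A 0 1).re, 2 * (A 0 1).im]

lemma poracBl_add (A B : Matrix (Fin 2) (Fin 2) ℂ) :
    poracBl (A + B) = poracBl A + poracBl B := by
  ext i
  fin_cases i <;>
    simp [poracBl, WithLp.equiv_symm_apply, PiLp.toLp_apply, Matrix.add_apply] <;> ring

lemma poracBl_one : poracBl (1 : Matrix (Fin 2) (Fin 2) ℂ) = 0 := by
  ext i
  fin_cases i <;> simp [poracBl, WithLp.equiv_symm_apply, PiLp.toLp_apply, Matrix.one_apply]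

lemma poracBl_inner (A B : Matrix (Fin 2) (Fin 2) ℂ) :
    ⟪poracBl A, poracBl B⟫ = ((A 0 0).re - (A 1 1).re) * ((B 0 0).re - (B 1 1).re)
      + 4 * ((A 0 1).re * (B 0 1).re) + 4 * ((A 0 1).im * (B 0 1).im) := by
  rw [PiLp.inner_apply, Fin.sum_univ_three]
  simp [poracBl, WithLp.equiv_symm_apply, PiLp.toLp_apply]
  ring

lemma poracBl_norm_sq (A : Matrix (Fin 2) (Fin 2) ℂ) :
    ‖poracBl A‖ ^ 2
      = ((A 0 0).re - (A 1 1).re)^2 + 4 * (A 0 1).re^2 + 4 * (A 0 1).im^2 := by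
  rw [← real_inner_self_eq_norm_sq, poracBl_inner]
  ring

lemma porac_psd_entry_facts {A : Matrix (Fin 2) (Fin 2) ℂ} (hA : A.PosSemidef) :
    0 ≤ (A 0 0).re ∧ 0 ≤ (A 1 1).re ∧
      (A 0 1).re ^ 2 + (A 0 1).im ^ 2 ≤ (A 0 0).re * (A 1 1).re := by
  have h10 : A 1 0 = (starRingEnd ℂ) (A 0 1) := (hA.1.apply 1 0).symm ▸ rfl
  have h00 : (A 0 0).im = 0 := by
    have := congrArg Complex.im (hA.1.apply 0 0); simp at this; linarith
  have h11 : (A 1 1).im = 0 := by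
    have := congrArg Complex.im (hA.1.apply 1 1); simp at this; linarith
  have key : ∀ a b : ℂ,
      0 ≤ ((starRingEnd ℂ) a * (A 0 0 * a + A 0 1 * b) +
        (starRingEnd ℂ) b * (A 1 0 * a + A 1 1 * b)).re := by
    intro a b
    have h := hA.dotProduct_mulVec_nonneg ![a, b]
    have h' : (0:ℂ).re ≤ _ := (Complex.le_def.mp (by
      simpa [dotProduct, Matrix.mulVec, Fin.sum_univ_two] using h)).1
    simpa using h'
  set p := (A 0 0).re
  set q := (A 1 1).re
  set x := (A 0 1).re
  set y := (A 0 1).im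
  have hp : 0 ≤ p := by have := key 1 0; simpa using this
  have hq : 0 ≤ q := by have := key 0 1; simpa using this
  have hp2 : 0 ≤ p * (p * q - (x^2 + y^2)) := by
    have := key (A 0 1) (-(A 0 0))
    simp only [h10, Complex.add_re, Complex.add_im, Complex.mul_re, Complex.mul_im,
      Complex.conj_re, Complex.conj_im, Complex.neg_re, Complex.neg_im, h00, h11] at this
    nlinarith [this]
  have hq2 : 0 ≤ q * (p * q - (x^2 + y^2)) := by
    have := key (A 1 1) (-(A 1 0))
    simp only [h10, Complex.add_re, Complex.add_im, Complex.mul_re, Complex.mul_im,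
      Complex.conj_re, Complex.conj_im, Complex.neg_re, Complex.neg_im, h00, h11] at this
    nlinarith [this]
  refine ⟨hp, hq, ?_⟩
  rcases eq_or_lt_of_le (add_nonneg hp hq) with h0 | h0
  · have hp0 : p = 0 := by linarith
    have hq0 : q = 0 := by linarith
    have hx : ∀ t : ℝ, 0 ≤ p * t^2 + 2 * t * x + q := by
      intro t
      have := key (t : ℂ) 1
      simp only [h10, Complex.add_re, Complex.add_im, Complex.mul_re, Complex.mul_im,
        Complex.conj_re, Complex.conj_im, Complex.ofReal_re, Complex.ofReal_im,
        Complex.one_re, Complex.one_im, h00, h11] at this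
      nlinarith [this]
    have hy : ∀ t : ℝ, 0 ≤ p * t^2 + 2 * t * y + q := by
      intro t
      have := key ((t : ℝ) * Complex.I) 1
      simp only [h10, Complex.add_re, Complex.add_im, Complex.mul_re, Complex.mul_im,
        Complex.conj_re, Complex.conj_im, Complex.ofReal_re, Complex.ofReal_im,
        Complex.I_re, Complex.I_im, Complex.one_re, Complex.one_im, h00, h11] at this
      nlinarith [this]
    have hx1 := hx 1; have hx2 := hx (-1); have hy1 := hy 1; have hy2 := hy (-1)
    nlinarith
  · nlinarith [hp2, hq2]

lemma poracBl_norm_le {A : Matrix (Fin 2) (Fin 2) ℂ} (hA : A.PosSemidef) :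
    ‖poracBl A‖ ≤ A.trace.re := by
  obtain ⟨hp, hq, hs⟩ := porac_psd_entry_facts hA
  have htr : A.trace.re = (A 0 0).re + (A 1 1).re := by
    simp [Matrix.trace, Matrix.diag, Fin.sum_univ_two]
  have h2 : ‖poracBl A‖ ^ 2 ≤ (A.trace.re) ^ 2 := by
    rw [poracBl_norm_sq, htr]; nlinarith
  calc ‖poracBl A‖ = Real.sqrt (‖poracBl A‖^2) := (Real.sqrt_sq (norm_nonneg _)).symm
    _ ≤ Real.sqrt ((A.trace.re)^2) := Real.sqrt_le_sqrt h2
    _ = A.trace.re := Real.sqrt_sq (by rw [htr]; linarith)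

lemma porac_trace_mul_re {A B : Matrix (Fin 2) (Fin 2) ℂ}
    (hA : A.IsHermitian) (hB : B.IsHermitian) :
    ((A * B).trace).re = (A.trace.re * B.trace.re + ⟪poracBl A, poracBl B⟫) / 2 := by
  have ha2 : A 1 0 = (starRingEnd ℂ) (A 0 1) := (hA.apply 1 0).symm ▸ rfl
  have hb2 : B 1 0 = (starRingEnd ℂ) (B 0 1) := (hB.apply 1 0).symm ▸ rfl
  have ha0 : (A 0 0).im = 0 := by
    have := congrArg Complex.im (hA.apply 0 0); simp at this; linarith
  have ha1 : (A 1 1).im = 0 := by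
    have := congrArg Complex.im (hA.apply 1 1); simp at this; linarith
  have hb0 : (B 0 0).im = 0 := by
    have := congrArg Complex.im (hB.apply 0 0); simp at this; linarith
  have hb1 : (B 1 1).im = 0 := by
    have := congrArg Complex.im (hB.apply 1 1); simp at this; linarith
  rw [poracBl_inner]
  simp only [Matrix.trace, Matrix.diag, Fin.sum_univ_two, Matrix.mul_apply, Complex.add_re,
    Complex.mul_re, ha2, hb2, Complex.conj_re, Complex.conj_im]
  rw [ha0, ha1, hb0, hb1]
  ring

/-- Chebyshev center of three points, with the strong-convexity property at the minimum. -/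
lemma porac_cheby (a : ZMod 3 → EuclideanSpace ℝ (Fin 3)) :
    ∃ (g : EuclideanSpace ℝ (Fin 3)) (r : ℝ), 0 ≤ r ∧ (∀ i, ‖a i - g‖ ≤ r) ∧
      ∀ x : EuclideanSpace ℝ (Fin 3), ∃ i, r ^ 2 + ‖x - g‖ ^ 2 ≤ ‖a i - x‖ ^ 2 := by
  classical
  have hne : (univ : Finset (ZMod 3)).Nonempty := univ_nonempty
  set f : EuclideanSpace ℝ (Fin 3) → ℝ :=
    fun x => univ.sup' hne (fun i => ‖a i - x‖) with hf
  have hcont : Continuous f :=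
    Continuous.finset_sup'_apply hne
      (fun i _ => (continuous_const.sub continuous_id).norm)
  have hle : ∀ i x, ‖a i - x‖ ≤ f x := by
    intro i x
    simp only [hf]
    exact le_sup' (fun i => ‖a i - x‖) (mem_univ i)
  have hex : ∀ x, ∃ i, f x = ‖a i - x‖ := by
    intro x
    obtain ⟨i, _, hi⟩ := exists_mem_eq_sup' hne (fun i => ‖a i - x‖)
    exact ⟨i, by simp only [hf]; exact hi⟩
  have hnonneg : ∀ x, 0 ≤ f x := fun x => le_trans (norm_nonneg _) (hle 0 x)
  obtain ⟨g, hgmem, hgmin⟩ :=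
    (isCompact_closedBall (a 0) (f (a 0))).exists_isMinOn
      ⟨a 0, Metric.mem_closedBall_self (hnonneg _)⟩ hcont.continuousOn
  have hglobal : ∀ x, f g ≤ f x := by
    intro x
    by_cases hx : x ∈ Metric.closedBall (a 0) (f (a 0))
    · exact hgmin hx
    · have h1 : f (a 0) < ‖x - a 0‖ := by
        simpa [Metric.mem_closedBall, dist_comm, dist_eq_norm] using hx
      have h2 : f g ≤ f (a 0) := hgmin (Metric.mem_closedBall_self (hnonneg _))
      have h3 : ‖a 0 - x‖ ≤ f x := hle 0 x
      rw [norm_sub_rev] at h3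
      linarith
  refine ⟨g, f g, hnonneg g, fun i => hle i g, ?_⟩
  intro x
  by_contra hcon
  push_neg at hcon
  set d : EuclideanSpace ℝ (Fin 3) := x - g with hd
  have hkey : ∀ i, ‖a i - g‖ ^ 2 - 2 * ⟪a i - g, d⟫ < f g ^ 2 := by
    intro i
    have h := hcon i
    have he : a i - x = (a i - g) - d := by rw [hd]; abel
    rw [he, norm_sub_sq_real] at h
    linarith
  set val : ZMod 3 → ℝ := fun i => ‖a i - g‖ ^ 2 - 2 * ⟪a i - g, d⟫ with hval
  set δ : ℝ := f g ^ 2 - univ.sup' hne val with hδdef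
  have hδpos : 0 < δ := by
    obtain ⟨i, _, hi⟩ := exists_mem_eq_sup' hne val
    rw [hδdef, hi]
    have := hkey i
    simp only [hval]
    linarith
  have hδ : ∀ i, val i ≤ f g ^ 2 - δ := by
    intro i
    have := le_sup' val (mem_univ i)
    rw [hδdef]
    linarith
  have hden : 0 < δ + ‖d‖ ^ 2 := by positivity
  set τ : ℝ := δ / (δ + ‖d‖ ^ 2) with hτ
  have hτpos : 0 < τ := div_pos hδpos hden
  have hτle : τ ≤ 1 := by
    rw [hτ, div_le_one hden]; nlinarith [sq_nonneg ‖d‖]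
  have hττ : τ ^ 2 * ‖d‖ ^ 2 < τ * δ := by
    have h5 : τ * ‖d‖ ^ 2 < δ := by
      rw [hτ, div_mul_eq_mul_div, div_lt_iff₀ hden]
      nlinarith [hδpos, sq_nonneg ‖d‖]
    calc τ ^ 2 * ‖d‖ ^ 2 = τ * (τ * ‖d‖ ^ 2) := by ring
      _ < τ * δ := mul_lt_mul_of_pos_left h5 hτpos
  set y : EuclideanSpace ℝ (Fin 3) := g + τ • d with hy
  have hsmall : ∀ i, ‖a i - y‖ ^ 2 < f g ^ 2 := by
    intro i
    have hexp : ‖a i - y‖ ^ 2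
        = ‖a i - g‖ ^ 2 - 2 * τ * ⟪a i - g, d⟫ + τ ^ 2 * ‖d‖ ^ 2 := by
      have h1 : a i - y = (a i - g) - τ • d := by rw [hy]; abel
      rw [h1, norm_sub_sq_real, real_inner_smul_right, norm_smul]
      simp [mul_pow, abs_of_nonneg (le_of_lt hτpos)]
      ring
    have h2 : ‖a i - g‖ ^ 2 - 2 * τ * ⟪a i - g, d⟫
        = (1 - τ) * ‖a i - g‖ ^ 2 + τ * (‖a i - g‖ ^ 2 - 2 * ⟪a i - g, d⟫) := by ring
    have h3 : ‖a i - g‖ ^ 2 ≤ f g ^ 2 := by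
      have := hle i g
      nlinarith [norm_nonneg (a i - g)]
    have h4 := hδ i
    simp only [hval] at h4
    rw [hexp, h2]
    nlinarith [hτpos, hτle]
  have hlt : f y < f g := by
    obtain ⟨i, hi⟩ := hex y
    rw [hi]
    have := hsmall i
    nlinarith [norm_nonneg (a i - y), hnonneg g]
  linarith [hglobal y]

/-- The core vector inequality behind the `(2,3)` PORAC qubit bound. -/
lemma porac_vector_bound (B : ZMod 3 → ZMod 3 → EuclideanSpace ℝ (Fin 3))
    (μ ν : ZMod 3 → EuclideanSpace ℝ (Fin 3))
    (hB : ∀ i j k l, B i k + B j l = B i l + B j k)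
    (hBn : ∀ i j, ‖B i j‖ ≤ 1)
    (hμ0 : ∑ b : ZMod 3, μ b = 0) (hν0 : ∑ b : ZMod 3, ν b = 0)
    (hμn : ∑ b : ZMod 3, ‖μ b‖ ≤ 2) (hνn : ∑ b : ZMod 3, ‖ν b‖ ≤ 2) :
    (∑ i : ZMod 3, ∑ j : ZMod 3, (⟪B i j, μ i⟫ + ⟪B i j, ν j⟫))
      ≤ 6 * Real.sqrt 2 := by
  classical
  set a : ZMod 3 → EuclideanSpace ℝ (Fin 3) :=
    fun i => (3:ℝ)⁻¹ • ∑ j : ZMod 3, B i j with ha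
  set b : ZMod 3 → EuclideanSpace ℝ (Fin 3) :=
    fun j => (3:ℝ)⁻¹ • ∑ i : ZMod 3, B i j with hb
  set m : EuclideanSpace ℝ (Fin 3) :=
    (9:ℝ)⁻¹ • ∑ i : ZMod 3, ∑ j : ZMod 3, B i j with hm
  have key : ∀ i j, a i + b j - m = B i j := by
    intro i j
    have t : ∀ k l, B i l + B k j = B i j + B k l := fun k l => hB i k l j
    rw [ha, hb, hm]
    simp only [porac_sum_zmod3]
    linear_combination (norm := module) (9:ℝ)⁻¹ • (t 0 0) + (9:ℝ)⁻¹ • (t 0 1)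
      + (9:ℝ)⁻¹ • (t 0 2) + (9:ℝ)⁻¹ • (t 1 0) + (9:ℝ)⁻¹ • (t 1 1) + (9:ℝ)⁻¹ • (t 1 2)
      + (9:ℝ)⁻¹ • (t 2 0) + (9:ℝ)⁻¹ • (t 2 1) + (9:ℝ)⁻¹ • (t 2 2)
  obtain ⟨g, r, hr0, hrle, hstrong⟩ := porac_cheby a
  set g2 : EuclideanSpace ℝ (Fin 3) := m - g with hg2
  have hb2 : ∀ j, ‖b j - g2‖ ^ 2 ≤ 1 - r ^ 2 := by
    intro j
    obtain ⟨i, hi⟩ := hstrong (m - b j)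
    have he : a i - (m - b j) = B i j := by rw [← key i j]; abel
    have he2 : m - b j - g = -(b j - g2) := by rw [hg2]; abel
    rw [he, he2, norm_neg] at hi
    have := hBn i j
    nlinarith [norm_nonneg (B i j)]
  have hr1 : r ^ 2 ≤ 1 := by
    have := hb2 0
    nlinarith [sq_nonneg ‖b 0 - g2‖]
  set s : ℝ := Real.sqrt (1 - r ^ 2) with hs
  have hs0 : 0 ≤ s := Real.sqrt_nonneg _
  have hs2 : s ^ 2 = 1 - r ^ 2 := Real.sq_sqrt (by linarith)
  have hbs : ∀ j, ‖b j - g2‖ ≤ s := by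
    intro j
    rw [hs]
    calc ‖b j - g2‖ = Real.sqrt (‖b j - g2‖ ^ 2) := (Real.sqrt_sq (norm_nonneg _)).symm
      _ ≤ Real.sqrt (1 - r ^ 2) := Real.sqrt_le_sqrt (hb2 j)
  have hT1 : ∑ i : ZMod 3, ∑ j : ZMod 3, ⟪B i j, μ i⟫ ≤ 2 * (3 * r) := by
    have e1 : ∀ i : ZMod 3, ∑ j : ZMod 3, ⟪B i j, μ i⟫ = ⟪(3:ℝ) • a i, μ i⟫ := by
      intro i
      rw [ha]
      simp only [smul_smul, show (3:ℝ) * (3:ℝ)⁻¹ = 1 by norm_num, one_smul]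
      rw [sum_inner]
    calc ∑ i : ZMod 3, ∑ j : ZMod 3, ⟪B i j, μ i⟫
        = ∑ i : ZMod 3, ⟪(3:ℝ) • (a i - g), μ i⟫ := by
          rw [Finset.sum_congr rfl fun i _ => e1 i]
          rw [← sub_eq_zero, ← Finset.sum_sub_distrib]
          have hterm : ∀ i : ZMod 3, ⟪(3:ℝ) • a i, μ i⟫ - ⟪(3:ℝ) • (a i - g), μ i⟫
              = ⟪(3:ℝ) • g, μ i⟫ := by
            intro i
            rw [← inner_sub_left]
            congr 1
            rw [smul_sub]
            abel
          rw [Finset.sum_congr rfl fun i _ => hterm i, ← inner_sum, hμ0, inner_zero_right]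
      _ ≤ ∑ i : ZMod 3, 3 * r * ‖μ i‖ := by
          refine Finset.sum_le_sum fun i _ => ?_
          calc ⟪(3:ℝ) • (a i - g), μ i⟫ ≤ ‖(3:ℝ) • (a i - g)‖ * ‖μ i‖ :=
                real_inner_le_norm _ _
            _ ≤ 3 * r * ‖μ i‖ := by
                rw [norm_smul]
                have h6 := hrle i
                have h7 : ‖(3:ℝ)‖ * ‖a i - g‖ ≤ 3 * r := by
                  rw [Real.norm_eq_abs, abs_of_nonneg (by norm_num : (0:ℝ) ≤ 3)]
                  nlinarith
                exact mul_le_mul_of_nonneg_right h7 (norm_nonneg _)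
      _ = 3 * r * ∑ i : ZMod 3, ‖μ i‖ := by rw [Finset.mul_sum]
      _ ≤ 2 * (3 * r) := by nlinarith [hμn]
  have hT2 : ∑ i : ZMod 3, ∑ j : ZMod 3, ⟪B i j, ν j⟫ ≤ 2 * (3 * s) := by
    rw [Finset.sum_comm]
    have e1 : ∀ j : ZMod 3, ∑ i : ZMod 3, ⟪B i j, ν j⟫ = ⟪(3:ℝ) • b j, ν j⟫ := by
      intro j
      rw [hb]
      simp only [smul_smul, show (3:ℝ) * (3:ℝ)⁻¹ = 1 by norm_num, one_smul]
      rw [sum_inner]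
    calc ∑ j : ZMod 3, ∑ i : ZMod 3, ⟪B i j, ν j⟫
        = ∑ j : ZMod 3, ⟪(3:ℝ) • (b j - g2), ν j⟫ := by
          rw [Finset.sum_congr rfl fun j _ => e1 j]
          rw [← sub_eq_zero, ← Finset.sum_sub_distrib]
          have hterm : ∀ j : ZMod 3, ⟪(3:ℝ) • b j, ν j⟫ - ⟪(3:ℝ) • (b j - g2), ν j⟫
              = ⟪(3:ℝ) • g2, ν j⟫ := by
            intro j
            rw [← inner_sub_left]
            congr 1
            rw [smul_sub]
            abel
          rw [Finset.sum_congr rfl fun j _ => hterm j, ← inner_sum, hν0, inner_zero_right]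
      _ ≤ ∑ j : ZMod 3, 3 * s * ‖ν j‖ := by
          refine Finset.sum_le_sum fun j _ => ?_
          calc ⟪(3:ℝ) • (b j - g2), ν j⟫ ≤ ‖(3:ℝ) • (b j - g2)‖ * ‖ν j‖ :=
                real_inner_le_norm _ _
            _ ≤ 3 * s * ‖ν j‖ := by
                rw [norm_smul]
                have h6 := hbs j
                have h7 : ‖(3:ℝ)‖ * ‖b j - g2‖ ≤ 3 * s := by
                  rw [Real.norm_eq_abs, abs_of_nonneg (by norm_num : (0:ℝ) ≤ 3)]
                  nlinarith
                exact mul_le_mul_of_nonneg_right h7 (norm_nonneg _)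
      _ = 3 * s * ∑ j : ZMod 3, ‖ν j‖ := by rw [Finset.mul_sum]
      _ ≤ 2 * (3 * s) := by nlinarith [hνn]
  have hfinal : r + s ≤ Real.sqrt 2 := by
    have h2 : (r + s) ^ 2 ≤ (Real.sqrt 2) ^ 2 := by
      rw [Real.sq_sqrt (by norm_num : (0:ℝ) ≤ 2)]
      nlinarith [sq_nonneg (r - s)]
    calc r + s = Real.sqrt ((r+s)^2) := (Real.sqrt_sq (by linarith)).symm
      _ ≤ Real.sqrt ((Real.sqrt 2)^2) := Real.sqrt_le_sqrt h2
      _ = Real.sqrt 2 := Real.sqrt_sq (Real.sqrt_nonneg _)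
  calc (∑ i : ZMod 3, ∑ j : ZMod 3, (⟪B i j, μ i⟫ + ⟪B i j, ν j⟫))
      = (∑ i : ZMod 3, ∑ j : ZMod 3, ⟪B i j, μ i⟫)
        + ∑ i : ZMod 3, ∑ j : ZMod 3, ⟪B i j, ν j⟫ := by
        rw [← Finset.sum_add_distrib]
        exact Finset.sum_congr rfl fun i _ => by rw [← Finset.sum_add_distrib]
    _ ≤ 2 * (3 * r) + 2 * (3 * s) := add_le_add hT1 hT2
    _ = 6 * (r + s) := by ring
    _ ≤ 6 * Real.sqrt 2 := by nlinarith [hfinal]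

/-- **No qubit advantage for the (2,3) PORAC (retrieval).** Every qubit strategy for the
`(2,3)` parity-oblivious random access code satisfying full parity-obliviousness (for the
masks `(1,1)` and `(1,2)`) has retrieval success probability at most `1/3 + 1/(3√2)`; in
particular, since `1/3 + 1/(3√2) < 2/3`, no qubit strategy exceeds the noncontextual
retrieval bound `2/3`. -/
theorem porac23_qubit_bound
    (ρ : ZMod 3 → ZMod 3 → Matrix (Fin 2) (Fin 2) ℂ)
    (hρ_psd : ∀ x₁ x₂, (ρ x₁ x₂).PosSemidef)
    (hρ_tr : ∀ x₁ x₂, (ρ x₁ x₂).trace = 1)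
    (M₁ M₂ : ZMod 3 → Matrix (Fin 2) (Fin 2) ℂ)
    (hM₁_psd : ∀ b, (M₁ b).PosSemidef) (hM₂_psd : ∀ b, (M₂ b).PosSemidef)
    (hM₁_sum : ∑ b : ZMod 3, M₁ b = 1) (hM₂_sum : ∑ b : ZMod 3, M₂ b = 1)
    (hPO₁ : ∀ k k' : ZMod 3,
      ∑ x ∈ Finset.univ.filter (fun x : ZMod 3 × ZMod 3 => x.1 + x.2 = k), ρ x.1 x.2 =
      ∑ x ∈ Finset.univ.filter (fun x : ZMod 3 × ZMod 3 => x.1 + x.2 = k'), ρ x.1 x.2)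
    (hPO₂ : ∀ k k' : ZMod 3,
      ∑ x ∈ Finset.univ.filter (fun x : ZMod 3 × ZMod 3 => x.1 + 2 * x.2 = k), ρ x.1 x.2 =
      ∑ x ∈ Finset.univ.filter (fun x : ZMod 3 × ZMod 3 => x.1 + 2 * x.2 = k'), ρ x.1 x.2) :
    (1 / 18 : ℝ) *
        ∑ x : ZMod 3 × ZMod 3,
          (((ρ x.1 x.2 * M₁ x.1).trace).re + ((ρ x.1 x.2 * M₂ x.2).trace).re)
      ≤ 1 / 3 + 1 / (3 * Real.sqrt 2) ∧
    (1 / 3 + 1 / (3 * Real.sqrt 2) : ℝ) < 2 / 3 := by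
  classical
  have hs2 : Real.sqrt 2 * Real.sqrt 2 = 2 := Real.mul_self_sqrt (by norm_num)
  have hs1 : 1 < Real.sqrt 2 := by nlinarith [Real.sqrt_nonneg 2]
  constructor
  · -- additivity of states from parity obliviousness
    have hadd : ∀ i j k l, ρ i k + ρ j l = ρ i l + ρ j k := by
      have h1 : ρ 0 0 + (ρ 1 2 + ρ 2 1) = ρ 0 1 + (ρ 1 0 + ρ 2 2) := by
        have h := hPO₁ 0 1
        rw [show Finset.univ.filter (fun x : ZMod 3 × ZMod 3 => x.1 + x.2 = 0)
              = {((0:ZMod 3),(0:ZMod 3)),(1,2),(2,1)} by decide,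
            show Finset.univ.filter (fun x : ZMod 3 × ZMod 3 => x.1 + x.2 = 1)
              = {((0:ZMod 3),(1:ZMod 3)),(1,0),(2,2)} by decide,
            Finset.sum_insert (by decide), Finset.sum_insert (by decide), Finset.sum_singleton,
            Finset.sum_insert (by decide), Finset.sum_insert (by decide),
            Finset.sum_singleton] at h
        exact h
      have h2 : ρ 0 0 + (ρ 1 2 + ρ 2 1) = ρ 0 2 + (ρ 1 1 + ρ 2 0) := by
        have h := hPO₁ 0 2
        rw [show Finset.univ.filter (fun x : ZMod 3 × ZMod 3 => x.1 + x.2 = 0)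
              = {((0:ZMod 3),(0:ZMod 3)),(1,2),(2,1)} by decide,
            show Finset.univ.filter (fun x : ZMod 3 × ZMod 3 => x.1 + x.2 = 2)
              = {((0:ZMod 3),(2:ZMod 3)),(1,1),(2,0)} by decide,
            Finset.sum_insert (by decide), Finset.sum_insert (by decide), Finset.sum_singleton,
            Finset.sum_insert (by decide), Finset.sum_insert (by decide),
            Finset.sum_singleton] at h
        exact h
      have h3 : ρ 0 0 + (ρ 1 1 + ρ 2 2) = ρ 0 2 + (ρ 1 0 + ρ 2 1) := by
        have h := hPO₂ 0 1
        rw [show Finset.univ.filter (fun x : ZMod 3 × ZMod 3 => x.1 + 2 * x.2 = 0)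
              = {((0:ZMod 3),(0:ZMod 3)),(1,1),(2,2)} by decide,
            show Finset.univ.filter (fun x : ZMod 3 × ZMod 3 => x.1 + 2 * x.2 = 1)
              = {((0:ZMod 3),(2:ZMod 3)),(1,0),(2,1)} by decide,
            Finset.sum_insert (by decide), Finset.sum_insert (by decide), Finset.sum_singleton,
            Finset.sum_insert (by decide), Finset.sum_insert (by decide),
            Finset.sum_singleton] at h
        exact h
      have h4 : ρ 0 0 + (ρ 1 1 + ρ 2 2) = ρ 0 1 + (ρ 1 2 + ρ 2 0) := by
        have h := hPO₂ 0 2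
        rw [show Finset.univ.filter (fun x : ZMod 3 × ZMod 3 => x.1 + 2 * x.2 = 0)
              = {((0:ZMod 3),(0:ZMod 3)),(1,1),(2,2)} by decide,
            show Finset.univ.filter (fun x : ZMod 3 × ZMod 3 => x.1 + 2 * x.2 = 2)
              = {((0:ZMod 3),(1:ZMod 3)),(1,2),(2,0)} by decide,
            Finset.sum_insert (by decide), Finset.sum_insert (by decide), Finset.sum_singleton,
            Finset.sum_insert (by decide), Finset.sum_insert (by decide),
            Finset.sum_singleton] at h
        exact h
      have hE : ∀ i k, ρ i k + ρ 0 0 = ρ i 0 + ρ 0 k := by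
        intro i k
        have e1 : ∀ a b, ρ 0 0 a b + (ρ 1 2 a b + ρ 2 1 a b)
            = ρ 0 1 a b + (ρ 1 0 a b + ρ 2 2 a b) := by
          intro a b
          have := congrFun (congrFun h1 a) b
          simpa [Matrix.add_apply] using this
        have e2 : ∀ a b, ρ 0 0 a b + (ρ 1 2 a b + ρ 2 1 a b)
            = ρ 0 2 a b + (ρ 1 1 a b + ρ 2 0 a b) := by
          intro a b
          have := congrFun (congrFun h2 a) b
          simpa [Matrix.add_apply] using this
        have e3 : ∀ a b, ρ 0 0 a b + (ρ 1 1 a b + ρ 2 2 a b)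
            = ρ 0 2 a b + (ρ 1 0 a b + ρ 2 1 a b) := by
          intro a b
          have := congrFun (congrFun h3 a) b
          simpa [Matrix.add_apply] using this
        have e4 : ∀ a b, ρ 0 0 a b + (ρ 1 1 a b + ρ 2 2 a b)
            = ρ 0 1 a b + (ρ 1 2 a b + ρ 2 0 a b) := by
          intro a b
          have := congrFun (congrFun h4 a) b
          simpa [Matrix.add_apply] using this
        fin_cases i <;> fin_cases k
        all_goals try abel
        all_goals try exact add_comm _ _
        all_goals
          ext a b
          simp only [Matrix.add_apply]
          first
            | linear_combination (2/3 : ℂ) * e1 a b - (1/3 : ℂ) * e2 a b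
                + (1/3 : ℂ) * e3 a b + (1/3 : ℂ) * e4 a b
            | linear_combination (1/3 : ℂ) * e1 a b + (1/3 : ℂ) * e2 a b
                + (2/3 : ℂ) * e3 a b - (1/3 : ℂ) * e4 a b
            | linear_combination (1/3 : ℂ) * e1 a b + (1/3 : ℂ) * e2 a b
                - (1/3 : ℂ) * e3 a b + (2/3 : ℂ) * e4 a b
            | linear_combination -(1/3 : ℂ) * e1 a b + (2/3 : ℂ) * e2 a b
                + (1/3 : ℂ) * e3 a b + (1/3 : ℂ) * e4 a b
      intro i j k l
      ext a b
      have g1 := congrFun (congrFun (hE i k) a) b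
      have g2 := congrFun (congrFun (hE j l) a) b
      have g3 := congrFun (congrFun (hE i l) a) b
      have g4 := congrFun (congrFun (hE j k) a) b
      simp only [Matrix.add_apply] at g1 g2 g3 g4 ⊢
      linear_combination g1 + g2 - g3 - g4
    -- Bloch vectors
    set B : ZMod 3 → ZMod 3 → EuclideanSpace ℝ (Fin 3) :=
      fun i j => poracBl (ρ i j) with hBdef
    set μ : ZMod 3 → EuclideanSpace ℝ (Fin 3) := fun b => poracBl (M₁ b) with hμdef
    set ν : ZMod 3 → EuclideanSpace ℝ (Fin 3) := fun b => poracBl (M₂ b) with hνdef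
    have hB : ∀ i j k l, B i k + B j l = B i l + B j k := by
      intro i j k l
      rw [hBdef]
      simp only
      rw [← poracBl_add, ← poracBl_add, hadd i j k l]
    have hBn : ∀ i j, ‖B i j‖ ≤ 1 := by
      intro i j
      have := poracBl_norm_le (hρ_psd i j)
      rw [hρ_tr i j] at this
      simpa using this
    have hμ0 : ∑ b : ZMod 3, μ b = 0 := by
      rw [porac_sum_zmod3]
      simp only [hμdef]
      rw [← poracBl_add, ← poracBl_add]
      rw [← porac_sum_zmod3 M₁, hM₁_sum, poracBl_one]
    have hν0 : ∑ b : ZMod 3, ν b = 0 := by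
      rw [porac_sum_zmod3]
      simp only [hνdef]
      rw [← poracBl_add, ← poracBl_add]
      rw [← porac_sum_zmod3 M₂, hM₂_sum, poracBl_one]
    have htrsum1 : ∑ b : ZMod 3, ((M₁ b).trace).re = 2 := by
      have : (∑ b : ZMod 3, (M₁ b).trace) = ((1 : Matrix (Fin 2) (Fin 2) ℂ)).trace := by
        rw [← Matrix.trace_sum, hM₁_sum]
      have h2 := congrArg Complex.re this
      rw [Complex.re_sum] at h2
      simpa [Matrix.trace_one] using h2
    have htrsum2 : ∑ b : ZMod 3, ((M₂ b).trace).re = 2 := by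
      have : (∑ b : ZMod 3, (M₂ b).trace) = ((1 : Matrix (Fin 2) (Fin 2) ℂ)).trace := by
        rw [← Matrix.trace_sum, hM₂_sum]
      have h2 := congrArg Complex.re this
      rw [Complex.re_sum] at h2
      simpa [Matrix.trace_one] using h2
    have hμn : ∑ b : ZMod 3, ‖μ b‖ ≤ 2 := by
      rw [← htrsum1]
      exact Finset.sum_le_sum fun b _ => poracBl_norm_le (hM₁_psd b)
    have hνn : ∑ b : ZMod 3, ‖ν b‖ ≤ 2 := by
      rw [← htrsum2]
      exact Finset.sum_le_sum fun b _ => poracBl_norm_le (hM₂_psd b)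
    have hVB := porac_vector_bound B μ ν hB hBn hμ0 hν0 hμn hνn
    -- expand the objective
    have hexp : ∀ i j : ZMod 3,
        ((ρ i j * M₁ i).trace).re + ((ρ i j * M₂ j).trace).re
          = (((M₁ i).trace.re + (M₂ j).trace.re) + (⟪B i j, μ i⟫ + ⟪B i j, ν j⟫)) / 2 := by
      intro i j
      rw [porac_trace_mul_re (hρ_psd i j).1 (hM₁_psd i).1,
          porac_trace_mul_re (hρ_psd i j).1 (hM₂_psd j).1]
      have htr : ((ρ i j).trace).re = 1 := by rw [hρ_tr i j]; simp
      rw [htr]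
      simp only [hBdef, hμdef, hνdef]
      ring
    have hsum : ∑ x : ZMod 3 × ZMod 3,
        (((ρ x.1 x.2 * M₁ x.1).trace).re + ((ρ x.1 x.2 * M₂ x.2).trace).re)
        = (12 + ∑ i : ZMod 3, ∑ j : ZMod 3, (⟪B i j, μ i⟫ + ⟪B i j, ν j⟫)) / 2 := by
      rw [Fintype.sum_prod_type]
      rw [Finset.sum_congr rfl fun i _ => Finset.sum_congr rfl fun j _ => hexp i j]
      rw [porac_sum_zmod3 (fun i => ∑ j : ZMod 3, (((M₁ i).trace.re + (M₂ j).trace.re)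
          + (⟪B i j, μ i⟫ + ⟪B i j, ν j⟫)) / 2)]
      rw [porac_sum_zmod3 (fun i => ∑ j : ZMod 3, (⟪B i j, μ i⟫ + ⟪B i j, ν j⟫))]
      simp only [porac_sum_zmod3]
      have ht1 := htrsum1
      have ht2 := htrsum2
      rw [porac_sum_zmod3] at ht1 ht2
      field_simp
      linarith [ht1, ht2]
    rw [hsum]
    have hle : (12 + ∑ i : ZMod 3, ∑ j : ZMod 3, (⟪B i j, μ i⟫ + ⟪B i j, ν j⟫)) / 2
        ≤ (12 + 6 * Real.sqrt 2) / 2 := by linarith [hVB]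
    have heq : (1/18 : ℝ) * ((12 + 6 * Real.sqrt 2) / 2) = 1 / 3 + 1 / (3 * Real.sqrt 2) := by
      have hpos : (0:ℝ) < Real.sqrt 2 := by linarith
      field_simp
      nlinarith [hs2]
    calc (1 / 18 : ℝ) * ((12 + ∑ i : ZMod 3, ∑ j : ZMod 3,
            (⟪B i j, μ i⟫ + ⟪B i j, ν j⟫)) / 2)
        ≤ (1 / 18 : ℝ) * ((12 + 6 * Real.sqrt 2) / 2) := by linarith [hle]
      _ = 1 / 3 + 1 / (3 * Real.sqrt 2) := heq
  · have hpos : (0:ℝ) < Real.sqrt 2 := by linarith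
    have : 1 / (3 * Real.sqrt 2) < 1 / 3 := by
      rw [div_lt_div_iff₀ (by positivity) (by norm_num)]
      nlinarith
    linarith
end
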